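/- arXiv:1306.6182 — 5 statements merged into one kernel-verified Lean document; each statement's English description precedes it below -/
import Mathlib

section
/- For 0 < k < 1, with k' = √(1-k²), the complete elliptic integral of the first kind satisfies K(k) > (1 + k'²/4)·log(4/k') − k'²/4. -/
open Real

/-- Complete elliptic integral of the first kind. -/
noncomputable def ellK (k : ℝ) : ℝ :=
  ∫ θ in (0:ℝ)..(π/2), 1 / Real.sqrt (1 - k^2 * (Real.sin θ)^2)

lemma abstract_bound {A m x y : ℝ} (hA0 : 0 < A) (hm : 0 ≤ m)
    (hx : x = Real.sqrt A) (hy : y = Real.sqrt (A + m)) :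
    1/y + m/(2*((A+m)*y)) ≤ 1/x := by
  have hQ0 : 0 < A + m := by linarith
  have hx0 : 0 < x := hx ▸ Real.sqrt_pos.2 hA0
  have hy0 : 0 < y := hy ▸ Real.sqrt_pos.2 hQ0
  have hx2 : x^2 = A := by rw [hx]; exact Real.sq_sqrt hA0.le
  have hy2 : y^2 = A + m := by rw [hy]; exact Real.sq_sqrt hQ0.le
  have key : x*(2*(A+m)+m) ≤ 2*((A+m)*y) := by
    have eL : (x*(2*(A+m)+m))^2 = A*(2*(A+m)+m)^2 := by rw [mul_pow, hx2]
    have eR : (2*((A+m)*y))^2 = 4*(A+m)^2*(A+m) := by rw [mul_pow, mul_pow, hy2]; ring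
    have h1 : (x*(2*(A+m)+m))^2 ≤ (2*((A+m)*y))^2 := by
      rw [eL, eR]
      nlinarith [mul_nonneg hA0.le (mul_nonneg hm hm), mul_nonneg (mul_nonneg hm hm) hm]
    have h2 : 0 ≤ 2*((A+m)*y) := by positivity
    exact le_of_pow_le_pow_left₀ two_ne_zero h2 h1
  have e1 : 1/y + m/(2*((A+m)*y)) = (2*(A+m)+m)/(2*((A+m)*y)) := by
    rw [div_add_div _ _ (ne_of_gt hy0) (by positivity), div_eq_div_iff (by positivity) (by positivity)]
    ring
  rw [e1, div_le_div_iff₀ (by positivity) hx0]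
  nlinarith [key, mul_pos hQ0 hy0]

lemma pointwise_aux {q s co : ℝ} (hq : 0 < q) (hs0 : 0 ≤ s) (hs1 : s ≤ 1)
    (hco0 : 0 ≤ co) (hco : co^2 = 1 - s^2) :
    1/Real.sqrt ((1+s)*(1-s+q*(1+s)))
    + q*(1-s^2)/(((1+s)*(1-s+q*(1+s))) * Real.sqrt ((1+s)*(1-s+q*(1+s))))
    - (q/2)*co/(1+s)^2
    ≤ 1/Real.sqrt (1-s^2+4*q*s^2) := by
  have hA0 : (0:ℝ) < 1-s^2+4*q*s^2 := by
    rcases lt_or_ge s 1 with h|h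
    · nlinarith [mul_nonneg (mul_nonneg hq.le hs0) hs0]
    · have : s = 1 := le_antisymm hs1 h
      rw [this]; nlinarith
  have hm : (0:ℝ) ≤ q*(1+3*s)*(1-s) :=
    mul_nonneg (mul_nonneg hq.le (by linarith)) (by linarith)
  have hQA : (1+s)*(1-s+q*(1+s)) = (1-s^2+4*q*s^2) + q*(1+3*s)*(1-s) := by ring
  have hQ0 : (0:ℝ) < (1+s)*(1-s+q*(1+s)) := by rw [hQA]; linarith
  set y := Real.sqrt ((1+s)*(1-s+q*(1+s))) with hy
  have hy0 : 0 < y := Real.sqrt_pos.2 hQ0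
  have hy2 : y^2 = (1+s)*(1-s+q*(1+s)) := Real.sq_sqrt hQ0.le
  have main : 1/y + (q*(1+3*s)*(1-s))/(2*(((1+s)*(1-s+q*(1+s)))*y)) ≤ 1/Real.sqrt (1-s^2+4*q*s^2) := by
    have := abstract_bound hA0 hm rfl (by rw [hy, hQA] : y = Real.sqrt ((1-s^2+4*q*s^2) + q*(1+3*s)*(1-s)))
    rwa [← hQA] at this
  have hcoy : co ≤ y := by nlinarith [hy2, hco, sq_nonneg (y - co)]
  have h3 : (1-s)^2*(1+s)^2 ≤ co*(((1+s)*(1-s+q*(1+s)))*y) := by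
    nlinarith [mul_nonneg hco0 hco0, mul_nonneg (mul_nonneg hco0 hco0) hco0, hy2, hco,
      mul_le_mul_of_nonneg_left hcoy (mul_nonneg hco0 hco0),
      mul_le_mul_of_nonneg_left hcoy hco0, sq_nonneg (y-co), mul_pos hy0 hy0]
  have e3 : q*(1-s^2)/(((1+s)*(1-s+q*(1+s)))*y) - (q*(1+3*s)*(1-s))/(2*(((1+s)*(1-s+q*(1+s)))*y))
      = (q*(1-s)^2)/(2*(((1+s)*(1-s+q*(1+s)))*y)) := by
    rw [div_sub_div _ _ (by positivity) (by positivity), div_eq_div_iff (by positivity) (by positivity)]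
    ring
  have h4 : (q*(1-s)^2)/(2*(((1+s)*(1-s+q*(1+s)))*y)) ≤ (q/2)*co/(1+s)^2 := by
    rw [div_le_div_iff₀ (by positivity) (by positivity)]
    nlinarith [mul_le_mul_of_nonneg_left h3 hq.le]
  calc 1/y + q*(1-s^2)/(((1+s)*(1-s+q*(1+s))) * y) - (q/2)*co/(1+s)^2
      ≤ 1/y + (q*(1+3*s)*(1-s))/(2*(((1+s)*(1-s+q*(1+s)))*y)) := by linarith
    _ ≤ 1/Real.sqrt (1-s^2+4*q*s^2) := main

lemma deriv_algebra {q a b e : ℝ} (ha0 : 0 < a) (hb0 : 0 < b) (he0 : 0 < e) (hea : a < e)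
    (hrel : e^2 = a^2 + q*b^2) (hab2 : a^2 + b^2 = 2) :
    1 / (b * e) + q * (a ^ 2 * b ^ 2) / (b ^ 2 * e ^ 2 * (b * e)) - q / 2 * (a * b) / (b ^ 2) ^ 2 =
    (1 + q) * (((q - 1) * (a * b) / (2 * e) - -(a * b) / (2 * a)) / (e - a)) - (1 + q) / 2 * (a * b / b ^ 2) +
        (q * (-(a * b) / (2 * a)) * e - q * a * ((q - 1) * (a * b) / (2 * e))) / e ^ 2 +
      (0 * b ^ 2 - q / 2 * (a * b)) / (b ^ 2) ^ 2 := by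
  have h1 : e - a ≠ 0 := ne_of_gt (sub_pos.2 hea)
  have key : (2*a*b^3*e^2*(e-a) + 2*q*a^3*b^3*(e-a) - (1+q)*((q-1)*a^2*b + a*b*e)*b^4*e^2 + (1+q)*a^2*b^3*e^3*(e-a) - (-(q*a*b*e^2) - q*(q-1)*a^3*b)*b^4*(e-a)) = 0 := by
    linear_combination ((2)*a^1*b^3*e^1 + (-2)*a^2*b^3 + (1)*a^2*b^5 + (-1)*a^1*b^5*e^1 + (1)*a^2*b^3*e^2 + (-1)*a^3*b^3*e^1 + (1)*q^1*a^2*b^3*e^2 + (-1)*q^1*a^3*b^3*e^1 + (1)*a^4*b^3 + (1)*q^1*a^4*b^3) * hrel + ((-1)*q^1*a^3*b^3*e^1 + (1)*q^1*a^4*b^3 + (1)*a^4*b^3 + (1)*q^1*a^2*b^5 + (-1)*a^3*b^3*e^1 + (-1)*q^1*a^1*b^5*e^1) * hab2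
  have ha : a ≠ 0 := ne_of_gt ha0
  have hb : b ≠ 0 := ne_of_gt hb0
  have he : e ≠ 0 := ne_of_gt he0
  rw [← sub_eq_zero]
  convert (show (2*a*b^3*e^2*(e-a) + 2*q*a^3*b^3*(e-a) - (1+q)*((q-1)*a^2*b + a*b*e)*b^4*e^2 + (1+q)*a^2*b^3*e^3*(e-a) - (-(q*a*b*e^2) - q*(q-1)*a^3*b)*b^4*(e-a)) / (2*a*b^4*e^3*(e-a)) = 0 by rw [key, zero_div]) using 1
  field_simp
  ring

noncomputable def Gaux (q θ : ℝ) : ℝ :=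
  (1+q) * Real.log (Real.sqrt (1 - Real.sin θ + q*(1+Real.sin θ)) - Real.sqrt (1 - Real.sin θ))
  - (1+q)/2 * Real.log (1+Real.sin θ)
  + q * Real.sqrt (1 - Real.sin θ) / Real.sqrt (1 - Real.sin θ + q*(1+Real.sin θ))
  + (q/2) / (1+Real.sin θ)

noncomputable def gaux (q θ : ℝ) : ℝ :=
  1/Real.sqrt ((1+Real.sin θ)*(1-Real.sin θ+q*(1+Real.sin θ)))
  + q*(1-Real.sin θ^2)/(((1+Real.sin θ)*(1-Real.sin θ+q*(1+Real.sin θ))) * Real.sqrt ((1+Real.sin θ)*(1-Real.sin θ+q*(1+Real.sin θ))))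
  - (q/2)*Real.cos θ/(1+Real.sin θ)^2

lemma hasDerivAt_Gaux {q θ : ℝ} (hq : 0 < q) (h1 : 0 < θ) (h2 : θ < π/2) :
    HasDerivAt (Gaux q) (gaux q θ) θ := by
  have hθπ : θ < π := lt_trans h2 (by linarith [pi_pos])
  have hs0' : 0 < Real.sin θ := Real.sin_pos_of_pos_of_lt_pi h1 hθπ
  have hcos : 0 < Real.cos θ := Real.cos_pos_of_mem_Ioo ⟨by linarith [pi_pos], h2⟩
  have hs1 : Real.sin θ < 1 := by nlinarith [Real.sin_sq_add_cos_sq θ]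
  set s := Real.sin θ with hsdef
  have hd0 : 0 < 1 - s + q*(1+s) := by nlinarith
  have h1s : 0 < 1 - s := by linarith
  have h1ps : 0 < 1 + s := by linarith
  set a := Real.sqrt (1-s) with hadef
  set b := Real.sqrt (1+s) with hbdef
  set e := Real.sqrt (1-s+q*(1+s)) with hedef
  have ha0 : 0 < a := Real.sqrt_pos.2 h1s
  have hb0 : 0 < b := Real.sqrt_pos.2 h1ps
  have he0 : 0 < e := Real.sqrt_pos.2 hd0
  have ha2 : a^2 = 1 - s := Real.sq_sqrt h1s.le
  have hb2 : b^2 = 1 + s := Real.sq_sqrt h1ps.le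
  have he2 : e^2 = 1 - s + q*(1+s) := Real.sq_sqrt hd0.le
  have hea : a < e := by
    rw [hadef, hedef]
    apply Real.sqrt_lt_sqrt h1s.le
    nlinarith
  have hcosab : Real.cos θ = a*b := by
    have h5 : (1-s)*(1+s) = Real.cos θ^2 := by nlinarith [Real.sin_sq_add_cos_sq θ]
    rw [hadef, hbdef, ← Real.sqrt_mul h1s.le, h5, Real.sqrt_sq hcos.le]
  have hsin : HasDerivAt Real.sin (Real.cos θ) θ := Real.hasDerivAt_sin θ
  have hd_fun : HasDerivAt (fun t => 1 - Real.sin t + q*(1+Real.sin t)) ((q-1)*Real.cos θ) θ := by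
    have := ((hasDerivAt_const θ (1:ℝ)).sub hsin).add (((hasDerivAt_const θ (1:ℝ)).add hsin).const_mul q)
    exact this.congr_deriv (by ring)
  have h1s_fun : HasDerivAt (fun t => 1 - Real.sin t) (-Real.cos θ) θ := by
    have := (hasDerivAt_const θ (1:ℝ)).sub hsin
    exact this.congr_deriv (by ring)
  have h1ps_fun : HasDerivAt (fun t => 1 + Real.sin t) (Real.cos θ) θ := by
    have := (hasDerivAt_const θ (1:ℝ)).add hsin
    exact this.congr_deriv (by ring)
  have hA : HasDerivAt (fun t => Real.sqrt (1 - Real.sin t)) (-Real.cos θ/(2*a)) θ :=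
    h1s_fun.sqrt (ne_of_gt h1s)
  have hE : HasDerivAt (fun t => Real.sqrt (1 - Real.sin t + q*(1+Real.sin t))) ((q-1)*Real.cos θ/(2*e)) θ :=
    hd_fun.sqrt (ne_of_gt hd0)
  have hlog1 : HasDerivAt (fun t => Real.log (Real.sqrt (1 - Real.sin t + q*(1+Real.sin t)) - Real.sqrt (1 - Real.sin t)))
      (((q-1)*Real.cos θ/(2*e) - (-Real.cos θ/(2*a)))/(e-a)) θ :=
    (hE.sub hA).log (ne_of_gt (sub_pos.2 hea))
  have hlog2 : HasDerivAt (fun t => Real.log (1+Real.sin t)) (Real.cos θ/(1+s)) θ :=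
    h1ps_fun.log (ne_of_gt h1ps)
  have hfrac : HasDerivAt (fun t => q * Real.sqrt (1 - Real.sin t) / Real.sqrt (1 - Real.sin t + q*(1+Real.sin t)))
      ((q*(-Real.cos θ/(2*a))*e - (q*a)*((q-1)*Real.cos θ/(2*e)))/e^2) θ :=
    (hA.const_mul q).div hE (ne_of_gt he0)
  have hlast : HasDerivAt (fun t => (q/2)/(1+Real.sin t))
      ((0*(1+s) - (q/2)*Real.cos θ)/(1+s)^2) θ :=
    (hasDerivAt_const θ (q/2)).div h1ps_fun (ne_of_gt h1ps)
  have total := (((hlog1.const_mul (1+q)).sub (hlog2.const_mul ((1+q)/2))).add hfrac).add hlast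
  have hG : HasDerivAt (Gaux q)
      ((1+q) * (((q-1)*Real.cos θ/(2*e) - (-Real.cos θ/(2*a)))/(e-a)) - (1+q)/2 * (Real.cos θ/(1+s))
       + ((q*(-Real.cos θ/(2*a))*e - (q*a)*((q-1)*Real.cos θ/(2*e)))/e^2)
       + ((0*(1+s) - (q/2)*Real.cos θ)/(1+s)^2)) θ := by
    exact total
  convert hG using 1
  rw [gaux, hcosab]
  rw [show Real.sqrt ((1+Real.sin θ)*(1-Real.sin θ+q*(1+Real.sin θ))) = b*e by
    rw [hbdef, hedef, ← Real.sqrt_mul h1ps.le]]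
  rw [show (1:ℝ) - Real.sin θ^2 = a^2*b^2 by nlinarith]
  rw [show (1:ℝ) - Real.sin θ + q*(1+Real.sin θ) = e^2 from he2.symm]
  rw [show (1:ℝ) + Real.sin θ = b^2 from hb2.symm]
  have hrel : e^2 = a^2 + q*b^2 := by rw [he2, ha2, hb2]
  have hab2 : a^2 + b^2 = 2 := by rw [ha2, hb2]; ring
  exact deriv_algebra ha0 hb0 he0 hea hrel hab2

set_option maxHeartbeats 1000000 in
theorem ellK_gt_log_bound (k : ℝ) (hk0 : 0 < k) (hk1 : k < 1) :
    ellK k > (1 + (Real.sqrt (1 - k^2))^2 / 4) * Real.log (4 / Real.sqrt (1 - k^2))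
      - (Real.sqrt (1 - k^2))^2 / 4 := by
  have hc0 : (0:ℝ) < 1 - k^2 := by nlinarith
  obtain ⟨q, hqdef⟩ : ∃ q : ℝ, q = (1 - k^2)/4 := ⟨_, rfl⟩
  have hq0 : 0 < q := by rw [hqdef]; linarith
  have h4q : 1 - k^2 = 4*q := by rw [hqdef]; ring
  have hπ2 : (0:ℝ) ≤ π/2 := by have := pi_pos; linarith
  -- bounds on sin/cos over the interval
  have hs_mem : ∀ θ ∈ Set.Icc (0:ℝ) (π/2), 0 ≤ Real.sin θ ∧ Real.sin θ ≤ 1 ∧ 0 ≤ Real.cos θ := by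
    intro θ hθ
    refine ⟨Real.sin_nonneg_of_nonneg_of_le_pi hθ.1 (by have := pi_pos; linarith [hθ.2]), Real.sin_le_one θ,
      Real.cos_nonneg_of_mem_Icc ⟨by have := pi_pos; linarith [hθ.1], hθ.2⟩⟩
  -- positivity of the main integrand denominator
  have hden : ∀ θ : ℝ, 0 < 1 - k^2 * Real.sin θ^2 := by
    intro θ
    nlinarith [Real.sin_sq_le_one θ, sq_nonneg k, sq_nonneg (Real.sin θ)]
  -- continuity of f
  have hfc : Continuous (fun θ : ℝ => 1 / Real.sqrt (1 - k^2 * (Real.sin θ)^2)) := by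
    apply Continuous.div continuous_const
    · exact (continuous_const.sub (continuous_const.mul (Real.continuous_sin.pow 2))).sqrt
    · intro x; exact ne_of_gt (Real.sqrt_pos.2 (hden x))
  have hf_int : IntervalIntegrable (fun θ : ℝ => 1 / Real.sqrt (1 - k^2 * (Real.sin θ)^2))
      MeasureTheory.volume 0 (π/2) := hfc.intervalIntegrable 0 (π/2)
  -- positivity lemmas on the interval for g and G
  have hQpos : ∀ θ ∈ Set.Icc (0:ℝ) (π/2), 0 < (1+Real.sin θ)*(1-Real.sin θ+q*(1+Real.sin θ)) := by
    intro θ hθ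
    obtain ⟨h1, h2, -⟩ := hs_mem θ hθ
    have hd : 0 < 1 - Real.sin θ + q*(1+Real.sin θ) := by nlinarith [mul_nonneg hq0.le h1]
    nlinarith [mul_pos (show (0:ℝ) < 1 + Real.sin θ by linarith) hd]
  have hgc : ContinuousOn (gaux q) (Set.Icc (0:ℝ) (π/2)) := by
    have c1 : Continuous (fun θ : ℝ => (1+Real.sin θ)*(1-Real.sin θ+q*(1+Real.sin θ))) := by
      fun_prop
    apply ContinuousOn.sub
    apply ContinuousOn.add
    · exact ContinuousOn.div continuousOn_const c1.sqrt.continuousOn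
        (fun θ hθ => ne_of_gt (Real.sqrt_pos.2 (hQpos θ hθ)))
    · exact ContinuousOn.div (by fun_prop)
        (c1.mul c1.sqrt).continuousOn
        (fun θ hθ => ne_of_gt (mul_pos (hQpos θ hθ) (Real.sqrt_pos.2 (hQpos θ hθ))))
    · apply ContinuousOn.div (by fun_prop) (by fun_prop)
      intro θ hθ
      obtain ⟨h1, -, -⟩ := hs_mem θ hθ
      positivity
  have hg_int : IntervalIntegrable (gaux q) MeasureTheory.volume 0 (π/2) := by
    apply ContinuousOn.intervalIntegrable
    rwa [Set.uIcc_of_le hπ2]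
  -- continuity of G on the closed interval
  have hGc : ContinuousOn (Gaux q) (Set.Icc (0:ℝ) (π/2)) := by
    have hdpos : ∀ θ ∈ Set.Icc (0:ℝ) (π/2), 0 < 1 - Real.sin θ + q*(1+Real.sin θ) := by
      intro θ hθ; obtain ⟨h1, h2, -⟩ := hs_mem θ hθ; nlinarith
    have hsubpos : ∀ θ ∈ Set.Icc (0:ℝ) (π/2),
        0 < Real.sqrt (1 - Real.sin θ + q*(1+Real.sin θ)) - Real.sqrt (1 - Real.sin θ) := by
      intro θ hθ
      obtain ⟨h1, h2, -⟩ := hs_mem θ hθ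
      have : Real.sqrt (1 - Real.sin θ) < Real.sqrt (1 - Real.sin θ + q*(1+Real.sin θ)) := by
        apply Real.sqrt_lt_sqrt (by linarith)
        nlinarith
      linarith
    apply ContinuousOn.add
    apply ContinuousOn.add
    apply ContinuousOn.sub
    · apply ContinuousOn.mul continuousOn_const
      apply ContinuousOn.log
      · fun_prop
      · exact fun θ hθ => ne_of_gt (hsubpos θ hθ)
    · apply ContinuousOn.mul continuousOn_const
      apply ContinuousOn.log (by fun_prop)
      intro θ hθ
      obtain ⟨h1, -, -⟩ := hs_mem θ hθ
      positivity
    · apply ContinuousOn.div (by fun_prop) (by fun_prop)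
      exact fun θ hθ => ne_of_gt (Real.sqrt_pos.2 (hdpos θ hθ))
    · apply ContinuousOn.div continuousOn_const (by fun_prop)
      intro θ hθ
      obtain ⟨h1, -, -⟩ := hs_mem θ hθ
      positivity
  -- FTC
  have hftc : ∫ θ in (0:ℝ)..(π/2), gaux q θ = Gaux q (π/2) - Gaux q 0 := by
    apply intervalIntegral.integral_eq_sub_of_hasDeriv_right_of_le hπ2 hGc
    · intro θ hθ
      exact (hasDerivAt_Gaux hq0 hθ.1 hθ.2).hasDerivWithinAt
    · exact hg_int
  -- pointwise comparison
  have hmono : ∫ θ in (0:ℝ)..(π/2), gaux q θ ≤ ellK k := by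
    rw [ellK]
    apply intervalIntegral.integral_mono_on hπ2 hg_int hf_int
    intro θ hθ
    obtain ⟨h1, h2, h3⟩ := hs_mem θ hθ
    have := pointwise_aux hq0 h1 h2 h3 (by nlinarith [Real.sin_sq_add_cos_sq θ])
    rw [show 1 - Real.sin θ^2 + 4*q*Real.sin θ^2 = 1 - k^2*(Real.sin θ)^2 by rw [hqdef]; ring] at this
    exact this
  -- endpoint values
  have hGb : Gaux q (π/2) = (1+q)*Real.log (Real.sqrt (2*q)) - (1+q)/2*Real.log 2 + q/4 := by
    rw [Gaux, Real.sin_pi_div_two]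
    rw [show (1:ℝ)-1+q*(1+1) = 2*q by ring]
    rw [show (1:ℝ)-1 = 0 by norm_num, Real.sqrt_zero]
    norm_num
    ring
  have hGa : Gaux q 0 = (1+q)*Real.log (Real.sqrt (1+q) - 1) + q/Real.sqrt (1+q) + q/2 := by
    rw [Gaux, Real.sin_zero]
    rw [show (1:ℝ)-0+q*(1+0) = 1+q by ring, show (1:ℝ)-0 = 1 by norm_num, Real.sqrt_one]
    rw [show (1:ℝ)+0 = 1 by norm_num, Real.log_one]
    ring
  obtain ⟨S, hSdef⟩ : ∃ S : ℝ, S = Real.sqrt (1+q) := ⟨_, rfl⟩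
  rw [← hSdef] at hGa
  have hS2 : S^2 = 1+q := by rw [hSdef]; exact Real.sq_sqrt (by linarith)
  have hS1 : 1 < S := by nlinarith [hS2, hSdef ▸ Real.sqrt_nonneg (1+q)]
  have hS0 : 0 < S := by linarith
  have hq_ne : q ≠ 0 := ne_of_gt hq0
  have hlog2q : Real.log (Real.sqrt (2*q)) = (Real.log 2 + Real.log q)/2 := by
    rw [Real.log_sqrt (by linarith), Real.log_mul two_ne_zero hq_ne]
  have hlogS1 : Real.log (S-1) = Real.log q - Real.log (S+1) := by
    have h := Real.log_mul (ne_of_gt (show (0:ℝ) < S-1 by linarith)) (ne_of_gt (show (0:ℝ) < S+1 by linarith))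
    rw [show (S-1)*(S+1) = q by nlinarith] at h
    linarith
  have hsqrtq0 : 0 < Real.sqrt q := Real.sqrt_pos.2 hq0
  have hsqrt4q : Real.sqrt (4*q) = 2*Real.sqrt q := by
    rw [show (4:ℝ)*q = 2^2*q by norm_num, Real.sqrt_mul (by positivity), Real.sqrt_sq (by norm_num)]
  have hRHSlog : Real.log (4/Real.sqrt (1-k^2)) = Real.log 2 - Real.log q/2 := by
    rw [h4q, hsqrt4q, show (4:ℝ)/(2*Real.sqrt q) = 2/Real.sqrt q by
      rw [show (4:ℝ) = 2*2 by norm_num, mul_div_mul_left _ _ two_ne_zero]]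
    rw [Real.log_div two_ne_zero (ne_of_gt hsqrtq0), Real.log_sqrt hq0.le]
  have hlog_lb : Real.log (S+1) - Real.log 2 ≥ (S-1)/(S+1) := by
    have h := Real.log_le_sub_one_of_pos (show (0:ℝ) < 2/(S+1) by positivity)
    rw [Real.log_div two_ne_zero (ne_of_gt (show (0:ℝ) < S+1 by linarith))] at h
    have e : 2/(S+1) - 1 = -((S-1)/(S+1)) := by
      field_simp
      ring
    linarith [e ▸ h]
  have hpoly : (1+q)*((S-1)/(S+1)) > q/4 + q/S - q := by
    have hq_eq : q = S^2 - 1 := by linarith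
    have key : (1+q)*((S-1)/(S+1)) - (q/4 + q/S - q) = (S-1)^2*(7*S^2+9*S+4)/(4*S*(S+1)) := by
      rw [hq_eq]; field_simp; ring
    have pos : 0 < (S-1)^2*(7*S^2+9*S+4)/(4*S*(S+1)) :=
      div_pos (mul_pos (pow_pos (sub_pos.2 hS1) 2) (by positivity)) (by positivity)
    linarith
  have hmul : (1+q)*(Real.log (S+1) - Real.log 2) ≥ (1+q)*((S-1)/(S+1)) :=
    mul_le_mul_of_nonneg_left hlog_lb (by linarith)
  have hYY : Gaux q (π/2) - Gaux q 0 > (1 + (1-k^2)/4)*Real.log (4/Real.sqrt (1-k^2)) - (1-k^2)/4 := by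
    rw [hGb, hGa, hRHSlog, hlog2q, hlogS1, h4q]
    have keyeq : (1+q)*((Real.log 2 + Real.log q)/2) - (1+q)/2*Real.log 2 + q/4
        - ((1+q)*(Real.log q - Real.log (S+1)) + q/S + q/2)
        - ((1 + 4*q/4)*(Real.log 2 - Real.log q/2) - 4*q/4)
        = (1+q)*(Real.log (S+1) - Real.log 2) - (q/4 + q/S - q) := by ring
    linarith [keyeq]
  have hfin : Gaux q (π/2) - Gaux q 0 ≤ ellK k := by rw [← hftc]; exact hmono
  rw [gt_iff_lt, Real.sq_sqrt hc0.le]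
  linarith [hYY, hfin]
end

section
/- For 0 < k < 1, with k' = √(1-k²), the complete elliptic integral of the first kind satisfies K(k) < (1 + k'²/4)·log(4/k'). -/
open Real

lemma Pfun_pos (x : ℝ) : 0 < 1 - x/2 + 3*x^2/8 := by nlinarith [sq_nonneg (x - 2/3)]

lemma inv_sqrt_le {x : ℝ} (hx : 0 ≤ x) : 1 / Real.sqrt (1+x) ≤ 1 - x/2 + 3*x^2/8 := by
  have hP := Pfun_pos x
  have h1x : (0:ℝ) < 1 + x := by linarith
  have hs : 0 < Real.sqrt (1+x) := Real.sqrt_pos.2 h1x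
  rw [div_le_iff₀ hs]
  have key : 1 ≤ (1 - x/2 + 3*x^2/8)^2 * (1+x) := by
    nlinarith [pow_nonneg hx 3, mul_nonneg (pow_nonneg hx 3) (sq_nonneg (6*x-5))]
  calc (1:ℝ) = Real.sqrt 1 := (Real.sqrt_one).symm
    _ ≤ Real.sqrt ((1 - x/2 + 3*x^2/8)^2 * (1+x)) := Real.sqrt_le_sqrt key
    _ = (1 - x/2 + 3*x^2/8) * Real.sqrt (1+x) := by
        rw [Real.sqrt_mul (sq_nonneg _), Real.sqrt_sq hP.le]

noncomputable def AA (c v : ℝ) : ℝ :=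
  (1 + c^2/4 + 9*c^4/64) * Real.arsinh (v / Real.sqrt c)
    + Real.sqrt (v^2+c) * (-(c*v)/4 + 3*c^2*v^3/32 - 9*c^3*v/64)

noncomputable def gg (c v : ℝ) : ℝ := (1 - c*v^2/2 + 3*c^2*v^4/8) / Real.sqrt (v^2+c)

lemma AA_zero {c : ℝ} : AA c 0 = 0 := by simp [AA]

lemma continuous_gg {c : ℝ} (hc : 0 < c) : Continuous (gg c) := by
  apply Continuous.div (by continuity) (by continuity)
  intro v
  exact (Real.sqrt_pos.2 (by positivity)).ne'

lemma hasDerivAt_AA {c : ℝ} (hc : 0 < c) (v : ℝ) : HasDerivAt (AA c) (gg c v) v := by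
  have hvc : 0 < v^2 + c := by positivity
  have hsvc : 0 < Real.sqrt (v^2+c) := Real.sqrt_pos.2 hvc
  have hsc : 0 < Real.sqrt c := Real.sqrt_pos.2 hc
  have hsq : Real.sqrt (v^2+c) ^ 2 = v^2 + c := Real.sq_sqrt hvc.le
  have h1 : HasDerivAt (fun v : ℝ => Real.arsinh (v / Real.sqrt c))
      ((Real.sqrt (1 + (v / Real.sqrt c)^2))⁻¹ * (1 / Real.sqrt c)) v := by
    have := (Real.hasDerivAt_arsinh (v / Real.sqrt c)).comp v
      ((hasDerivAt_id v).div_const (Real.sqrt c))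
    simpa [Function.comp_def] using this
  have e1 : (Real.sqrt (1 + (v / Real.sqrt c)^2))⁻¹ * (1 / Real.sqrt c)
      = 1 / Real.sqrt (v^2 + c) := by
    rw [div_pow, Real.sq_sqrt hc.le]
    rw [show (1 + v^2/c) = (v^2+c)/c by field_simp; ring]
    rw [Real.sqrt_div' _ hc.le]
    field_simp
  rw [e1] at h1
  have h2 : HasDerivAt (fun v : ℝ => Real.sqrt (v^2+c)) (v / Real.sqrt (v^2+c)) v := by
    have hinner : HasDerivAt (fun v : ℝ => v^2 + c) (2*v) v := by
      simpa using ((hasDerivAt_pow 2 v).add_const c)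
    have := (Real.hasDerivAt_sqrt hvc.ne').comp v hinner
    convert this using 1
    · rfl
    · rfl
    · rfl
    field_simp
  have h3 : HasDerivAt (fun v : ℝ => -(c*v)/4 + 3*c^2*v^3/32 - 9*c^3*v/64)
      (-c/4 + 9*c^2*v^2/32 - 9*c^3/64) v := by
    have h := ((((hasDerivAt_id v).const_mul c).div_const 4).neg.add
      (((hasDerivAt_pow 3 v).const_mul (3*c^2)).div_const 32)).sub
      (((hasDerivAt_id v).const_mul (9*c^3)).div_const 64)
    convert h using 1
    · rfl
    · rfl
    · funext x; simp only [id_eq, Pi.add_apply, Pi.sub_apply, Pi.neg_apply]; ring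
    · push_cast [id_eq]; ring
  have hD := (h1.const_mul (1 + c^2/4 + 9*c^4/64)).add (h2.mul h3)
  convert hD using 1
  · rfl
  · rfl
  · rfl
  unfold gg
  set S := Real.sqrt (v^2+c) with hS
  have step : (1 + c^2/4 + 9*c^4/64) * (1 / S) +
      (v / S * (-(c*v)/4 + 3*c^2*v^3/32 - 9*c^3*v/64) +
        S * (-c/4 + 9*c^2*v^2/32 - 9*c^3/64))
      = (1 + c^2/4 + 9*c^4/64 + v*(-(c*v)/4 + 3*c^2*v^3/32 - 9*c^3*v/64)
          + S^2*(-c/4 + 9*c^2*v^2/32 - 9*c^3/64))/S := by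
    field_simp
    ring
  rw [step, hsq]
  congr 1
  ring

set_option maxHeartbeats 1000000 in
lemma key_ineq {c : ℝ} (hc0 : 0 < c) (hc1 : c < 1) :
    2 * AA c 1 < (1 + c^2/4) * Real.log (4/c) := by
  have hsc : 0 < Real.sqrt c := Real.sqrt_pos.2 hc0
  set s := Real.sqrt (1+c) with hsdef
  have hs2 : s^2 = 1+c := Real.sq_sqrt (by linarith)
  have hs0 : 0 < s := Real.sqrt_pos.2 (by linarith)
  have hars : Real.arsinh (1 / Real.sqrt c) = Real.log (1+s) - Real.log c / 2 := by
    have h1 : Real.arsinh (1 / Real.sqrt c)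
        = Real.log (1 / Real.sqrt c + Real.sqrt (1 + (1 / Real.sqrt c)^2)) := rfl
    have h2 : (1:ℝ) + (1 / Real.sqrt c)^2 = (1+c)/c := by
      rw [div_pow, one_pow, Real.sq_sqrt hc0.le]; field_simp; ring
    have h3 : Real.sqrt ((1+c)/c) = s / Real.sqrt c := by
      rw [Real.sqrt_div' _ hc0.le]
    have h4 : 1 / Real.sqrt c + s / Real.sqrt c = (1+s)/Real.sqrt c := by ring
    rw [h1, h2, h3, h4, Real.log_div (by positivity) hsc.ne', Real.log_sqrt hc0.le]
  have hlog4 : Real.log (4/c) = 2 * Real.log 2 - Real.log c := by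
    rw [Real.log_div (by norm_num) hc0.ne', show (4:ℝ) = 2^2 by norm_num, Real.log_pow]
    push_cast; ring
  have hA : Real.log (1+s) ≤ Real.log 2 + (s-1)/2 := by
    have h := Real.log_le_sub_one_of_pos (show 0 < (1+s)/2 by linarith)
    rw [Real.log_div (by linarith) (by norm_num)] at h
    linarith
  have hB : -Real.log c ≤ (1-c)/c := by
    have h := Real.log_le_sub_one_of_pos (show 0 < 1/c by positivity)
    rw [one_div, Real.log_inv] at h
    rw [sub_div]
    field_simp at h ⊢
    linarith
  have hupos : (0:ℝ) < 1 + c/2 - c^2/8 + c^3/16 := by nlinarith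
  have hu2 : 1 + c ≤ (1 + c/2 - c^2/8 + c^3/16)^2 := by
    nlinarith [mul_nonneg (mul_nonneg (mul_nonneg hc0.le hc0.le) (mul_nonneg hc0.le hc0.le)) (sq_nonneg (c-2))]
  have hC : s ≤ 1 + c/2 - c^2/8 + c^3/16 := by
    rw [hsdef]
    calc Real.sqrt (1+c) ≤ Real.sqrt ((1 + c/2 - c^2/8 + c^3/16)^2) := Real.sqrt_le_sqrt hu2
      _ = 1 + c/2 - c^2/8 + c^3/16 := Real.sqrt_sq hupos.le
  have hl2 : Real.log 2 < 0.6931471808 := Real.log_two_lt_d9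
  have hcoef : (0:ℝ) ≤ 2 + c^2/2 + 9*c^4/32 := by positivity
  have h1 : (2 + c^2/2 + 9*c^4/32) * Real.log (1+s)
      ≤ (2 + c^2/2 + 9*c^4/32) * (Real.log 2 + (s-1)/2) :=
    mul_le_mul_of_nonneg_left hA hcoef
  have h2 : (9*c^4/64) * (-Real.log c) ≤ 9*c^3/64 - 9*c^4/64 := by
    have h := mul_le_mul_of_nonneg_left hB (show (0:ℝ) ≤ 9*c^4/64 by positivity)
    have he : (9*c^4/64)*((1-c)/c) = 9*c^3/64 - 9*c^4/64 := by field_simp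
    linarith [he ▸ h]
  have halpha : (0:ℝ) ≤ 1 - c/2 + 7*c^2/16 - 9*c^3/32 + 9*c^4/64 := by nlinarith
  have h3 : (1 - c/2 + 7*c^2/16 - 9*c^3/32 + 9*c^4/64) * s
      ≤ (1 - c/2 + 7*c^2/16 - 9*c^3/32 + 9*c^4/64) * (1 + c/2 - c^2/8 + c^3/16) :=
    mul_le_mul_of_nonneg_left hC halpha
  have h4 : (9*c^4/32) * Real.log 2 ≤ (9*c^4/32) * 0.6931471808 := by
    apply mul_le_mul_of_nonneg_left hl2.le; positivity
  have hpoly : (9*c^4/32) * 0.6931471808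
      + (1 - c/2 + 7*c^2/16 - 9*c^3/32 + 9*c^4/64) * (1 + c/2 - c^2/8 + c^3/16)
      - (1 + c^2/4 + 9*c^4/64) + 9*c^3/64 - 9*c^4/64 < 0 := by
    nlinarith [mul_pos hc0 hc0, mul_nonneg (mul_nonneg hc0.le hc0.le) (sub_nonneg.2 hc1.le),
      mul_nonneg (mul_nonneg (mul_nonneg hc0.le hc0.le) hc0.le) (sub_nonneg.2 hc1.le),
      pow_nonneg hc0.le 4, pow_nonneg hc0.le 5,
      mul_nonneg (pow_nonneg hc0.le 4) (sub_nonneg.2 hc1.le),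
      mul_nonneg (pow_nonneg hc0.le 5) (sub_nonneg.2 hc1.le),
      mul_nonneg (mul_nonneg hc0.le hc0.le) (sub_nonneg.2 (pow_le_one₀ hc0.le hc1.le (n:=3)))]
  unfold AA
  rw [hars, hlog4]
  simp only [one_pow]
  rw [← hsdef]
  nlinarith [h1, h2, h3, h4, hpoly, hs0]

theorem ellK_lt_log_bound (k : ℝ) (hk0 : 0 < k) (hk1 : k < 1) :
    ellK k < (1 + (Real.sqrt (1 - k^2))^2 / 4) * Real.log (4 / Real.sqrt (1 - k^2)) := by
  have hkk : (0:ℝ) < 1 - k^2 := by nlinarith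
  set c := Real.sqrt (1 - k^2) with hcdef
  have hc2 : c^2 = 1 - k^2 := Real.sq_sqrt hkk.le
  have hc0 : 0 < c := Real.sqrt_pos.2 hkk
  have hc1 : c < 1 := by nlinarith [hc2, hc0]
  have hsc : 0 < Real.sqrt c := Real.sqrt_pos.2 hc0
  have hscsq : Real.sqrt c ^ 2 = c := Real.sq_sqrt hc0.le
  have hπ := Real.pi_pos
  set f : ℝ → ℝ := fun θ => 1 / Real.sqrt (1 - k^2 * (Real.sin θ)^2) with hfdef
  have hfpos : ∀ θ : ℝ, 0 < 1 - k^2 * Real.sin θ^2 := by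
    intro θ
    nlinarith [mul_nonneg (sq_nonneg k) (sub_nonneg.2 (Real.sin_sq_le_one θ))]
  have hfcont : Continuous f := by
    apply continuous_const.div (by continuity)
    intro θ; exact (Real.sqrt_pos.2 (hfpos θ)).ne'
  set θc := Real.arctan (1/Real.sqrt c) with hθcdef
  have hθc0 : 0 < θc := by
    rw [hθcdef, ← Real.arctan_zero]
    exact Real.arctan_strictMono (by positivity)
  have hθc2 : θc < π/2 := Real.arctan_lt_pi_div_two _
  have htanθc : Real.tan θc = 1/Real.sqrt c := Real.tan_arctan _
  -- the common identity
  have hiden : ∀ θ : ℝ, Real.cos θ^2 + c^2 * Real.sin θ^2 = 1 - k^2 * Real.sin θ^2 := by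
    intro θ
    have := Real.sin_sq_add_cos_sq θ
    linear_combination this + Real.sin θ^2 * hc2
  ---- PIECE 1
  set h₁ : ℝ → ℝ := fun θ => gg c (Real.sqrt c * Real.tan θ) * (Real.sqrt c * (1/Real.cos θ^2))
    with hh1def
  have hcos1 : ∀ θ ∈ Set.Icc (0:ℝ) θc, 0 < Real.cos θ := by
    intro θ hθ
    exact Real.cos_pos_of_mem_Ioo ⟨by linarith [hθ.1], lt_of_le_of_lt hθ.2 hθc2⟩
  have hD1 : ∀ θ ∈ Set.uIcc (0:ℝ) θc,
      HasDerivAt (fun θ => AA c (Real.sqrt c * Real.tan θ)) (h₁ θ) θ := by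
    intro θ hθ
    rw [Set.uIcc_of_le hθc0.le] at hθ
    have hcos := hcos1 θ hθ
    have ht := (Real.hasDerivAt_tan hcos.ne').const_mul (Real.sqrt c)
    have h := (hasDerivAt_AA hc0 (Real.sqrt c * Real.tan θ)).comp θ ht
    simpa [hh1def, Function.comp_def] using h
  have hcomp1 : ∀ θ ∈ Set.Icc (0:ℝ) θc, f θ ≤ h₁ θ := by
    intro θ hθ
    have hcos := hcos1 θ hθ
    set x := c^2 * Real.tan θ^2 with hxdef
    have hx0 : 0 ≤ x := by positivity
    have hv2 : (Real.sqrt c * Real.tan θ)^2 + c = c / Real.cos θ^2 := by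
      rw [mul_pow, hscsq, Real.tan_eq_sin_div_cos, div_pow]
      field_simp
      linear_combination Real.sin_sq_add_cos_sq θ
    have hsv : Real.sqrt ((Real.sqrt c * Real.tan θ)^2 + c) = Real.sqrt c / Real.cos θ := by
      rw [hv2, show Real.cos θ^2 = Real.cos θ^2 from rfl, Real.sqrt_div' c (sq_nonneg _),
        Real.sqrt_sq hcos.le]
    have hnum : 1 - c*(Real.sqrt c * Real.tan θ)^2/2 + 3*c^2*(Real.sqrt c * Real.tan θ)^4/8
        = 1 - x/2 + 3*x^2/8 := by
      rw [hxdef, mul_pow, mul_pow, hscsq,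
        show Real.sqrt c^4 = c^2 by rw [show (4:ℕ) = 2*2 from rfl, pow_mul, hscsq]]
      ring
    have hg1 : h₁ θ = (1 - x/2 + 3*x^2/8) * (1/Real.cos θ) := by
      rw [hh1def]
      simp only [gg]
      rw [hsv, hnum]
      field_simp
    have hxcos : x * Real.cos θ^2 = c^2 * Real.sin θ^2 := by
      rw [hxdef, Real.tan_eq_sin_div_cos, div_pow]
      field_simp
    have hiden2 : 1 - k^2 * Real.sin θ^2 = Real.cos θ^2 * (1 + x) := by
      have h := (hiden θ).symm
      rw [h]
      linear_combination -hxcos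
    have hfθ : f θ = 1/Real.sqrt (1+x) * (1/Real.cos θ) := by
      rw [hfdef]
      simp only []
      rw [hiden2, Real.sqrt_mul (sq_nonneg _), Real.sqrt_sq hcos.le]
      rw [one_div_mul_one_div]
      rw [mul_comm (Real.cos θ)]
    rw [hfθ, hg1]
    exact mul_le_mul_of_nonneg_right (inv_sqrt_le hx0) (by positivity)
  have hcont1 : ContinuousOn h₁ (Set.uIcc (0:ℝ) θc) := by
    rw [Set.uIcc_of_le hθc0.le]
    have hsub : Set.Icc (0:ℝ) θc ⊆ {x | Real.cos x ≠ 0} :=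
      fun θ hθ => (hcos1 θ hθ).ne'
    apply ContinuousOn.mul
    · exact (continuous_gg hc0).comp_continuousOn
        (continuousOn_const.mul (Real.continuousOn_tan.mono hsub))
    · exact continuousOn_const.mul (continuousOn_const.div
        ((Real.continuous_cos.pow 2).continuousOn)
        (fun θ hθ => pow_ne_zero 2 (hcos1 θ hθ).ne'))
  have hint1 : IntervalIntegrable h₁ MeasureTheory.volume 0 θc :=
    hcont1.intervalIntegrable
  have hI1 : ∫ θ in (0:ℝ)..θc, h₁ θ = AA c 1 := by
    rw [intervalIntegral.integral_eq_sub_of_hasDerivAt hD1 hint1]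
    rw [htanθc, Real.tan_zero]
    rw [mul_one_div, div_self hsc.ne', mul_zero, AA_zero, sub_zero]
  have hM1 : ∫ θ in (0:ℝ)..θc, f θ ≤ AA c 1 := by
    rw [← hI1]
    exact intervalIntegral.integral_mono_on hθc0.le (hfcont.intervalIntegrable _ _) hint1 hcomp1
  ---- PIECE 2
  set w : ℝ → ℝ := fun θ => Real.cos θ / (Real.sqrt c * Real.sin θ) with hwdef
  set h₂ : ℝ → ℝ := fun θ => gg c (w θ) * (1/(Real.sqrt c * Real.sin θ^2)) with hh2def
  have hsin2 : ∀ θ ∈ Set.Icc θc (π/2), 0 < Real.sin θ := by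
    intro θ hθ
    exact Real.sin_pos_of_pos_of_lt_pi (lt_of_lt_of_le hθc0 hθ.1) (by linarith [hθ.2])
  have hD2 : ∀ θ ∈ Set.uIcc θc (π/2),
      HasDerivAt (fun θ => -AA c (w θ)) (h₂ θ) θ := by
    intro θ hθ
    rw [Set.uIcc_of_le hθc2.le] at hθ
    have hsin := hsin2 θ hθ
    have hne : Real.sqrt c * Real.sin θ ≠ 0 := mul_ne_zero hsc.ne' hsin.ne'
    have hw : HasDerivAt w (-(1/(Real.sqrt c * Real.sin θ^2))) θ := by
      have h := (Real.hasDerivAt_cos θ).div ((Real.hasDerivAt_sin θ).const_mul (Real.sqrt c)) hne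
      convert h using 1
      · rfl
      · rfl
      · rfl
      field_simp
      linear_combination Real.sin_sq_add_cos_sq θ
    have h := ((hasDerivAt_AA hc0 (w θ)).comp θ hw).neg
    rw [hh2def]
    simpa [Function.comp_def, Pi.neg_def, mul_comm, mul_left_comm, mul_assoc] using h
  have hcomp2 : ∀ θ ∈ Set.Icc θc (π/2), f θ ≤ h₂ θ := by
    intro θ hθ
    have hsin := hsin2 θ hθ
    set y := Real.cos θ^2 / Real.sin θ^2 with hydef
    have hy0 : 0 ≤ y := by positivity
    have hD : 0 < 1 - k^2 * Real.sin θ^2 := hfpos θ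
    have hw2 : (w θ)^2 + c = (1 - k^2 * Real.sin θ^2) / (c * Real.sin θ^2) := by
      rw [hwdef]
      simp only []
      rw [div_pow, mul_pow, hscsq]
      rw [← hiden θ]
      field_simp
    have hsw : Real.sqrt ((w θ)^2 + c)
        = Real.sqrt (1 - k^2 * Real.sin θ^2) / (Real.sqrt c * Real.sin θ) := by
      rw [hw2, Real.sqrt_div' _ (by positivity), Real.sqrt_mul hc0.le,
        Real.sqrt_sq hsin.le]
    have hcy : c * (w θ)^2 = y := by
      rw [hwdef, hydef]
      simp only []
      rw [div_pow, mul_pow, hscsq]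
      field_simp
    have hnum : 1 - c*(w θ)^2/2 + 3*c^2*(w θ)^4/8 = 1 - y/2 + 3*y^2/8 := by
      rw [← hcy]; ring
    have h1y : Real.sqrt (1+y) = 1 / Real.sin θ := by
      have : 1 + y = 1 / Real.sin θ^2 := by
        rw [hydef]
        field_simp
        exact Real.sin_sq_add_cos_sq θ
      rw [this, one_div, Real.sqrt_inv, Real.sqrt_sq hsin.le, one_div]
    have hsin_le : Real.sin θ ≤ 1 - y/2 + 3*y^2/8 := by
      have h := inv_sqrt_le hy0
      rw [h1y] at h
      simpa using h
    have hg2 : h₂ θ = (1 - y/2 + 3*y^2/8) / (Real.sin θ * Real.sqrt (1 - k^2 * Real.sin θ^2)) := by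
      rw [hh2def]
      simp only [gg]
      rw [hsw, hnum]
      have hD' : 0 < Real.sqrt (1 - k^2 * Real.sin θ^2) := Real.sqrt_pos.2 hD
      field_simp
    rw [hg2, hfdef]
    simp only []
    have hD' : 0 < Real.sqrt (1 - k^2 * Real.sin θ^2) := Real.sqrt_pos.2 hD
    rw [div_le_div_iff₀ hD' (by positivity)]
    calc 1 * (Real.sin θ * Real.sqrt (1 - k^2 * Real.sin θ^2))
        = Real.sin θ * Real.sqrt (1 - k^2 * Real.sin θ^2) := by ring
      _ ≤ (1 - y/2 + 3*y^2/8) * Real.sqrt (1 - k^2 * Real.sin θ^2) :=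
          mul_le_mul_of_nonneg_right hsin_le hD'.le
  have hcont2 : ContinuousOn h₂ (Set.uIcc θc (π/2)) := by
    rw [Set.uIcc_of_le hθc2.le]
    apply ContinuousOn.mul
    · apply (continuous_gg hc0).comp_continuousOn
      apply ContinuousOn.div Real.continuous_cos.continuousOn
        (continuousOn_const.mul Real.continuous_sin.continuousOn)
      exact fun θ hθ => mul_ne_zero hsc.ne' (hsin2 θ hθ).ne'
    · apply ContinuousOn.div continuousOn_const
        (continuousOn_const.mul ((Real.continuous_sin.pow 2).continuousOn))
      exact fun θ hθ => mul_ne_zero hsc.ne' (pow_ne_zero 2 (hsin2 θ hθ).ne')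
  have hint2 : IntervalIntegrable h₂ MeasureTheory.volume θc (π/2) :=
    hcont2.intervalIntegrable
  have hwθc : w θc = 1 := by
    have hcos : 0 < Real.cos θc := Real.cos_arctan_pos _
    have hsin : Real.sin θc = Real.cos θc / Real.sqrt c := by
      have := htanθc
      rw [Real.tan_eq_sin_div_cos] at this
      field_simp at this ⊢
      linarith [this]
    rw [hwdef]
    simp only []
    rw [hsin]
    field_simp
  have hI2 : ∫ θ in θc..(π/2), h₂ θ = AA c 1 := by
    rw [intervalIntegral.integral_eq_sub_of_hasDerivAt hD2 hint2]
    have hwpi : w (π/2) = 0 := by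
      rw [hwdef]; simp
    rw [hwpi, hwθc, AA_zero]
    ring
  have hM2 : ∫ θ in θc..(π/2), f θ ≤ AA c 1 := by
    rw [← hI2]
    exact intervalIntegral.integral_mono_on hθc2.le (hfcont.intervalIntegrable _ _) hint2 hcomp2
  ---- combine
  have hsplit : ellK k = (∫ θ in (0:ℝ)..θc, f θ) + ∫ θ in θc..(π/2), f θ := by
    rw [ellK]
    exact (intervalIntegral.integral_add_adjacent_intervals
      (hfcont.intervalIntegrable _ _) (hfcont.intervalIntegrable _ _)).symm
  have : ellK k ≤ 2 * AA c 1 := by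
    rw [hsplit]; linarith
  calc ellK k ≤ 2 * AA c 1 := this
    _ < (1 + c^2/4) * Real.log (4/c) := key_ineq hc0 hc1
end

section
/- For 0 < k < 1, with k' = √(1-k²), the complete elliptic integral of the first kind satisfies K(k) < (π/2)·( (3/4)·log(k')/(k'-1) + 1/(2·(1+k')) ). -/
open Real Set Filter MeasureTheory Finset intervalIntegral

noncomputable def wc (n : ℕ) : ℝ := ∏ i ∈ Finset.range n, (2 * (i:ℝ) + 1) / (2 * i + 2)

lemma wc_zero : wc 0 = 1 := by simp [wc]

lemma wc_succ (n : ℕ) : wc (n+1) = wc n * ((2 * n + 1) / (2 * n + 2)) := by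
  rw [wc, Finset.prod_range_succ]; rfl

lemma wc_pos (n : ℕ) : 0 < wc n := by
  induction n with
  | zero => simp [wc_zero]
  | succ n ih => rw [wc_succ]; positivity

lemma wc_le_one (n : ℕ) : wc n ≤ 1 := by
  induction n with
  | zero => simp [wc_zero]
  | succ n ih =>
    rw [wc_succ]
    have h1 : (2 * (n:ℝ) + 1) / (2 * n + 2) ≤ 1 := by
      rw [div_le_one (by positivity)]; linarith
    nlinarith [wc_pos n]

/-- partial sums of the binomial series for (1-x)^(-1/2) -/
noncomputable def wP (N : ℕ) (x : ℝ) : ℝ := ∑ n ∈ Finset.range (N+1), wc n * x ^ n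

/-- its derivative -/
noncomputable def wdP (N : ℕ) (x : ℝ) : ℝ := ∑ n ∈ Finset.range N, ((n:ℝ)+1) * wc (n+1) * x ^ n

lemma wP_hasDeriv (N : ℕ) (x : ℝ) : HasDerivAt (wP N) (wdP N x) x := by
  induction N with
  | zero =>
    have e : wP 0 = fun _ => wc 0 := by funext y; simp [wP]
    rw [show wdP 0 x = 0 by simp [wdP], e]
    exact hasDerivAt_const x (wc 0)
  | succ N ih =>
    have h1 := (hasDerivAt_pow (N+1) x).const_mul (wc (N+1))
    simp only [Nat.add_sub_cancel, Nat.cast_add, Nat.cast_one] at h1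
    have h2 := ih.add h1
    have e1 : (fun y => wP N y + wc (N+1) * y ^ (N+1)) = wP (N+1) := by
      funext y
      simp [wP, Finset.sum_range_succ]
    have e2 : wdP N x + wc (N+1) * ((N+1) * x ^ N) = wdP (N+1) x := by
      simp only [wdP, Finset.sum_range_succ]
      push_cast; ring
    rw [show (wP N + fun y => wc (N+1) * y ^ (N+1)) = wP (N+1) from e1, e2] at h2
    exact h2

/-- the key ODE-type polynomial identity -/
lemma wP_ode (N : ℕ) (x : ℝ) :
    2 * (1 - x) * wdP N x = wP N x - 2 * ((N:ℝ)+1) * wc (N+1) * x ^ N := by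
  induction N with
  | zero =>
    norm_num [wP, wdP, wc_succ, wc_zero]
  | succ N ih =>
    have hrec : wc (N+2) = wc (N+1) * ((2*(N:ℝ)+3) / (2*(N:ℝ)+4)) := by
      rw [wc_succ (N+1)]; push_cast; ring_nf
    have e1 : wP (N+1) x = wP N x + wc (N+1) * x ^ (N+1) := by
      simp [wP, Finset.sum_range_succ]
    have e2 : wdP (N+1) x = wdP N x + ((N:ℝ)+1) * wc (N+1) * x ^ N := by
      simp [wdP, Finset.sum_range_succ]
    rw [e1, e2, mul_add, ih, hrec]
    have h4 : (2*(N:ℝ)+4) ≠ 0 := by positivity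
    field_simp
    push_cast
    ring

lemma wP_zero (N : ℕ) : wP N 0 = 1 := by
  rw [wP, Finset.sum_eq_single 0]
  · simp [wc_zero]
  · intro b _ hb
    simp [zero_pow hb]
  · intro h; exact absurd (Finset.mem_range.mpr (Nat.succ_pos N)) h

lemma pointwise_bound (N : ℕ) (hN : 1 ≤ N) {z : ℝ} (hz0 : 0 ≤ z) (hz1 : z < 1) :
    (Real.sqrt (1 - z))⁻¹ ≤ wP N z
      + 2*((N:ℝ)+1) * wc (N+1) * z^N * ((Real.sqrt (1-z))⁻¹ - 1) := by
  rcases eq_or_lt_of_le hz0 with rfl | hz0'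
  · simp [wP_zero, zero_pow (by omega : N ≠ 0)]
  obtain ⟨A, hA⟩ : ∃ A : ℝ, A = 2*((N:ℝ)+1) * wc (N+1) := ⟨_, rfl⟩
  rw [← hA]
  have hApos : 0 < A := by
    rw [hA]; apply mul_pos (by positivity) (wc_pos _)
  set h : ℝ → ℝ := fun x => Real.sqrt (1-x) * wP N x + A * x^N * (1 - Real.sqrt (1-x)) - 1
    with hh
  have cP : Continuous (wP N) := by
    apply continuous_finset_sum
    exact fun i _ => continuous_const.mul (continuous_pow i)
  have hcont : ContinuousOn h (Icc 0 z) := by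
    apply ContinuousOn.sub _ continuousOn_const
    apply ContinuousOn.add
    · exact (Real.continuous_sqrt.comp (continuous_const.sub continuous_id)).continuousOn.mul
        cP.continuousOn
    · exact (continuous_const.mul (continuous_pow N)).continuousOn.mul
        ((continuous_const.sub
          (Real.continuous_sqrt.comp (continuous_const.sub continuous_id))).continuousOn)
  have hderiv : ∀ x ∈ Ioo 0 z, HasDerivAt h
      (A * N * x^(N-1) * (1 - Real.sqrt (1-x))) x := by
    intro x hx
    rw [Set.mem_Ioo] at hx
    have hx1 : 0 < 1 - x := by linarith [hx.2]
    have hsx : 0 < Real.sqrt (1-x) := Real.sqrt_pos.mpr hx1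
    have hss : Real.sqrt (1-x) * Real.sqrt (1-x) = 1 - x := Real.mul_self_sqrt hx1.le
    have hs' : HasDerivAt (fun y : ℝ => Real.sqrt (1-y))
        (1 / (2 * Real.sqrt (1-x)) * (-1)) x :=
      (Real.hasDerivAt_sqrt (ne_of_gt hx1)).comp x ((hasDerivAt_id x).const_sub 1)
    have hpow : HasDerivAt (fun y : ℝ => y ^ N) ((N:ℝ) * x^(N-1)) x := hasDerivAt_pow N x
    have hD : HasDerivAt h
        ((1 / (2 * Real.sqrt (1-x)) * (-1)) * wP N x + Real.sqrt (1-x) * wdP N x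
          + (A * ((N:ℝ) * x^(N-1)) * (1 - Real.sqrt (1-x))
             + A * x^N * (-(1 / (2 * Real.sqrt (1-x)) * (-1))))) x := by
      have t1 := hs'.mul (wP_hasDeriv N x)
      have t2 := ((hpow.const_mul A).mul (hs'.const_sub 1))
      have t3 := (t1.add t2).sub_const 1
      convert t3 using 1
      all_goals rfl
    have ode := wP_ode N x
    rw [← hA] at ode
    convert hD using 1
    field_simp
    linear_combination (-2 * wdP N x) * hss - ode
  have hmono : MonotoneOn h (Icc 0 z) := by
    apply monotoneOn_of_deriv_nonneg (convex_Icc 0 z) hcont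
    · intro x hx
      rw [interior_Icc] at hx
      exact ((hderiv x hx).differentiableAt).differentiableWithinAt
    · intro x hx
      rw [interior_Icc] at hx
      rw [(hderiv x hx).deriv]
      have hx' := hx
      rw [Set.mem_Ioo] at hx'
      have hsle : Real.sqrt (1-x) ≤ 1 := Real.sqrt_le_one.mpr (by linarith [hx'.1])
      have hx0 : (0:ℝ) ≤ x := hx'.1.le
      apply mul_nonneg (by positivity) (by linarith)
  have h0 : h 0 = 0 := by
    simp [hh, wP_zero, zero_pow (by omega : N ≠ 0)]
  have hzge : 0 ≤ h z := by
    rw [← h0]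
    exact hmono (left_mem_Icc.mpr hz0) (mem_Icc.mpr ⟨hz0, le_refl z⟩) hz0
  have hs1 : 0 < 1 - z := by linarith
  have hs : 0 < Real.sqrt (1 - z) := Real.sqrt_pos.mpr hs1
  simp only [hh] at hzge
  have expand : Real.sqrt (1-z) * (wP N z + A * z^N * ((Real.sqrt (1-z))⁻¹ - 1))
      = Real.sqrt (1-z) * wP N z + A * z^N * (1 - Real.sqrt (1-z)) := by
    field_simp
  rw [← mul_le_mul_iff_right₀ hs, mul_inv_cancel₀ (ne_of_gt hs), expand]
  linarith [hzge]

lemma wallis (n : ℕ) : ∫ θ in (0:ℝ)..(π/2), Real.sin θ ^ (2*n) = (π/2) * wc n := by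
  have h1 : ∫ θ in (0:ℝ)..π, Real.sin θ ^ (2*n) = π * wc n := by
    rw [wc]; exact integral_sin_pow_even n
  have hInt : ∀ a b : ℝ, IntervalIntegrable (fun θ => Real.sin θ ^ (2*n)) volume a b :=
    fun a b => ((Real.continuous_sin.pow (2*n))).intervalIntegrable a b
  have h2 : (∫ θ in (0:ℝ)..(π/2), Real.sin θ ^ (2*n))
      + ∫ θ in (π/2:ℝ)..π, Real.sin θ ^ (2*n) = π * wc n := by
    rw [intervalIntegral.integral_add_adjacent_intervals (hInt 0 (π/2)) (hInt (π/2) π)]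
    exact h1
  have h3 : ∫ θ in (π/2:ℝ)..π, Real.sin θ ^ (2*n)
      = ∫ θ in (0:ℝ)..(π/2), Real.sin θ ^ (2*n) := by
    have := intervalIntegral.integral_comp_sub_left (a := (0:ℝ)) (b := π/2)
      (fun x => Real.sin x ^ (2*n)) π
    simp only [Real.sin_pi_sub] at this
    rw [show π - π/2 = π/2 by ring, sub_zero] at this
    exact this.symm
  rw [h3] at h2
  linarith

lemma ellK_le_partial (r : ℝ) (hr0 : 0 < r) (hr1 : r < 1) (N : ℕ) (hN : 1 ≤ N) :
    ellK r ≤ (∑ n ∈ Finset.range (N+1), wc n ^2 * r^(2*n)) * (π/2)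
      + 2*((N:ℝ)+1) * r^(2*N) * ellK r := by
  have hpos : ∀ x : ℝ, 0 < 1 - r^2 * Real.sin x ^ 2 := by
    intro x
    nlinarith [Real.sin_sq_le_one x, sq_nonneg (Real.sin x), sq_nonneg r]
  have hcont : Continuous (fun θ => 1 / Real.sqrt (1 - r^2 * Real.sin θ ^ 2)) := by
    apply continuous_const.div
    · exact Real.continuous_sqrt.comp
        (continuous_const.sub ((continuous_const.mul (Real.continuous_sin.pow 2))))
    · intro x
      exact ne_of_gt (Real.sqrt_pos.mpr (hpos x))
  -- the bounding function
  set B : ℝ → ℝ := fun θ => (∑ n ∈ Finset.range (N+1), wc n * r^(2*n) * Real.sin θ ^ (2*n))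
      + 2*((N:ℝ)+1) * r^(2*N) * (1 / Real.sqrt (1 - r^2 * Real.sin θ ^ 2)) with hB
  have hcontB : Continuous B := by
    apply Continuous.add
    · apply continuous_finset_sum
      exact fun i _ => continuous_const.mul (Real.continuous_sin.pow (2*i))
    · exact continuous_const.mul hcont
  have hptwise : ∀ θ : ℝ, 1 / Real.sqrt (1 - r^2 * Real.sin θ ^ 2) ≤ B θ := by
    intro θ
    set z : ℝ := r^2 * Real.sin θ ^ 2 with hz
    have hz0 : 0 ≤ z := by positivity
    have hz1 : z < 1 := by linarith [hpos θ]
    have key := pointwise_bound N hN hz0 hz1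
    have hw1 : 1 ≤ (Real.sqrt (1 - z))⁻¹ := by
      rw [le_inv_comm₀ one_pos (Real.sqrt_pos.mpr (by linarith))]
      simpa using Real.sqrt_le_one.mpr (by linarith : 1 - z ≤ 1)
    have hzr : z ≤ r^2 := by nlinarith [Real.sin_sq_le_one θ, sq_nonneg r]
    have hzN : z^N ≤ r^(2*N) := by
      calc z^N ≤ (r^2)^N := pow_le_pow_left₀ hz0 hzr N
        _ = r^(2*N) := by rw [← pow_mul]
    have hwc : wc (N+1) ≤ 1 := wc_le_one (N+1)
    have step1 : 2*((N:ℝ)+1) * wc (N+1) * z^N * ((Real.sqrt (1-z))⁻¹ - 1)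
        ≤ 2*((N:ℝ)+1) * r^(2*N) * (Real.sqrt (1-z))⁻¹ := by
      have e1 : 2*((N:ℝ)+1) * wc (N+1) * z^N * ((Real.sqrt (1-z))⁻¹ - 1)
          ≤ 2*((N:ℝ)+1) * 1 * r^(2*N) * ((Real.sqrt (1-z))⁻¹ - 1) := by
        apply mul_le_mul_of_nonneg_right _ (by linarith)
        have h2 : (0:ℝ) ≤ 2*((N:ℝ)+1) := by positivity
        calc 2*((N:ℝ)+1) * wc (N+1) * z^N = 2*((N:ℝ)+1) * (wc (N+1) * z^N) := by ring
          _ ≤ 2*((N:ℝ)+1) * (1 * r^(2*N)) := by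
              exact mul_le_mul_of_nonneg_left
                (mul_le_mul hwc hzN (pow_nonneg hz0 N) zero_le_one) h2
          _ = 2*((N:ℝ)+1) * 1 * r^(2*N) := by ring
      calc 2*((N:ℝ)+1) * wc (N+1) * z^N * ((Real.sqrt (1-z))⁻¹ - 1)
          ≤ 2*((N:ℝ)+1) * 1 * r^(2*N) * ((Real.sqrt (1-z))⁻¹ - 1) := e1
        _ ≤ 2*((N:ℝ)+1) * r^(2*N) * (Real.sqrt (1-z))⁻¹ := by
            rw [mul_one]
            have : (0:ℝ) ≤ 2*((N:ℝ)+1) * r^(2*N) := by positivity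
            nlinarith
    have hwPeq : wP N z = ∑ n ∈ Finset.range (N+1), wc n * r^(2*n) * Real.sin θ ^ (2*n) := by
      rw [wP]
      apply Finset.sum_congr rfl
      intro n _
      rw [hz, mul_pow, ← pow_mul, ← pow_mul]
      ring
    rw [hB]
    simp only [one_div]
    calc (Real.sqrt (1 - z))⁻¹
        ≤ wP N z + 2*((N:ℝ)+1) * wc (N+1) * z^N * ((Real.sqrt (1-z))⁻¹ - 1) := key
      _ ≤ wP N z + 2*((N:ℝ)+1) * r^(2*N) * (Real.sqrt (1-z))⁻¹ := by linarith [step1]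
      _ = _ := by rw [hwPeq]
  have hmono : ellK r ≤ ∫ θ in (0:ℝ)..(π/2), B θ := by
    rw [ellK]
    apply intervalIntegral.integral_mono_on (by positivity : (0:ℝ) ≤ π/2)
      (hcont.intervalIntegrable 0 (π/2)) (hcontB.intervalIntegrable 0 (π/2))
    intro x _
    exact hptwise x
  have hBval : ∫ θ in (0:ℝ)..(π/2), B θ
      = (∑ n ∈ Finset.range (N+1), wc n ^2 * r^(2*n)) * (π/2)
        + 2*((N:ℝ)+1) * r^(2*N) * ellK r := by
    rw [hB]
    rw [intervalIntegral.integral_add]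
    · congr 1
      · rw [intervalIntegral.integral_finset_sum]
        · rw [Finset.sum_mul]
          apply Finset.sum_congr rfl
          intro n _
          rw [intervalIntegral.integral_const_mul, wallis n]
          ring
        · exact fun i _ => ((continuous_const.mul (Real.continuous_sin.pow (2*i)))).intervalIntegrable 0 (π/2)
      · rw [intervalIntegral.integral_const_mul, ellK]
    · apply Continuous.intervalIntegrable
      apply continuous_finset_sum
      exact fun i _ => continuous_const.mul (Real.continuous_sin.pow (2*i))
    · exact (continuous_const.mul hcont).intervalIntegrable 0 (π/2)
  linarith [hmono, hBval.le, hBval.ge]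

/-- key coefficient inequality: (2n+1) c_n² ≤ 3/4 for n ≥ 1. -/
lemma wc_key (n : ℕ) (hn : 1 ≤ n) : (2 * (n:ℝ) + 1) * wc n ^ 2 ≤ 3 / 4 := by
  induction n with
  | zero => omega
  | succ n ih =>
    rcases Nat.eq_or_lt_of_le hn with h | h
    · have : n = 0 := by omega
      subst this
      norm_num [wc_succ, wc_zero]
    · have hn1 : 1 ≤ n := by omega
      have H := ih hn1
      rw [wc_succ]
      have h2 : (0:ℝ) < 2 * n + 2 := by positivity
      push_cast
      have key : (2 * ((n:ℝ)+1) + 1) * (wc n * ((2*n+1)/(2*n+2)))^2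
          ≤ (2 * n + 1) * wc n ^2 := by
        rw [mul_pow, div_pow]
        rw [show (2 * ((n:ℝ)+1) + 1) * (wc n ^2 * ((2*n+1)^2 / (2*n+2)^2))
          = ((2*n+3) * (2*n+1) / (2*n+2)^2) * ((2*n+1) * wc n ^2) by ring]
        have hfrac : (2*(n:ℝ)+3) * (2*n+1) / (2*n+2)^2 ≤ 1 := by
          rw [div_le_one (by positivity)]; nlinarith
        nlinarith [wc_pos n, sq_nonneg (wc n), mul_pos (wc_pos n) (wc_pos n),
          mul_nonneg (mul_nonneg (by linarith : (0:ℝ) ≤ 2*n+1) (sq_nonneg (wc n))) (le_of_lt h2)]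
      calc (2 * ((n:ℝ)+1) + 1) * (wc n * ((2*n+1)/(2*n+2)))^2
          ≤ (2 * n + 1) * wc n ^2 := key
        _ ≤ 3/4 := H


lemma artanh_partial (M : ℕ) {r : ℝ} (hr0 : 0 ≤ r) (hr1 : r < 1) :
    ∑ n ∈ Finset.range M, r^(2*n+1)/(2*(n:ℝ)+1)
      ≤ (Real.log (1+r) - Real.log (1-r))/2 := by
  set F : ℝ → ℝ := fun x => (Real.log (1+x) - Real.log (1-x))/2
    - ∑ n ∈ Finset.range M, x^(2*n+1)/(2*(n:ℝ)+1) with hF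
  have hcont : ContinuousOn F (Icc 0 r) := by
    apply ContinuousOn.sub
    · apply ContinuousOn.div_const
      apply ContinuousOn.sub
      · apply ContinuousOn.log
        · exact (continuous_const.add continuous_id).continuousOn
        · intro x hx
          rw [Set.mem_Icc] at hx
          have : (0:ℝ) < 1 + x := by linarith [hx.1]
          exact ne_of_gt this
      · apply ContinuousOn.log
        · exact (continuous_const.sub continuous_id).continuousOn
        · intro x hx
          rw [Set.mem_Icc] at hx
          have : (0:ℝ) < 1 - x := by linarith [hx.2]
          exact ne_of_gt this
    · apply continuousOn_finset_sum
      intro i _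
      exact ((continuous_pow (2*i+1)).div_const _).continuousOn
  have hderiv : ∀ x ∈ Ioo (0:ℝ) r, HasDerivAt F
      ((1/(1+x) - (-1)/(1-x))/2 - ∑ n ∈ Finset.range M, x^(2*n)) x := by
    intro x hx
    rw [Set.mem_Ioo] at hx
    have hx1 : 0 < 1 + x := by linarith [hx.1]
    have hx2 : 0 < 1 - x := by linarith [hx.2]
    have l1 : HasDerivAt (fun y : ℝ => Real.log (1+y)) (1/(1+x)) x := by
      have := HasDerivAt.log ((hasDerivAt_id x).const_add 1) (ne_of_gt hx1)
      simpa using this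
    have l2 : HasDerivAt (fun y : ℝ => Real.log (1-y)) ((-1)/(1-x)) x :=
      HasDerivAt.log ((hasDerivAt_id x).const_sub 1) (ne_of_gt hx2)
    have lsum : HasDerivAt (fun y : ℝ => ∑ n ∈ Finset.range M, y^(2*n+1)/(2*(n:ℝ)+1))
        (∑ n ∈ Finset.range M, x^(2*n)) x := by
      apply HasDerivAt.fun_sum
      intro n _
      have h := (hasDerivAt_pow (2*n+1) x).div_const (2*(n:ℝ)+1)
      have e : (↑(2*n+1) * x ^ (2*n+1-1)) / (2*(n:ℝ)+1) = x^(2*n) := by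
        rw [Nat.add_sub_cancel]
        push_cast
        field_simp
      rwa [e] at h
    exact ((l1.sub l2).div_const 2).sub lsum
  have hmono : MonotoneOn F (Icc 0 r) := by
    rcases eq_or_lt_of_le hr0 with rfl | hr0'
    · intro a ha b hb hab
      rw [Set.mem_Icc] at ha hb
      have : a = 0 := le_antisymm ha.2 ha.1
      have hb0 : b = 0 := le_antisymm hb.2 hb.1
      rw [this, hb0]
    apply monotoneOn_of_deriv_nonneg (convex_Icc 0 r) hcont
    · intro x hx
      rw [interior_Icc] at hx
      exact ((hderiv x hx).differentiableAt).differentiableWithinAt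
    · intro x hx
      rw [interior_Icc] at hx
      rw [(hderiv x hx).deriv]
      have hx' := hx
      rw [Set.mem_Ioo] at hx'
      have hx1 : 0 < 1 + x := by linarith [hx'.1]
      have hx2 : 0 < 1 - x := by linarith [hx'.2]
      have hx3 : 0 < 1 - x^2 := by nlinarith
      have hgeom := geom_sum_mul (x^2) M
      have hSeq : ∑ n ∈ Finset.range M, x^(2*n) = ∑ n ∈ Finset.range M, (x^2)^n := by
        apply Finset.sum_congr rfl
        intro n _
        rw [← pow_mul]
      have hS1 : (∑ n ∈ Finset.range M, x^(2*n)) * (1 - x^2) = 1 - (x^2)^M := by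
        rw [hSeq]
        nlinarith [hgeom]
      have hSle : (∑ n ∈ Finset.range M, x^(2*n)) ≤ 1/(1-x^2) := by
        rw [le_div_iff₀ hx3]
        have : (0:ℝ) ≤ (x^2)^M := by positivity
        linarith
      have heq : (1/(1+x) - (-1)/(1-x))/2 = 1/(1-x^2) := by
        field_simp
        ring
      rw [heq]
      linarith
  have hF0 : F 0 = 0 := by
    have hs : ∑ n ∈ Finset.range M, (0:ℝ)^(2*n+1)/(2*(n:ℝ)+1) = 0 :=
      Finset.sum_eq_zero (fun n _ => by rw [zero_pow (by omega : 2*n+1 ≠ 0), zero_div])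
    simp only [hF]
    rw [hs]
    norm_num
  have := hmono (left_mem_Icc.mpr hr0) (right_mem_Icc.mpr hr0) hr0
  rw [hF0, hF] at this
  linarith

lemma wc_two : wc 2 = 3/8 := by
  show wc (1+1) = 3/8
  rw [wc_succ, wc_succ, wc_zero]
  norm_num

lemma r_side {r : ℝ} (hr0 : 0 < r) (hr1 : r < 1) :
    ellK r < (π/2) * (1/4 + (3/8) * (Real.log (1+r) - Real.log (1-r)) / r) := by
  set L : ℝ := (π/2) * (1/4 + (3/8) * (Real.log (1+r) - Real.log (1-r)) / r) with hL
  have hkey : ∀ N : ℕ, 2 ≤ N →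
      ellK r ≤ L - (π/2) * (3/320) * r^4 + 2*((N:ℝ)+1) * r^(2*N) * ellK r := by
    intro N hN2
    have hN1 : 1 ≤ N := by omega
    have h1 := ellK_le_partial r hr0 hr1 N hN1
    -- bound the partial sum
    set a : ℕ → ℝ := fun n => if n = 0 then 1 else (3/4)/(2*(n:ℝ)+1) with ha
    have hterm : ∀ n ∈ Finset.range (N+1), wc n ^2 * r^(2*n) ≤ a n * r^(2*n) := by
      intro n _
      apply mul_le_mul_of_nonneg_right _ (by positivity)
      rcases Nat.eq_zero_or_pos n with rfl | hn
      · simp [ha, wc_zero]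
      · have hk := wc_key n hn
        simp only [ha, if_neg (Nat.pos_iff_ne_zero.mp hn)]
        rw [le_div_iff₀ (by positivity : (0:ℝ) < 2*(n:ℝ)+1)]
        linarith
    have hgap : wc 2 ^2 * r^(2*2) + (3/320) * r^4 ≤ a 2 * r^(2*2) := by
      simp only [ha, wc_two]
      norm_num
      nlinarith [pow_pos hr0 4]
    -- sum with extracted gap at n = 2
    have hsum : (∑ n ∈ Finset.range (N+1), wc n ^2 * r^(2*n)) + (3/320)*r^4
        ≤ ∑ n ∈ Finset.range (N+1), a n * r^(2*n) := by
      have h2mem : 2 ∈ Finset.range (N+1) := Finset.mem_range.mpr (by omega)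
      rw [← Finset.add_sum_erase _ _ h2mem, ← Finset.add_sum_erase _ _ h2mem]
      have hrest : ∑ n ∈ (Finset.range (N+1)).erase 2, wc n ^2 * r^(2*n)
          ≤ ∑ n ∈ (Finset.range (N+1)).erase 2, a n * r^(2*n) :=
        Finset.sum_le_sum (fun n hn => hterm n (Finset.mem_of_mem_erase hn))
      have := hgap
      norm_num at this ⊢
      linarith
    -- closed form bound for ∑ a n r^{2n}
    have hclosed : ∑ n ∈ Finset.range (N+1), a n * r^(2*n)
        ≤ 1/4 + (3/8) * (Real.log (1+r) - Real.log (1-r)) / r := by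
      have e1 : ∀ n, a n * r^(2*n) = (if n = 0 then (1/4 : ℝ) * r^(2*n) else 0)
          + (3/4) * (r^(2*n)/(2*(n:ℝ)+1)) := by
        intro n
        rcases Nat.eq_zero_or_pos n with rfl | hn
        · simp [ha]; norm_num
        · simp only [ha, if_neg (Nat.pos_iff_ne_zero.mp hn)]
          ring
      rw [Finset.sum_congr rfl (fun n _ => e1 n), Finset.sum_add_distrib]
      have e2 : ∑ n ∈ Finset.range (N+1), (if n = 0 then (1/4 : ℝ) * r^(2*n) else 0) = 1/4 := by
        rw [Finset.sum_ite_eq' (Finset.range (N+1)) 0]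
        simp [Finset.mem_range]
      rw [e2, ← Finset.mul_sum]
      have e3 : ∑ n ∈ Finset.range (N+1), r^(2*n)/(2*(n:ℝ)+1)
          ≤ ((Real.log (1+r) - Real.log (1-r))/2) / r := by
        rw [le_div_iff₀ hr0]
        have e4 : (∑ n ∈ Finset.range (N+1), r^(2*n)/(2*(n:ℝ)+1)) * r
            = ∑ n ∈ Finset.range (N+1), r^(2*n+1)/(2*(n:ℝ)+1) := by
          rw [Finset.sum_mul]
          apply Finset.sum_congr rfl
          intro n _
          rw [pow_succ]
          ring
        rw [e4]
        exact artanh_partial (N+1) hr0.le hr1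
      calc (1:ℝ)/4 + 3/4 * ∑ n ∈ Finset.range (N+1), r^(2*n)/(2*(n:ℝ)+1)
          ≤ 1/4 + 3/4 * (((Real.log (1+r) - Real.log (1-r))/2) / r) := by
            have h34 : (0:ℝ) < 3/4 := by norm_num
            nlinarith [e3]
        _ = 1/4 + (3/8) * (Real.log (1+r) - Real.log (1-r)) / r := by ring
    have hπ : (0:ℝ) < π/2 := by positivity
    have : (∑ n ∈ Finset.range (N+1), wc n ^2 * r^(2*n)) * (π/2)
        ≤ L - (π/2) * (3/320) * r^4 := by
      rw [hL]
      nlinarith [hsum, hclosed, hπ]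
    linarith [h1]
  -- limit N → ∞
  have hgap : (0:ℝ) < (π/2) * (3/320) * r^4 := by positivity
  have htend : Filter.Tendsto (fun N : ℕ => 2*((N:ℝ)+1) * r^(2*N) * ellK r)
      Filter.atTop (nhds 0) := by
    have hr2 : |r^2| < 1 := by
      rw [abs_of_nonneg (sq_nonneg r)]
      nlinarith
    have s1 : Filter.Tendsto (fun N : ℕ => ((N:ℝ)+1) * (r^2)^N) Filter.atTop (nhds 0) := by
      have hsum : Summable (fun N : ℕ => ((N:ℝ)+1) * (r^2)^N) := by
        have := (summable_pow_mul_geometric_of_norm_lt_one 1 (by rwa [Real.norm_eq_abs]) :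
          Summable (fun n : ℕ => (n:ℝ)^1 * (r^2)^n))
        have h2 := summable_geometric_of_norm_lt_one (x := r^2) (by rwa [Real.norm_eq_abs])
        simpa [add_mul, pow_one] using this.add h2
      exact hsum.tendsto_atTop_zero
    have : Filter.Tendsto (fun N : ℕ => 2 * (((N:ℝ)+1) * (r^2)^N) * ellK r)
        Filter.atTop (nhds (2 * 0 * ellK r)) := by
      exact (s1.const_mul 2).mul_const (ellK r)
    simp only [mul_zero, zero_mul] at this
    convert this using 2 with N
    rw [pow_mul]
    ring
  have hle : ellK r ≤ L - (π/2) * (3/320) * r^4 := by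
    have htend2 : Filter.Tendsto
        (fun N : ℕ => L - (π/2) * (3/320) * r^4 + 2*((N:ℝ)+1) * r^(2*N) * ellK r)
        Filter.atTop (nhds (L - (π/2) * (3/320) * r^4)) := by
      have := (tendsto_const_nhds (x := L - (π/2) * (3/320) * r^4)
        (f := Filter.atTop (α := ℕ))).add htend
      simpa using this
    apply ge_of_tendsto htend2
    filter_upwards [Filter.eventually_ge_atTop 2] with N hN
    exact hkey N hN
  linarith

noncomputable def Jf (a b : ℝ) : ℝ :=
  ∫ x in Ioi (0:ℝ), (Real.sqrt ((x^2+a^2)*(x^2+b^2)))⁻¹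

lemma sqrt_helper {P Q c : ℝ} (hc : 0 < c) (hQ : 0 ≤ Q) (h : P = Q * c^2) :
    Real.sqrt P = Real.sqrt Q * c := by
  rw [h, Real.sqrt_mul hQ, Real.sqrt_sq hc.le]

lemma tan_image : Real.tan '' (Ioo 0 (π/2)) = Ioi (0:ℝ) := by
  ext y
  constructor
  · rintro ⟨θ, hθ, rfl⟩
    rw [Set.mem_Ioo] at hθ
    exact Real.tan_pos_of_pos_of_lt_pi_div_two hθ.1 hθ.2
  · intro hy
    rw [Set.mem_Ioi] at hy
    refine ⟨Real.arctan y, ⟨?_, Real.arctan_lt_pi_div_two y⟩, Real.tan_arctan y⟩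
    rw [← Real.arctan_zero]
    exact Real.arctan_strictMono hy

lemma ellK_eq_Jf {κ : ℝ} (hκ0 : 0 ≤ κ) (hκ1 : κ < 1) :
    ellK κ = Jf 1 (Real.sqrt (1 - κ^2)) := by
  set τ := Real.sqrt (1 - κ^2) with hτ
  have h1κ : 0 < 1 - κ^2 := by nlinarith
  have hτpos : 0 < τ := Real.sqrt_pos.mpr h1κ
  have hτ2 : τ^2 = 1 - κ^2 := Real.sq_sqrt h1κ.le
  -- change of variables x = tan θ
  have hderivtan : ∀ θ ∈ Ioo (0:ℝ) (π/2),
      HasDerivWithinAt Real.tan (1 / Real.cos θ ^ 2) (Ioo (0:ℝ) (π/2)) θ := by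
    intro θ hθ
    rw [Set.mem_Ioo] at hθ
    have hcos : Real.cos θ ≠ 0 := by
      apply ne_of_gt
      apply Real.cos_pos_of_mem_Ioo
      constructor <;> [linarith [Real.pi_pos, hθ.1]; exact hθ.2]
    exact (Real.hasDerivAt_tan hcos).hasDerivWithinAt
  have hinj : InjOn Real.tan (Ioo 0 (π/2)) := by
    apply Real.strictMonoOn_tan.injOn.mono
    intro x hx
    rw [Set.mem_Ioo] at hx ⊢
    constructor <;> [linarith [Real.pi_pos, hx.1]; exact hx.2]
  have cov := integral_image_eq_integral_abs_deriv_smul measurableSet_Ioo hderivtan hinj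
    (fun x => (Real.sqrt ((x^2+1^2)*(x^2+τ^2)))⁻¹)
  rw [tan_image] at cov
  -- pointwise identity on (0, π/2)
  have hpt : ∀ θ ∈ Ioo (0:ℝ) (π/2),
      |1 / Real.cos θ ^ 2| • (Real.sqrt ((Real.tan θ^2+1^2)*(Real.tan θ^2+τ^2)))⁻¹
        = 1 / Real.sqrt (1 - κ^2 * Real.cos θ ^ 2) := by
    intro θ hθ
    rw [Set.mem_Ioo] at hθ
    have hcos : 0 < Real.cos θ := by
      apply Real.cos_pos_of_mem_Ioo
      constructor <;> [linarith [Real.pi_pos, hθ.1]; exact hθ.2]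
    have hc2 : (0:ℝ) < Real.cos θ ^ 2 := by positivity
    have hQ : 0 < 1 - κ^2 * Real.cos θ ^ 2 := by
      nlinarith [Real.cos_sq_le_one θ, sq_nonneg κ]
    have hsin : Real.sin θ ^ 2 = 1 - Real.cos θ ^ 2 := by
      have := Real.sin_sq_add_cos_sq θ
      linarith
    have harg : (Real.tan θ^2+1^2)*(Real.tan θ^2+τ^2)
        = (1 - κ^2 * Real.cos θ ^ 2) * (1 / Real.cos θ ^ 2)^2 := by
      rw [Real.tan_eq_sin_div_cos, hτ2]
      field_simp
      nlinarith [hsin]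
    rw [sqrt_helper (by positivity) hQ.le harg, smul_eq_mul, abs_of_pos (by positivity)]
    rw [mul_inv]
    rw [one_div, one_div]
    rw [inv_inv]
    field_simp
  rw [setIntegral_congr_fun measurableSet_Ioo hpt] at cov
  -- reflection: ∫ 1/√(1-κ² cos²) = ellK κ
  have hrefl : ∫ θ in (0:ℝ)..(π/2), 1 / Real.sqrt (1 - κ^2 * Real.cos θ ^ 2) = ellK κ := by
    rw [ellK]
    have := intervalIntegral.integral_comp_sub_left (a := (0:ℝ)) (b := π/2)
      (fun x => 1 / Real.sqrt (1 - κ^2 * Real.sin x ^ 2)) (π/2)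
    simp only [Real.sin_pi_div_two_sub] at this
    rw [sub_self, sub_zero] at this
    exact this
  rw [Jf, cov, ← hrefl, intervalIntegral.integral_of_le (by positivity : (0:ℝ) ≤ π/2),
    ← integral_Ioc_eq_integral_Ioo]

lemma Jf_scale {a b lam : ℝ} (ha : 0 < a) (hb : 0 < b) (hlam : 0 < lam) :
    Jf (lam*a) (lam*b) = lam⁻¹ * Jf a b := by
  have himg : (fun y : ℝ => lam * y) '' (Ioi 0) = Ioi (0:ℝ) := by
    ext y
    constructor
    · rintro ⟨x, hx, rfl⟩
      exact mul_pos hlam hx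
    · intro hy
      rw [Set.mem_Ioi] at hy
      exact ⟨y / lam, div_pos hy hlam, by field_simp⟩
  have hderiv : ∀ x ∈ Ioi (0:ℝ),
      HasDerivWithinAt (fun y : ℝ => lam * y) lam (Ioi 0) x := by
    intro x _
    simpa using ((hasDerivAt_id x).const_mul lam).hasDerivWithinAt
  have hinj : InjOn (fun y : ℝ => lam * y) (Ioi 0) :=
    fun x _ y _ hxy => mul_left_cancel₀ (ne_of_gt hlam) hxy
  have cov := integral_image_eq_integral_abs_deriv_smul measurableSet_Ioi hderiv hinj
    (fun x => (Real.sqrt ((x^2+(lam*a)^2)*(x^2+(lam*b)^2)))⁻¹)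
  rw [himg] at cov
  rw [Jf, cov]
  rw [show (fun x => |lam| • (Real.sqrt (((lam*x)^2+(lam*a)^2)*((lam*x)^2+(lam*b)^2)))⁻¹)
      = fun x => lam⁻¹ * (Real.sqrt ((x^2+a^2)*(x^2+b^2)))⁻¹ from ?_]
  · rw [MeasureTheory.integral_const_mul, Jf]
  · funext x
    have hQ : (0:ℝ) ≤ (x^2+a^2)*(x^2+b^2) := by positivity
    have harg : ((lam*x)^2+(lam*a)^2)*((lam*x)^2+(lam*b)^2)
        = ((x^2+a^2)*(x^2+b^2)) * (lam^2)^2 := by ring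
    rw [sqrt_helper (by positivity) hQ harg, smul_eq_mul, abs_of_pos hlam, mul_inv]
    rw [show lam * ((Real.sqrt ((x^2+a^2)*(x^2+b^2)))⁻¹ * ((lam^2))⁻¹)
      = (Real.sqrt ((x^2+a^2)*(x^2+b^2)))⁻¹ * (lam * (lam^2)⁻¹) from by ring]
    rw [show lam * ((lam:ℝ)^2)⁻¹ = lam⁻¹ from by field_simp]
    ring

lemma Jf_agm {t : ℝ} (ht : 0 < t) : Jf 1 t = Jf ((1+t)/2) (Real.sqrt t) := by
  set A : ℝ := (1+t)/2 with hA
  set B : ℝ := Real.sqrt t with hB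
  set g : ℝ → ℝ := fun u => (Real.sqrt ((u^2+A^2)*(u^2+B^2)))⁻¹ with hg
  have heven : ∫ u : ℝ, g u = 2 * Jf A B := by
    have h1 : (fun u : ℝ => g u) = (fun u : ℝ => g |u|) := by
      funext u
      rw [hg]
      simp only [sq_abs]
    rw [h1]
    rw [integral_comp_abs (f := g)]
    rfl
  set f : ℝ → ℝ := fun y => (y - t * y⁻¹)/2 with hf
  have hderiv : ∀ x ∈ Ioi (0:ℝ),
      HasDerivWithinAt f ((1 + t * (x^2)⁻¹)/2) (Ioi 0) x := by
    intro x hx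
    rw [Set.mem_Ioi] at hx
    have h1 := ((hasDerivAt_id x).sub ((hasDerivAt_inv (ne_of_gt hx)).const_mul t)).div_const 2
    have e : (1 - t * -(x ^ 2)⁻¹) / 2 = (1 + t * (x^2)⁻¹)/2 := by ring
    rw [e] at h1
    exact h1.hasDerivWithinAt
  have hmono : StrictMonoOn f (Ioi 0) := by
    intro x hx y hy hxy
    rw [Set.mem_Ioi] at hx hy
    have h1 : t / y < t / x := div_lt_div_of_pos_left ht hx hxy
    rw [hf]
    simp only
    rw [div_lt_div_iff_of_pos_right (by norm_num : (0:ℝ) < 2)]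
    rw [div_eq_mul_inv, div_eq_mul_inv] at h1
    have h2 : t * y⁻¹ < t * x⁻¹ := h1
    linarith
  have hinj : InjOn f (Ioi 0) := hmono.injOn
  have himg : f '' (Ioi 0) = Set.univ := by
    apply Set.eq_univ_of_forall
    intro u
    set s : ℝ := Real.sqrt (u^2 + t) with hs
    have hs2 : s^2 = u^2 + t := Real.sq_sqrt (by positivity)
    have hspos : 0 < s := Real.sqrt_pos.mpr (by positivity)
    have hx : 0 < u + s := by nlinarith
    refine ⟨u + s, hx, ?_⟩
    rw [hf]
    simp only
    rw [div_eq_iff (by norm_num : (2:ℝ) ≠ 0)]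
    field_simp
    nlinarith [hs2]
  have cov := integral_image_eq_integral_abs_deriv_smul measurableSet_Ioi hderiv hinj g
  rw [himg, Measure.restrict_univ] at cov
  have hpt : ∀ x ∈ Ioi (0:ℝ),
      |(1 + t * (x^2)⁻¹)/2| • g (f x) = 2 * (Real.sqrt ((x^2+1^2)*(x^2+t^2)))⁻¹ := by
    intro x hx
    rw [Set.mem_Ioi] at hx
    have hx2 : (0:ℝ) < x^2 := by positivity
    have hQ : (0:ℝ) < (x^2+1^2)*(x^2+t^2) := by positivity
    have hc : (0:ℝ) < (x^2+t)/(4*x^2) := by positivity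
    have hd : (0:ℝ) < (1 + t * (x^2)⁻¹)/2 := by positivity
    have hB2 : B^2 = t := Real.sq_sqrt ht.le
    have harg : ((f x)^2+A^2)*((f x)^2+B^2)
        = ((x^2+1^2)*(x^2+t^2)) * ((x^2+t)/(4*x^2))^2 := by
      rw [hf, hA, hB2]
      simp only
      field_simp
      ring
    rw [hg]
    simp only
    rw [sqrt_helper hc hQ.le harg, smul_eq_mul, abs_of_pos hd]
    have hsq : (0:ℝ) < Real.sqrt ((x^2+1^2)*(x^2+t^2)) := Real.sqrt_pos.mpr hQ
    rw [mul_inv]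
    rw [show (1 + t * (x^2)⁻¹)/2 = 2 * ((x^2+t)/(4*x^2)) from by field_simp; ring]
    field_simp
  rw [setIntegral_congr_fun measurableSet_Ioi hpt] at cov
  rw [MeasureTheory.integral_const_mul] at cov
  rw [heven] at cov
  have : Jf 1 t = ∫ x in Ioi (0:ℝ), (Real.sqrt ((x^2+1^2)*(x^2+t^2)))⁻¹ := by rw [Jf]
  rw [this]
  linarith [cov]

lemma landen {t : ℝ} (ht0 : 0 < t) (ht1 : t < 1) :
    Jf 1 t = (2/(1+t)) * Jf 1 (2*Real.sqrt t/(1+t)) := by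
  have h1t : (0:ℝ) < 1 + t := by linarith
  have hst : 0 < Real.sqrt t := Real.sqrt_pos.mpr ht0
  have hb : (0:ℝ) < 2*Real.sqrt t/(1+t) := by positivity
  have hsc := Jf_scale (a := 1) (b := 2*Real.sqrt t/(1+t)) (lam := (1+t)/2)
    one_pos hb (by positivity)
  rw [mul_one] at hsc
  rw [show (1+t)/2 * (2*Real.sqrt t/(1+t)) = Real.sqrt t from by field_simp] at hsc
  rw [Jf_agm ht0, hsc, inv_div]

theorem ellK_lt_K3 (k : ℝ) (hk0 : 0 < k) (hk1 : k < 1) :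
    ellK k < (π/2) * ((3/4) * Real.log (Real.sqrt (1 - k^2)) / (Real.sqrt (1 - k^2) - 1)
      + 1 / (2 * (1 + Real.sqrt (1 - k^2)))) := by
  set t := Real.sqrt (1 - k^2) with hts
  have h1k : 0 < 1 - k^2 := by nlinarith
  have ht0 : 0 < t := Real.sqrt_pos.mpr h1k
  have ht2 : t^2 = 1 - k^2 := Real.sq_sqrt h1k.le
  have ht1 : t < 1 := by nlinarith [ht2, ht0]
  set r := (1-t)/(1+t) with hrs
  have h1t : (0:ℝ) < 1+t := by linarith
  have hr0 : 0 < r := div_pos (by linarith) h1t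
  have hr1 : r < 1 := by rw [hrs, div_lt_one h1t]; linarith
  have e1 : ellK k = Jf 1 t := ellK_eq_Jf hk0.le hk1
  have e2 : Jf 1 t = (2/(1+t)) * Jf 1 (2*Real.sqrt t/(1+t)) := landen ht0 ht1
  have hc : Real.sqrt (1 - r^2) = 2*Real.sqrt t/(1+t) := by
    have h1r2 : 1 - r^2 = 4*t/(1+t)^2 := by rw [hrs]; field_simp; ring
    rw [h1r2, show 4*t/(1+t)^2 = (2*Real.sqrt t/(1+t))^2 from ?_]
    · exact Real.sqrt_sq (by positivity)
    · rw [div_pow, mul_pow, Real.sq_sqrt ht0.le]; norm_num [mul_comm]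
  have e3 : ellK r = Jf 1 (2*Real.sqrt t/(1+t)) := by
    rw [ellK_eq_Jf hr0.le hr1, hc]
  have e4 : ellK k = (2/(1+t)) * ellK r := by rw [e1, e2, e3]
  have key := r_side hr0 hr1
  have hpos : (0:ℝ) < 2/(1+t) := by positivity
  have hl : Real.log (1+r) - Real.log (1-r) = -Real.log t := by
    have h1r : (0:ℝ) < 1 + r := by linarith
    have h2r : (0:ℝ) < 1 - r := by linarith
    rw [← Real.log_div (ne_of_gt h1r) (ne_of_gt h2r)]
    rw [show (1+r)/(1-r) = t⁻¹ from ?_]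
    · exact Real.log_inv t
    · rw [hrs]
      field_simp
      rw [div_eq_one_iff_eq (by intro h; linarith)]
      ring
  calc ellK k = (2/(1+t)) * ellK r := e4
    _ < (2/(1+t)) * ((π/2) * (1/4 + (3/8) * (Real.log (1+r) - Real.log (1-r)) / r)) :=
        (mul_lt_mul_iff_right₀ hpos).mpr key
    _ = (π/2) * ((3/4) * Real.log t / (t - 1) + 1 / (2*(1+t))) := by
        rw [hl, hrs]
        have hne1 : t - 1 ≠ 0 := by intro h; nlinarith
        have hne2 : (1:ℝ) + t ≠ 0 := ne_of_gt h1t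
        have hne3 : (1:ℝ) - t ≠ 0 := by intro h; nlinarith
        field_simp
        ring
end

section
/- For fixed 0 < k < 1 and 0 < u < K(k), the Jacobi elliptic function cn(u,k) is strictly increasing as a function of the modulus k; more precisely, ∂cn(u,k)/∂k = (sn(u)·dn(u)/(k·k'²))·( E(u) − k'²·u − k²·sn(u)·cn(u)/dn(u) ) > 0, where E(u) = ∫₀^u dn²(v) dv. -/
open Real intervalIntegral

/-- Complete elliptic integral of the second kind. -/
noncomputable def ellE (k : ℝ) : ℝ :=
  ∫ θ in (0:ℝ)..(π/2), Real.sqrt (1 - k^2 * (Real.sin θ)^2)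

open Set MeasureTheory Filter Topology

noncomputable def jf (m t : ℝ) : ℝ := 1 / (Real.sqrt (1 - t^2) * Real.sqrt (1 - m^2 * t^2))
noncomputable def jg (m t : ℝ) : ℝ :=
  m * t^2 / (Real.sqrt (1 - t^2) * Real.sqrt (1 - m^2 * t^2)^3)
noncomputable def jF (m x : ℝ) : ℝ := ∫ t in (0:ℝ)..x, jf m t

lemma sq_lt_one_of_abs {t : ℝ} (ht : t ∈ Ioo (-1:ℝ) 1) : 0 < 1 - t^2 := by
  obtain ⟨h1, h2⟩ := ht; nlinarith

lemma msq_pos {m t : ℝ} (hm1 : |m| ≤ 1) (ht : t ∈ Ioo (-1:ℝ) 1) : 0 < 1 - m^2 * t^2 := by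
  obtain ⟨h1, h2⟩ := ht
  have : m^2 ≤ 1 := by
    have := abs_nonneg m; nlinarith [sq_abs m]
  nlinarith

lemma jf_denom_pos {m t : ℝ} (hm1 : |m| ≤ 1) (ht : t ∈ Ioo (-1:ℝ) 1) :
    0 < Real.sqrt (1 - t^2) * Real.sqrt (1 - m^2 * t^2) :=
  mul_pos (Real.sqrt_pos.2 (sq_lt_one_of_abs ht)) (Real.sqrt_pos.2 (msq_pos hm1 ht))

lemma jf_pos {m t : ℝ} (hm1 : |m| ≤ 1) (ht : t ∈ Ioo (-1:ℝ) 1) : 0 < jf m t :=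
  one_div_pos.2 (jf_denom_pos hm1 ht)

lemma jf_contOn {m : ℝ} (hm1 : |m| ≤ 1) : ContinuousOn (jf m) (Ioo (-1:ℝ) 1) := by
  apply continuousOn_const.div
  · exact ((continuous_sqrt.comp (by continuity)).mul
      (continuous_sqrt.comp (by continuity))).continuousOn
  · exact fun t ht => ne_of_gt (jf_denom_pos hm1 ht)

lemma jf_intble {m x y : ℝ} (hm1 : |m| ≤ 1) (h : uIcc x y ⊆ Ioo (-1:ℝ) 1) :
    IntervalIntegrable (jf m) volume x y :=
  ((jf_contOn hm1).mono h).intervalIntegrable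

lemma jg_pos {m t : ℝ} (hm0 : 0 < m) (hm1 : |m| ≤ 1) (ht0 : 0 < t) (ht : t ∈ Ioo (-1:ℝ) 1) :
    0 < jg m t := by
  apply div_pos (by positivity)
  exact mul_pos (Real.sqrt_pos.2 (sq_lt_one_of_abs ht))
    (pow_pos (Real.sqrt_pos.2 (msq_pos hm1 ht)) 3)

lemma jg_contOn {m : ℝ} (hm1 : |m| ≤ 1) : ContinuousOn (jg m) (Ioo (-1:ℝ) 1) := by
  apply ContinuousOn.div
  · exact (continuous_const.mul (continuous_pow 2)).continuousOn
  · exact ((continuous_sqrt.comp (by continuity)).mul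
      ((continuous_sqrt.comp (by continuity)).pow 3)).continuousOn
  · intro t ht
    exact ne_of_gt (mul_pos (Real.sqrt_pos.2 (sq_lt_one_of_abs ht))
      (pow_pos (Real.sqrt_pos.2 (msq_pos hm1 ht)) 3))

lemma jf_contAt2 {m t : ℝ} (hm1 : |m| ≤ 1) (ht : t ∈ Ioo (-1:ℝ) 1) :
    ContinuousAt (fun p : ℝ × ℝ => jf p.1 p.2) (m, t) := by
  apply ContinuousAt.div continuousAt_const
  · exact ((continuous_sqrt.comp (by continuity)).mul
      (continuous_sqrt.comp (by continuity))).continuousAt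
  · exact ne_of_gt (jf_denom_pos hm1 ht)

/-- The ODE hypothesis for fixed modulus. -/
def JacODE (s c d : ℝ → ℝ) (m : ℝ) : Prop :=
  s 0 = 0 ∧ c 0 = 1 ∧ d 0 = 1 ∧
  ∀ u : ℝ, HasDerivAt s (c u * d u) u ∧ HasDerivAt c (-(s u * d u)) u ∧
    HasDerivAt d (-(m^2 * s u * c u)) u

section fixedm

variable {s c d : ℝ → ℝ} {m : ℝ} (hJ : JacODE s c d m)
include hJ

lemma jac_sq1 : ∀ v, s v^2 + c v^2 = 1 := by
  obtain ⟨hs0, hc0, hd0, hode⟩ := hJ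
  have hder : ∀ v, HasDerivAt (fun v => s v^2 + c v^2) 0 v := by
    intro v
    have h1 := ((hode v).1.pow 2).add ((hode v).2.1.pow 2)
    refine h1.congr_deriv ?_
    ring
  intro v
  have := is_const_of_deriv_eq_zero (f := fun v => s v^2 + c v^2)
    (fun x => (hder x).differentiableAt) (fun x => (hder x).deriv) v 0
  simpa [hs0, hc0] using this

lemma jac_sq2 : ∀ v, m^2 * s v^2 + d v^2 = 1 := by
  obtain ⟨hs0, hc0, hd0, hode⟩ := hJ
  have hder : ∀ v, HasDerivAt (fun v => m^2 * s v^2 + d v^2) 0 v := by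
    intro v
    have h1 := (((hode v).1.pow 2).const_mul (m^2)).add ((hode v).2.2.pow 2)
    refine h1.congr_deriv ?_
    ring
  intro v
  have := is_const_of_deriv_eq_zero (f := fun v => m^2 * s v^2 + d v^2)
    (fun x => (hder x).differentiableAt) (fun x => (hder x).deriv) v 0
  simpa [hs0, hd0] using this

lemma jac_d_ge (hm1 : m^2 < 1) : ∀ v, Real.sqrt (1 - m^2) ≤ d v := by
  have hsq2 := jac_sq2 hJ
  obtain ⟨hs0, hc0, hd0, hode⟩ := hJ
  have hd2 : ∀ v, 1 - m^2 ≤ d v^2 := by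
    intro v
    have h1 := jac_sq1 ⟨hs0, hc0, hd0, hode⟩ v
    have h2 := hsq2 v
    have hm0 : 0 ≤ m^2 := sq_nonneg m
    nlinarith [sq_nonneg (s v), sq_nonneg (c v)]
  have hdpos : ∀ v, 0 < d v := by
    intro v
    by_contra hneg
    push_neg at hneg
    have hcont : ContinuousOn d (uIcc v 0) :=
      (fun x _ => ((hode x).2.2.continuousAt).continuousWithinAt)
    have h0 : (0:ℝ) ∈ uIcc (d v) (d 0) := by
      rw [hd0]
      exact Set.mem_uIcc.2 (Or.inl ⟨hneg, by norm_num⟩)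
    obtain ⟨w, _, hw⟩ := intermediate_value_uIcc hcont h0
    have := hd2 w
    rw [hw] at this
    nlinarith
  intro v
  have := hd2 v
  calc Real.sqrt (1 - m^2) ≤ Real.sqrt (d v^2) := Real.sqrt_le_sqrt this
    _ = d v := by rw [Real.sqrt_sq (hdpos v).le]

lemma jac_d_pos (hm1 : m^2 < 1) : ∀ v, 0 < d v := fun v =>
  lt_of_lt_of_le (Real.sqrt_pos.2 (by linarith)) (jac_d_ge hJ hm1 v)

end fixedm

section goodint

variable {s c d : ℝ → ℝ} {m w : ℝ} (hJ : JacODE s c d m)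
  (hm0 : 0 < m) (hm1 : m < 1) (hc : ∀ v ∈ Icc 0 w, 0 < c v)
include hJ hm0 hm1 hc

lemma jac_absm : |m| ≤ 1 := by rw [abs_of_pos hm0]; linarith

lemma jac_sMono : StrictMonoOn s (Icc 0 w) := by
  obtain ⟨hs0, hc0, hd0, hode⟩ := hJ
  apply strictMonoOn_of_hasDerivWithinAt_pos (convex_Icc 0 w)
    (fun x _ => (hode x).1.continuousAt.continuousWithinAt)
    (fun x _ => (hode x).1.hasDerivWithinAt)
  intro x hx
  rw [interior_Icc] at hx
  exact mul_pos (hc x ⟨hx.1.le, hx.2.le⟩)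
    (jac_d_pos ⟨hs0, hc0, hd0, hode⟩ (by nlinarith) x)

lemma jac_s_nonneg : ∀ v ∈ Icc 0 w, 0 ≤ s v := by
  intro v hv
  rcases eq_or_lt_of_le hv.1 with h | h
  · rw [← h, hJ.1]
  · have := jac_sMono hJ hm0 hm1 hc (left_mem_Icc.2 (hv.1.trans hv.2)) hv h
    rw [hJ.1] at this
    exact this.le

lemma jac_s_mem : ∀ v ∈ Icc 0 w, s v ∈ Ico 0 1 := by
  intro v hv
  have h0 := jac_s_nonneg hJ hm0 hm1 hc v hv
  have h1 := jac_sq1 hJ v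
  have hcv := hc v hv
  constructor
  · exact h0
  · nlinarith

lemma jac_s_mem' : ∀ v ∈ Icc 0 w, s v ∈ Ioo (-1:ℝ) 1 := fun v hv =>
  ⟨by linarith [(jac_s_mem hJ hm0 hm1 hc v hv).1], (jac_s_mem hJ hm0 hm1 hc v hv).2⟩

lemma jac_c_eq : ∀ v ∈ Icc 0 w, c v = Real.sqrt (1 - s v^2) := by
  intro v hv
  have h1 := jac_sq1 hJ v
  have : 1 - s v^2 = c v^2 := by linarith
  rw [this, Real.sqrt_sq (hc v hv).le]

lemma jac_d_eq : ∀ v ∈ Icc 0 w, d v = Real.sqrt (1 - m^2 * s v^2) := by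
  intro v hv
  have h1 := jac_sq2 hJ v
  have : 1 - m^2 * s v^2 = d v^2 := by linarith
  rw [this, Real.sqrt_sq (jac_d_pos hJ (by nlinarith) v).le]

lemma jac_hasDeriv_jF : ∀ v ∈ Icc 0 w, HasDerivAt (fun x => jF m (s x)) 1 v := by
  intro x hx
  have habs := jac_absm hJ hm0 hm1 hc
  have hsx := jac_s_mem' hJ hm0 hm1 hc x hx
  have hA : HasDerivAt (jF m) (jf m (s x)) (s x) := by
    apply intervalIntegral.integral_hasDerivAt_right
    · apply jf_intble habs
      intro t ht
      rcases Set.mem_uIcc.1 ht with ⟨h1, h2⟩ | ⟨h1, h2⟩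
      · exact ⟨by linarith [hsx.1], lt_of_le_of_lt h2 hsx.2⟩
      · exact ⟨by linarith [hsx.1], by have := jac_s_mem hJ hm0 hm1 hc x hx; linarith [this.1]⟩
    · exact ⟨Ioo (-1:ℝ) 1, Ioo_mem_nhds hsx.1 hsx.2,
        (jf_contOn habs).aestronglyMeasurable measurableSet_Ioo⟩
    · exact (jf_contOn habs).continuousAt (Ioo_mem_nhds hsx.1 hsx.2)
  have hB := hA.comp x (hJ.2.2.2 x).1
  have hcd : Real.sqrt (1 - s x^2) * Real.sqrt (1 - m^2 * s x^2) = c x * d x := by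
    rw [← jac_c_eq hJ hm0 hm1 hc x hx, ← jac_d_eq hJ hm0 hm1 hc x hx]
  have hval : jf m (s x) * (c x * d x) = 1 := by
    rw [jf, hcd, one_div]
    exact inv_mul_cancel₀ (ne_of_gt (mul_pos (hc x hx) (jac_d_pos hJ (by nlinarith) x)))
  rwa [hval] at hB

lemma jac_jF_eq : ∀ v ∈ Icc 0 w, jF m (s v) = v := by
  have key := eq_of_has_deriv_right_eq (a := 0) (b := w)
    (f := fun x => jF m (s x)) (g := id) (f' := fun _ => (1:ℝ))
    (fun x hx => (jac_hasDeriv_jF hJ hm0 hm1 hc x ⟨hx.1, hx.2.le⟩).hasDerivWithinAt)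
    (fun x _ => (hasDerivAt_id x).hasDerivWithinAt)
    (fun x hx => (jac_hasDeriv_jF hJ hm0 hm1 hc x hx).continuousAt.continuousWithinAt)
    continuous_id.continuousOn
    (by simp [hJ.1, jF])
  exact fun v hv => key v hv

end goodint

noncomputable def jG (m α : ℝ) : ℝ := ∫ θ in (0:ℝ)..α, 1 / Real.sqrt (1 - m^2 * Real.sin θ^2)

lemma jG_pi_div_two (m : ℝ) : jG m (π/2) = ellK m := rfl

lemma jG_integrand_cont {m : ℝ} (hm2 : m^2 < 1) :
    Continuous (fun θ => 1 / Real.sqrt (1 - m^2 * Real.sin θ^2)) := by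
  apply continuous_const.div (by continuity)
  intro θ
  have h1 : Real.sin θ^2 ≤ 1 := Real.sin_sq_le_one θ
  have h2 : 0 < 1 - m^2 * Real.sin θ^2 := by nlinarith [sq_nonneg m, sq_nonneg (Real.sin θ)]
  exact ne_of_gt (Real.sqrt_pos.2 h2)

lemma sin_mem_Ico {α : ℝ} (hα : α ∈ Ico 0 (π/2)) : Real.sin α ∈ Ico 0 1 := by
  have hpi : (0:ℝ) < π/2 := by positivity
  constructor
  · exact Real.sin_nonneg_of_nonneg_of_le_pi hα.1 (by linarith [Real.pi_pos, hα.2])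
  · have := Real.strictMonoOn_sin ⟨by linarith [hα.1], hα.2.le⟩
      ⟨by linarith, le_refl _⟩ hα.2
    simpa using this

lemma jF_sin {m : ℝ} (habs : |m| ≤ 1) {α : ℝ} (hα : α ∈ Ico 0 (π/2)) :
    jF m (Real.sin α) = jG m α := by
  have himg : Real.sin '' (uIcc 0 α) ⊆ Ioo (-1:ℝ) 1 := by
    rintro _ ⟨x, hx, rfl⟩
    rw [uIcc_of_le hα.1] at hx
    have hx' : x ∈ Ico 0 (π/2) := ⟨hx.1, lt_of_le_of_lt hx.2 hα.2⟩
    have := sin_mem_Ico hx'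
    exact ⟨by linarith [this.1], this.2⟩
  have key := intervalIntegral.integral_comp_smul_deriv' (a := 0) (b := α)
    (f := Real.sin) (f' := Real.cos) (g := jf m)
    (fun x _ => Real.hasDerivAt_sin x) Real.continuousOn_cos
    ((jf_contOn habs).mono himg)
  rw [Real.sin_zero] at key
  rw [jF, ← key, jG]
  apply intervalIntegral.integral_congr
  intro x hx
  rw [uIcc_of_le hα.1] at hx
  have hx' : x ∈ Ico 0 (π/2) := ⟨hx.1, lt_of_le_of_lt hx.2 hα.2⟩
  have hcos : 0 < Real.cos x := Real.cos_pos_of_mem_Ioo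
    ⟨by linarith [hx'.1, Real.pi_pos], hx'.2⟩
  have hsin := sin_mem_Ico hx'
  have h1 : Real.sqrt (1 - Real.sin x^2) = Real.cos x := by
    rw [show 1 - Real.sin x^2 = Real.cos x^2 by
      have := Real.sin_sq_add_cos_sq x; linarith]
    exact Real.sqrt_sq hcos.le
  have h2 : (0:ℝ) < Real.sqrt (1 - m^2 * Real.sin x^2) :=
    Real.sqrt_pos.2 (msq_pos habs ⟨by linarith [hsin.1], hsin.2⟩)
  simp only [smul_eq_mul, Function.comp]
  unfold jf
  rw [h1, eq_comm, one_div, one_div, mul_inv, ← mul_assoc,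
    mul_inv_cancel₀ (ne_of_gt hcos), one_mul]

lemma jG_le_ellK {m : ℝ} (hm2 : m^2 < 1) {α : ℝ} (hα : α ∈ Ico 0 (π/2)) :
    jG m α ≤ ellK m := by
  have hint : ∀ a b : ℝ, IntervalIntegrable (fun θ => 1 / Real.sqrt (1 - m^2 * Real.sin θ^2))
      volume a b := fun a b => (jG_integrand_cont hm2).intervalIntegrable a b
  have hadd := intervalIntegral.integral_add_adjacent_intervals (a := 0) (b := α) (c := π/2)
    (hint 0 α) (hint α (π/2))
  have hnn : 0 ≤ ∫ θ in α..(π/2), 1 / Real.sqrt (1 - m^2 * Real.sin θ^2) := by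
    apply intervalIntegral.integral_nonneg hα.2.le
    intro x _
    positivity
  rw [← jG_pi_div_two]
  unfold jG
  rw [← hadd]
  linarith [hnn]

lemma exists_alpha {m u : ℝ} (hm2 : m^2 < 1) (hu : u < ellK m) :
    ∃ α, α ∈ Ico 0 (π/2) ∧ u < jG m α := by
  have hpi : (0:ℝ) < π/2 := by positivity
  have hcont : Continuous (jG m) :=
    intervalIntegral.continuous_primitive
      (fun a b => (jG_integrand_cont hm2).intervalIntegrable a b) 0
  have h1 : ∀ᶠ α in 𝓝[<] (π/2), u < jG m α := by
    apply Filter.Eventually.filter_mono nhdsWithin_le_nhds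
    exact hcont.continuousAt.eventually (eventually_gt_nhds (by rw [jG_pi_div_two]; exact hu))
  have h2 : ∀ᶠ α in 𝓝[<] (π/2), α ∈ Ioo 0 (π/2) :=
    eventually_of_mem (Ioo_mem_nhdsLT_of_mem ⟨hpi, le_refl _⟩) (fun x hx => hx)
  obtain ⟨α, hα1, hα2⟩ := (h1.and h2).exists
  exact ⟨α, ⟨hα2.1.le, hα2.2⟩, hα1⟩

lemma jF_le {m x y : ℝ} (habs : |m| ≤ 1) (hx : 0 ≤ x) (hxy : x ≤ y) (hy : y < 1) :
    jF m x ≤ jF m y := by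
  have hsub : ∀ a b : ℝ, 0 ≤ a → b < 1 → a ≤ b → uIcc a b ⊆ Ioo (-1:ℝ) 1 := by
    intro a b ha hb hab t ht
    rw [uIcc_of_le hab] at ht
    exact ⟨by linarith [ht.1], lt_of_le_of_lt ht.2 hb⟩
  have h1 : IntervalIntegrable (jf m) volume 0 x :=
    jf_intble habs (hsub 0 x le_rfl (lt_of_le_of_lt hxy hy) hx)
  have h2 : IntervalIntegrable (jf m) volume x y :=
    jf_intble habs (hsub x y hx hy hxy)
  have hadd := intervalIntegral.integral_add_adjacent_intervals h1 h2
  have hnn : 0 ≤ ∫ t in x..y, jf m t := by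
    apply intervalIntegral.integral_nonneg hxy
    intro t ht
    exact (jf_pos habs ⟨by linarith [ht.1], lt_of_le_of_lt ht.2 hy⟩).le
  rw [jF, jF, ← hadd]
  linarith

lemma jF_lt {m x y : ℝ} (habs : |m| ≤ 1) (hx : 0 ≤ x) (hxy : x < y) (hy : y < 1) :
    jF m x < jF m y := by
  have hsub : uIcc x y ⊆ Ioo (-1:ℝ) 1 := by
    intro t ht
    rw [uIcc_of_le hxy.le] at ht
    exact ⟨by linarith [ht.1], lt_of_le_of_lt ht.2 hy⟩
  have h1 : IntervalIntegrable (jf m) volume 0 x :=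
    jf_intble habs (by
      intro t ht
      rw [uIcc_of_le hx] at ht
      exact ⟨by linarith [ht.1], lt_of_le_of_lt ht.2 (lt_of_lt_of_le hxy hy.le)⟩)
  have h2 : IntervalIntegrable (jf m) volume x y := jf_intble habs hsub
  have hadd := intervalIntegral.integral_add_adjacent_intervals h1 h2
  have hpos : 0 < ∫ t in x..y, jf m t := by
    apply intervalIntegral.intervalIntegral_pos_of_pos_on h2
    · intro t ht
      exact jf_pos habs ⟨by linarith [hx, ht.1], lt_of_lt_of_le ht.2 hy.le⟩
    · exact hxy
  rw [jF, jF, ← hadd]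
  linarith

lemma jac_cn_pos {s c d : ℝ → ℝ} {m : ℝ} (hJ : JacODE s c d m)
    (hm0 : 0 < m) (hm1 : m < 1) {u : ℝ} (hu0 : 0 ≤ u) (hu : u < ellK m) :
    ∀ v ∈ Icc 0 u, 0 < c v := by
  by_contra hcon
  push_neg at hcon
  obtain ⟨v₀, hv₀, hcv₀⟩ := hcon
  have habs : |m| ≤ 1 := by rw [abs_of_pos hm0]; linarith
  have hm2 : m^2 < 1 := by nlinarith
  have ccont : Continuous c := continuous_iff_continuousAt.2
    (fun x => ((hJ.2.2.2 x).2.1).continuousAt)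
  have scont : Continuous s := continuous_iff_continuousAt.2
    (fun x => ((hJ.2.2.2 x).1).continuousAt)
  set E : Set ℝ := Icc 0 u ∩ c ⁻¹' (Iic 0) with hE
  have hEne : E.Nonempty := ⟨v₀, hv₀, hcv₀⟩
  have hEclosed : IsClosed E := isClosed_Icc.inter (isClosed_Iic.preimage ccont)
  have hbdd : BddBelow E := ⟨0, fun x hx => hx.1.1⟩
  set z := sInf E with hz
  have hzE : z ∈ E := hEclosed.csInf_mem hEne hbdd
  have hz_mem : z ∈ Icc 0 u := hzE.1
  have hcz_le : c z ≤ 0 := hzE.2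
  have hz0 : 0 < z := by
    rcases lt_or_eq_of_le hz_mem.1 with h | h
    · exact h
    · exfalso; rw [← h, hJ.2.1] at hcz_le; linarith
  have hlt : ∀ v, 0 ≤ v → v < z → 0 < c v := by
    intro v h0 hvz
    by_contra hneg
    push_neg at hneg
    have hvE : v ∈ E := ⟨⟨h0, hvz.le.trans hz_mem.2⟩, hneg⟩
    exact absurd (csInf_le hbdd hvE) (not_le.2 hvz)
  have hcz : c z = 0 := by
    by_contra h
    have hczlt : c z < 0 := lt_of_le_of_ne hcz_le h
    have hIVT := intermediate_value_Icc' hz_mem.1 (ccont.continuousOn (s := Icc 0 z))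
    have h0mem : (0:ℝ) ∈ Icc (c z) (c 0) := by rw [hJ.2.1]; exact ⟨hczlt.le, by norm_num⟩
    obtain ⟨w, hw, hw0⟩ := hIVT h0mem
    have hwz : w < z := by
      rcases lt_or_eq_of_le hw.2 with h' | h'
      · exact h'
      · exfalso; rw [h'] at hw0; exact h hw0
    have := hlt w hw.1 hwz
    rw [hw0] at this
    exact lt_irrefl 0 this
  have hcpos_up : ∀ w', 0 ≤ w' → w' < z → (∀ x ∈ Icc 0 w', 0 < c x) :=
    fun w' _ hw' x hx => hlt x hx.1 (lt_of_le_of_lt hx.2 hw')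
  have hjFs : ∀ v, 0 ≤ v → v < z → jF m (s v) = v := fun v h0 hvz =>
    jac_jF_eq hJ hm0 hm1 (hcpos_up v h0 hvz) v ⟨h0, le_refl v⟩
  have hs_mem : ∀ v, 0 ≤ v → v < z → s v ∈ Ico 0 1 := fun v h0 hvz =>
    jac_s_mem hJ hm0 hm1 (hcpos_up v h0 hvz) v ⟨h0, le_refl v⟩
  have hsz_sq : s z^2 = 1 := by
    have h1 := jac_sq1 hJ z
    rw [hcz] at h1
    nlinarith
  have hsz_nonneg : 0 ≤ s z := by
    have htend : Tendsto s (𝓝[<] z) (𝓝 (s z)) :=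
      (scont.continuousAt).continuousWithinAt.tendsto
    apply ge_of_tendsto htend
    apply eventually_of_mem (Ioo_mem_nhdsLT_of_mem ⟨hz0, le_refl z⟩)
    exact fun x hx => (hs_mem x hx.1.le hx.2).1
  have hsz : s z = 1 := by
    have hfact : (s z - 1) * (s z + 1) = 0 := by nlinarith
    rcases mul_eq_zero.1 hfact with h | h
    · linarith
    · linarith
  obtain ⟨α, hα, hGα⟩ := exists_alpha hm2 hu
  have hσ := sin_mem_Ico hα
  have hjFσ : u < jF m (Real.sin α) := by rw [jF_sin habs hα]; exact hGα
  have hev1 : ∀ᶠ v in 𝓝[<] z, Real.sin α < s v :=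
    Filter.Eventually.filter_mono nhdsWithin_le_nhds
      (scont.continuousAt.eventually (eventually_gt_nhds (hsz ▸ hσ.2)))
  have hev2 : ∀ᶠ v in 𝓝[<] z, v ∈ Ioo 0 z :=
    eventually_of_mem (Ioo_mem_nhdsLT_of_mem ⟨hz0, le_refl z⟩) (fun x hx => hx)
  obtain ⟨v, hv1, hv2⟩ := (hev1.and hev2).exists
  have hle : jF m (Real.sin α) ≤ jF m (s v) :=
    jF_le habs hσ.1 hv1.le (hs_mem v hv2.1.le hv2.2).2
  rw [hjFs v hv2.1.le hv2.2] at hle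
  have : z ≤ u := hz_mem.2
  linarith [hv2.2]

lemma ball_mem_Ioo01 {k : ℝ} (hk0 : 0 < k) (hk1 : k < 1) {m : ℝ}
    (hm : m ∈ Metric.ball k (min (k/2) ((1-k)/2))) : k/2 < m ∧ m < (1+k)/2 := by
  rw [Metric.mem_ball, Real.dist_eq, abs_lt] at hm
  constructor
  · have := hm.1
    have h2 : -(k/2) ≤ -(min (k/2) ((1-k)/2)) := by
      simp only [neg_le_neg_iff]
      exact min_le_left _ _
    linarith [min_le_left (k/2) ((1-k)/2)]
  · have := hm.2
    linarith [min_le_right (k/2) ((1-k)/2)]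

lemma jf_hasDerivAt_m {t m : ℝ} (ht : t ∈ Ioo (-1:ℝ) 1) (hm2 : m^2 * t^2 < 1) :
    HasDerivAt (fun m => jf m t) (jg m t) m := by
  have ha : 0 < Real.sqrt (1 - t^2) := Real.sqrt_pos.2 (sq_lt_one_of_abs ht)
  have hY : 0 < 1 - m^2 * t^2 := by linarith
  have hYd : HasDerivAt (fun m : ℝ => 1 - m^2 * t^2) (-(2*m*t^2)) m := by
    have h1 : HasDerivAt (fun m : ℝ => m^2) (2*m) m := by
      simpa using hasDerivAt_pow 2 m
    have h2 := (h1.mul_const (t^2)).const_sub 1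
    convert h2 using 1 <;> ring
  have hsq : HasDerivAt (fun m : ℝ => Real.sqrt (1 - m^2 * t^2))
      (-(2*m*t^2) / (2 * Real.sqrt (1 - m^2 * t^2))) m := hYd.sqrt (ne_of_gt hY)
  have hden : HasDerivAt (fun m : ℝ => Real.sqrt (1 - t^2) * Real.sqrt (1 - m^2 * t^2))
      (Real.sqrt (1 - t^2) * (-(2*m*t^2) / (2 * Real.sqrt (1 - m^2 * t^2)))) m :=
    hsq.const_mul _
  have hYs : 0 < Real.sqrt (1 - m^2 * t^2) := Real.sqrt_pos.2 hY
  have hne : Real.sqrt (1 - t^2) * Real.sqrt (1 - m^2 * t^2) ≠ 0 :=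
    ne_of_gt (mul_pos ha hYs)
  have hinv := hden.inv hne
  have heq : ∀ x : ℝ, jf x t = (Real.sqrt (1 - t^2) * Real.sqrt (1 - x^2 * t^2))⁻¹ := by
    intro x; rw [jf, one_div]
  rw [show (fun m => jf m t) = fun m => (Real.sqrt (1 - t^2) * Real.sqrt (1 - m^2 * t^2))⁻¹
    from funext heq]
  refine hinv.congr_deriv ?_
  rw [jg]
  have hYsq : Real.sqrt (1 - m^2 * t^2) ^ 2 = 1 - m^2 * t^2 := Real.sq_sqrt hY.le
  field_simp

set_option maxHeartbeats 1000000 in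
lemma jF_hasDerivAt_m {k x : ℝ} (hk0 : 0 < k) (hk1 : k < 1) (hx : x ∈ Ico 0 1) :
    HasDerivAt (fun m => jF m x) (∫ t in (0:ℝ)..x, jg k t) k := by
  set ε := min (k/2) ((1-k)/2) with hε
  have hεpos : 0 < ε := lt_min (by linarith) (by linarith)
  have hsub : Set.uIoc (0:ℝ) x ⊆ Ioo (-1:ℝ) 1 := by
    rw [uIoc_of_le hx.1]
    exact fun t ht => ⟨by linarith [ht.1], lt_of_le_of_lt ht.2 hx.2⟩
  set m₁ := (1+k)/2 with hm₁
  have hm₁1 : m₁ < 1 := by rw [hm₁]; linarith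
  have hm₁0 : 0 < m₁ := by rw [hm₁]; linarith
  set C := 1 / (Real.sqrt (1 - x^2) * Real.sqrt (1 - m₁^2)^3) with hC
  have hxs : 0 < Real.sqrt (1 - x^2) := Real.sqrt_pos.2 (by nlinarith [hx.1, hx.2])
  have hms : 0 < Real.sqrt (1 - m₁^2) := Real.sqrt_pos.2 (by nlinarith)
  have key := intervalIntegral.hasDerivAt_integral_of_dominated_loc_of_deriv_le
    (𝕜 := ℝ) (μ := volume) (a := 0) (b := x) (F := fun m t => jf m t)
    (F' := fun m t => jg m t) (x₀ := k) (bound := fun _ => C) (s := Metric.ball k ε) (Metric.ball_mem_nhds k hεpos)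
    ?_ ?_ ?_ ?_ ?_ ?_
  · exact key.2
  · -- measurability of jf m near k
    apply Filter.Eventually.of_forall
    intro m
    apply Measurable.aestronglyMeasurable
    show Measurable (fun t => 1 / (Real.sqrt (1 - t^2) * Real.sqrt (1 - m^2 * t^2)))
    apply Measurable.div measurable_const
    exact ((measurable_const.sub ((measurable_id.pow_const 2))).sqrt.mul
      ((measurable_const.sub (measurable_const.mul (measurable_id.pow_const 2))).sqrt))
  · exact jf_intble (by rw [abs_of_pos hk0]; linarith) (by
      intro t ht
      rw [uIcc_of_le hx.1] at ht
      exact ⟨by linarith [ht.1], lt_of_le_of_lt ht.2 hx.2⟩)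
  · exact ((jg_contOn (m := k) (by rw [abs_of_pos hk0]; linarith)).mono hsub).aestronglyMeasurable
      (by rw [uIoc_of_le hx.1]; exact measurableSet_Ioc)
  · -- bound
    apply Filter.Eventually.of_forall
    intro t ht m hm
    obtain ⟨hml, hmr⟩ := ball_mem_Ioo01 hk0 hk1 hm
    have ht' := hsub ht
    have hm0' : 0 < m := lt_trans (by linarith) hml
    have htIoc : t ∈ Ioc 0 x := by rwa [uIoc_of_le hx.1] at ht
    have h1 : Real.sqrt (1 - x^2) ≤ Real.sqrt (1 - t^2) :=
      Real.sqrt_le_sqrt (by nlinarith [htIoc.1, htIoc.2, hx.1])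
    have hmm₁ : m < m₁ := by rw [hm₁]; exact hmr
    have htsq : t^2 ≤ 1 := by nlinarith [ht'.1, ht'.2]
    have hmsq : m^2 ≤ m₁^2 := by nlinarith
    have h2 : Real.sqrt (1 - m₁^2) ≤ Real.sqrt (1 - m^2 * t^2) := by
      apply Real.sqrt_le_sqrt
      nlinarith [sq_nonneg m, sq_nonneg t]
    have hts : 0 < Real.sqrt (1 - t^2) := Real.sqrt_pos.2 (sq_lt_one_of_abs ht')
    have hYs : 0 < Real.sqrt (1 - m^2 * t^2) :=
      lt_of_lt_of_le hms h2
    rw [Real.norm_eq_abs, abs_of_nonneg (le_of_lt (jg_pos hm0' (by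
        rw [abs_of_pos hm0']; linarith) htIoc.1 ht'))]
    rw [jg, hC]
    apply div_le_div₀ (by positivity) ?_ (by positivity) ?_
    · nlinarith [htIoc.2, hx.2, htIoc.1, htsq, hm0', hmm₁, hm₁1]
    · have h3 : Real.sqrt (1 - m₁^2)^3 ≤ Real.sqrt (1 - m^2*t^2)^3 :=
        pow_le_pow_left₀ hms.le h2 3
      exact mul_le_mul h1 h3 (pow_pos hms 3).le hts.le
  · exact intervalIntegrable_const
  · -- differentiability
    apply Filter.Eventually.of_forall
    intro t ht m hm
    have ht' := hsub ht
    obtain ⟨hml, hmr⟩ := ball_mem_Ioo01 hk0 hk1 hm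
    have hm0' : 0 < m := lt_trans (by linarith) hml
    apply jf_hasDerivAt_m ht'
    have hmlt : m < 1 := by linarith
    have h1 : t^2 ≤ 1 := by nlinarith [ht'.1, ht'.2]
    have h2 : m^2 < 1 := by nlinarith
    nlinarith [mul_le_mul_of_nonneg_left h1 (sq_nonneg m)]

lemma jG_contAt_m {k α : ℝ} (hk0 : 0 < k) (hk1 : k < 1) (hα : α ∈ Ico 0 (π/2)) :
    ContinuousAt (fun m => jG m α) k := by
  set ε := min (k/2) ((1-k)/2) with hε
  have hεpos : 0 < ε := lt_min (by linarith) (by linarith)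
  set m₁ := (1+k)/2 with hm₁
  have hms : 0 < Real.sqrt (1 - m₁^2) := Real.sqrt_pos.2 (by nlinarith)
  apply intervalIntegral.continuousAt_of_dominated_interval
    (bound := fun _ => 1 / Real.sqrt (1 - m₁^2))
  · apply Filter.Eventually.of_forall
    intro m
    rcases lt_or_ge (m^2) 1 with h | h
    · exact (jG_integrand_cont h).aestronglyMeasurable
    · -- measurable anyway: measurable function
      apply Measurable.aestronglyMeasurable
      apply Measurable.div measurable_const
      exact (measurable_const.sub ((measurable_const.mul
        ((Real.measurable_sin.pow_const 2)))) ).sqrt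
  · -- bound, eventually in m
    have hball : Metric.ball k ε ∈ 𝓝 k := Metric.ball_mem_nhds k hεpos
    apply eventually_of_mem hball
    intro m hm
    apply ae_of_all
    intro θ _
    obtain ⟨hml, hmr⟩ := ball_mem_Ioo01 hk0 hk1 hm
    have h2 : Real.sqrt (1 - m₁^2) ≤ Real.sqrt (1 - m^2 * Real.sin θ^2) := by
      apply Real.sqrt_le_sqrt
      nlinarith [Real.sin_sq_le_one θ, sq_nonneg (Real.sin θ), sq_nonneg m]
    rw [Real.norm_eq_abs, abs_of_nonneg (by positivity)]
    apply div_le_div₀ (by norm_num) (le_refl _) hms h2 |>.trans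
    exact le_refl _
  · exact intervalIntegrable_const
  · apply ae_of_all
    intro θ _
    apply ContinuousAt.div continuousAt_const
    · exact (Real.continuous_sqrt.comp (by continuity)).continuousAt
    · have : 0 < 1 - k^2 * Real.sin θ^2 := by
        nlinarith [Real.sin_sq_le_one θ, sq_nonneg (Real.sin θ)]
      exact ne_of_gt (Real.sqrt_pos.2 this)

lemma quot_identity (S C D M : ℝ) (hC : C^2 = 1 - S^2) (hD : D^2 = 1 - M^2*S^2)
    (hM : M ≠ 0) (hM2 : (1:ℝ) - M^2 ≠ 0) (hDne : D ≠ 0) :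
    1/(M*(1-M^2)) * (D^2 - (1-M^2) -
        ((M^2*(C*D)*C + M^2*S*(-(S*D)))*D - M^2*S*C*(-(M^2*S*C)))/D^2)
      = M * S^2 / D^2 := by
  have hD2 : (1:ℝ) - M^2*S^2 ≠ 0 := hD ▸ pow_ne_zero 2 hDne
  have e1 : ((M^2*(C*D)*C + M^2*S*(-(S*D)))*D - M^2*S*C*(-(M^2*S*C)))
      = M^2*(D^2)*(C^2) - M^2*(D^2)*(S^2) + M^2*M^2*(S^2)*(C^2) := by ring
  rw [e1, hC, hD]
  field_simp
  try ring

set_option maxHeartbeats 1000000 in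
lemma jac_WZ {s c d : ℝ → ℝ} {m : ℝ} (hJ : JacODE s c d m) (hm0 : 0 < m) (hm1 : m < 1)
    {u : ℝ} (hu0 : 0 ≤ u) (hc : ∀ v ∈ Icc 0 u, 0 < c v) :
    (∫ t in (0:ℝ)..(s u), jg m t)
      = 1/(m*(1-m^2)) * ((∫ v in (0:ℝ)..u, d v^2) - (1-m^2)*u - m^2 * s u * c u / d u) := by
  have hm2 : m^2 < 1 := by nlinarith
  have habs : |m| ≤ 1 := by rw [abs_of_pos hm0]; linarith
  have hdpos := jac_d_pos hJ hm2
  have hdcont : Continuous d := continuous_iff_continuousAt.2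
    (fun x => ((hJ.2.2.2 x).2.2).continuousAt)
  set W : ℝ → ℝ := fun v => ∫ t in (0:ℝ)..(s v), jg m t with hW
  set Z : ℝ → ℝ := fun v =>
    1/(m*(1-m^2)) * ((∫ w in (0:ℝ)..v, d w^2) - (1-m^2)*v - m^2 * s v * c v / d v) with hZ
  have hWd : ∀ x ∈ Icc 0 u, HasDerivAt W (m * s x^2 / d x^2) x := by
    intro x hx
    have hsx := jac_s_mem hJ hm0 hm1 hc x hx
    have hsx' := jac_s_mem' hJ hm0 hm1 hc x hx
    have hA : HasDerivAt (fun y => ∫ t in (0:ℝ)..y, jg m t) (jg m (s x)) (s x) := by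
      apply intervalIntegral.integral_hasDerivAt_right
      · apply ((jg_contOn habs).mono ?_).intervalIntegrable
        intro t ht
        rw [uIcc_of_le hsx.1] at ht
        exact ⟨by linarith [ht.1], lt_of_le_of_lt ht.2 hsx.2⟩
      · exact ⟨Ioo (-1:ℝ) 1, Ioo_mem_nhds hsx'.1 hsx'.2,
          (jg_contOn habs).aestronglyMeasurable measurableSet_Ioo⟩
      · exact (jg_contOn habs).continuousAt (Ioo_mem_nhds hsx'.1 hsx'.2)
    have hB := hA.comp x (hJ.2.2.2 x).1
    have hcx := hc x hx
    have hdx := hdpos x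
    have hval : jg m (s x) * (c x * d x) = m * s x^2 / d x^2 := by
      rw [jg, ← jac_c_eq hJ hm0 hm1 hc x hx, ← jac_d_eq hJ hm0 hm1 hc x hx]
      field_simp
      try ring
    rwa [hval] at hB
  have hZd : ∀ x ∈ Icc 0 u, HasDerivAt Z (m * s x^2 / d x^2) x := by
    intro x hx
    have hcx := hc x hx
    have hdx := hdpos x
    have hE : HasDerivAt (fun v => ∫ w in (0:ℝ)..v, d w^2) (d x^2) x := by
      apply intervalIntegral.integral_hasDerivAt_right
      · exact ((hdcont.pow 2).continuousOn).intervalIntegrable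
      · exact ((hdcont.pow 2).stronglyMeasurable).stronglyMeasurableAtFilter
      · exact (hdcont.pow 2).continuousAt
    have hlin : HasDerivAt (fun v : ℝ => (1-m^2)*v) (1-m^2) x := by
      simpa using (hasDerivAt_id x).const_mul (1-m^2)
    have hnum : HasDerivAt (fun v => m^2 * s v * c v)
        (m^2 * (c x * d x) * c x + m^2 * s x * (-(s x * d x))) x := by
      have := (((hJ.2.2.2 x).1.const_mul (m^2)).mul (hJ.2.2.2 x).2.1)
      exact this
      try ring
    have hquot := hnum.div (hJ.2.2.2 x).2.2 (ne_of_gt hdx)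
    have hcomb := ((hE.sub hlin).sub hquot).const_mul (1/(m*(1-m^2)))
    have hc2 : c x^2 = 1 - s x^2 := by have := jac_sq1 hJ x; linarith
    have hd2 : d x^2 = 1 - m^2 * s x^2 := by have := jac_sq2 hJ x; linarith
    have hval := quot_identity (s x) (c x) (d x) m hc2 hd2 (ne_of_gt hm0)
      (by nlinarith) (ne_of_gt hdx)
    rw [hval] at hcomb
    exact hcomb
  have key := eq_of_has_deriv_right_eq (a := 0) (b := u)
    (f' := fun x => m * s x^2 / d x^2) (f := W) (g := Z)
    (fun x hx => (hWd x ⟨hx.1, hx.2.le⟩).hasDerivWithinAt)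
    (fun x hx => (hZd x ⟨hx.1, hx.2.le⟩).hasDerivWithinAt)
    (fun x hx => (hWd x hx).continuousAt.continuousWithinAt)
    (fun x hx => (hZd x hx).continuousAt.continuousWithinAt)
    (by simp [hW, hZ, hJ.1, hJ.2.1])
  have := key u ⟨hu0, le_refl u⟩
  simpa [hW, hZ] using this

lemma key_props (sn cn dn : ℝ → ℝ → ℝ)
    (hjac : ∀ m ∈ Set.Ioo (0:ℝ) 1,
      sn 0 m = 0 ∧ cn 0 m = 1 ∧ dn 0 m = 1 ∧
      ∀ u : ℝ, HasDerivAt (fun v => sn v m) (cn u m * dn u m) u ∧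
        HasDerivAt (fun v => cn v m) (-(sn u m * dn u m)) u ∧
        HasDerivAt (fun v => dn v m) (-(m^2 * sn u m * cn u m)) u)
    {m u α : ℝ} (hm : m ∈ Set.Ioo (0:ℝ) 1) (hu0 : 0 < u) (hα : α ∈ Ico 0 (π/2))
    (hGα : u < jG m α) :
    0 < sn u m ∧ sn u m < Real.sin α ∧ cn u m = Real.sqrt (1 - sn u m^2) ∧
      dn u m = Real.sqrt (1 - m^2 * sn u m^2) ∧ jF m (sn u m) = u ∧ 0 < cn u m := by
  obtain ⟨hm0, hm1⟩ := hm
  have hJm : JacODE (fun v => sn v m) (fun v => cn v m) (fun v => dn v m) m :=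
    hjac m ⟨hm0, hm1⟩
  have hm2 : m^2 < 1 := by nlinarith
  have habs : |m| ≤ 1 := by rw [abs_of_pos hm0]; linarith
  have hellK : u < ellK m := lt_of_lt_of_le hGα (jG_le_ellK hm2 hα)
  have hcpos : ∀ v ∈ Icc 0 u, 0 < cn v m := jac_cn_pos hJm hm0 hm1 hu0.le hellK
  have huIcc : u ∈ Icc (0:ℝ) u := ⟨hu0.le, le_refl u⟩
  have hcpos' : ∀ v ∈ Icc 0 u, 0 < (fun v => cn v m) v := hcpos
  have hsmem := jac_s_mem hJm hm0 hm1 hcpos' u huIcc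
  have hspos : 0 < sn u m := by
    have h := jac_sMono hJm hm0 hm1 hcpos' (left_mem_Icc.2 hu0.le) huIcc hu0
    simpa [hJm.1] using h
  have hjF : jF m (sn u m) = u := jac_jF_eq hJm hm0 hm1 hcpos' u huIcc
  have hσ := sin_mem_Ico hα
  have hslt : sn u m < Real.sin α := by
    by_contra hcon
    push_neg at hcon
    have h1 : jF m (Real.sin α) ≤ jF m (sn u m) := jF_le habs hσ.1 hcon hsmem.2
    rw [jF_sin habs hα] at h1
    rw [hjF] at h1
    linarith
  exact ⟨hspos, hslt, jac_c_eq hJm hm0 hm1 hcpos' u huIcc,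
    jac_d_eq hJm hm0 hm1 hcpos' u huIcc, hjF, hcpos u huIcc⟩

set_option maxHeartbeats 2000000 in
theorem cn_strictMono_in_modulus (sn cn dn : ℝ → ℝ → ℝ)
    (hjac : ∀ m ∈ Set.Ioo (0:ℝ) 1,
      sn 0 m = 0 ∧ cn 0 m = 1 ∧ dn 0 m = 1 ∧
      ∀ u : ℝ, HasDerivAt (fun v => sn v m) (cn u m * dn u m) u ∧
        HasDerivAt (fun v => cn v m) (-(sn u m * dn u m)) u ∧
        HasDerivAt (fun v => dn v m) (-(m^2 * sn u m * cn u m)) u)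
    (k : ℝ) (hk0 : 0 < k) (hk1 : k < 1)
    (u : ℝ) (hu0 : 0 < u) (hu : u < ellK k) :
    HasDerivAt (fun m => cn u m)
      (sn u k * dn u k / (k * (1 - k^2)) *
        ((∫ v in (0:ℝ)..u, (dn v k)^2) - (1 - k^2) * u
          - k^2 * sn u k * cn u k / dn u k)) k ∧
    0 < sn u k * dn u k / (k * (1 - k^2)) *
        ((∫ v in (0:ℝ)..u, (dn v k)^2) - (1 - k^2) * u
          - k^2 * sn u k * cn u k / dn u k) := by
  have hk2 : k^2 < 1 := by nlinarith
  have habs : |k| ≤ 1 := by rw [abs_of_pos hk0]; linarith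
  have hJk : JacODE (fun v => sn v k) (fun v => cn v k) (fun v => dn v k) k :=
    hjac k ⟨hk0, hk1⟩
  -- choose α
  obtain ⟨α, hα, hGαk⟩ := exists_alpha hk2 hu
  have hσ := sin_mem_Ico hα
  -- eventually properties
  have hGev : ∀ᶠ m in 𝓝 k, u < jG m α :=
    (jG_contAt_m hk0 hk1 hα).eventually (eventually_gt_nhds hGαk)
  have hIoo : ∀ᶠ m in 𝓝 k, m ∈ Set.Ioo (0:ℝ) 1 :=
    eventually_of_mem (Ioo_mem_nhds hk0 hk1) (fun x hx => hx)
  have hprops : ∀ᶠ m in 𝓝 k, (m ∈ Set.Ioo (0:ℝ) 1 ∧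
      0 < sn u m ∧ sn u m < Real.sin α ∧ cn u m = Real.sqrt (1 - sn u m^2) ∧
      dn u m = Real.sqrt (1 - m^2 * sn u m^2) ∧ jF m (sn u m) = u ∧ 0 < cn u m) := by
    filter_upwards [hIoo, hGev] with m h1 h2
    exact ⟨h1, key_props sn cn dn hjac h1 hu0 hα h2⟩
  have hkprops := key_props sn cn dn hjac ⟨hk0, hk1⟩ hu0 hα hGαk
  obtain ⟨hφk0, hφkσ, hcnk, hdnk, hjFk, hcnk0⟩ := hkprops
  have hφk1 : sn u k < 1 := lt_trans hφkσ hσ.2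
  have hdnk0 : 0 < dn u k := jac_d_pos hJk hk2 u
  -- continuity of m ↦ sn u m at k
  have hφcont : Tendsto (fun m => sn u m) (𝓝 k) (𝓝 (sn u k)) := by
    rw [Metric.tendsto_nhds]
    intro ε hε
    set xb := min (sn u k + ε/2) ((sn u k + 1)/2) with hxb
    have hxb0 : 0 ≤ xb := le_min (by linarith) (by linarith)
    have hxb1 : xb < 1 := lt_of_le_of_lt (min_le_right _ _) (by linarith)
    have hxbgt : sn u k < xb := lt_min (by linarith) (by linarith)
    have hb : u < jF k xb := by
      rw [← hjFk]; exact jF_lt habs hφk0.le hxbgt hxb1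
    have hevb : ∀ᶠ m in 𝓝 k, u < jF m xb :=
      (jF_hasDerivAt_m hk0 hk1 ⟨hxb0, hxb1⟩).continuousAt.eventually (eventually_gt_nhds hb)
    rcases le_or_gt (sn u k) (ε/2) with hsmall | hbig
    · filter_upwards [hprops, hevb] with m hm hmb
      obtain ⟨hmIoo, hsm0, hsmσ, _, _, hjFm, _⟩ := hm
      have habsm : |m| ≤ 1 := by rw [abs_of_pos hmIoo.1]; linarith [hmIoo.2]
      have hsm1 : sn u m < 1 := lt_trans hsmσ hσ.2
      have hltb : sn u m < xb := by
        by_contra hcon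
        push_neg at hcon
        have := jF_le habsm hxb0 hcon hsm1
        rw [hjFm] at this
        linarith
      rw [Real.dist_eq, abs_lt]
      constructor
      · linarith
      · have : xb ≤ sn u k + ε/2 := min_le_left _ _
        linarith
    · obtain ⟨xa, hxa⟩ : ∃ t : ℝ, t = sn u k - ε/2 := ⟨_, rfl⟩
      have hxa0 : 0 ≤ xa := by rw [hxa]; linarith
      have hxa1 : xa < 1 := by rw [hxa]; linarith
      have ha : jF k xa < u := by
        rw [← hjFk]; exact jF_lt habs hxa0 (by rw [hxa]; linarith) hφk1
      have heva : ∀ᶠ m in 𝓝 k, jF m xa < u :=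
        (jF_hasDerivAt_m hk0 hk1 ⟨hxa0, hxa1⟩).continuousAt.eventually
          (eventually_lt_nhds ha)
      filter_upwards [hprops, hevb, heva] with m hm hmb hma
      obtain ⟨hmIoo, hsm0, hsmσ, _, _, hjFm, _⟩ := hm
      have habsm : |m| ≤ 1 := by rw [abs_of_pos hmIoo.1]; linarith [hmIoo.2]
      have hsm1 : sn u m < 1 := lt_trans hsmσ hσ.2
      have hltb : sn u m < xb := by
        by_contra hcon
        push_neg at hcon
        have := jF_le habsm hxb0 hcon hsm1
        rw [hjFm] at this
        linarith
      have hgta : xa < sn u m := by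
        by_contra hcon
        push_neg at hcon
        have := jF_le habsm hsm0.le hcon hxa1
        rw [hjFm] at this
        linarith
      rw [Real.dist_eq, abs_lt]
      have hminle : xb ≤ sn u k + ε/2 := min_le_left _ _
      constructor
      · rw [hxa] at hgta; linarith
      · linarith
  -- derivative of m ↦ jF m (sn u k) in the modulus
  have hFm : HasDerivAt (fun m => jF m (sn u k)) (∫ t in (0:ℝ)..(sn u k), jg k t) k :=
    jF_hasDerivAt_m hk0 hk1 ⟨hφk0.le, hφk1⟩
  set Fm := ∫ t in (0:ℝ)..(sn u k), jg k t with hFmdef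
  have hφkIoo : sn u k ∈ Ioo (-1:ℝ) 1 := ⟨by linarith, hφk1⟩
  have hjfφ : jf k (sn u k) = 1/(cn u k * dn u k) := by rw [jf, ← hcnk, ← hdnk]
  have hjfpos : 0 < jf k (sn u k) := jf_pos habs hφkIoo
  set q : ℝ → ℝ := fun m => if sn u m = sn u k then jf k (sn u k)
    else (jF m (sn u m) - jF m (sn u k))/(sn u m - sn u k) with hqdef
  have hqt : Tendsto q (𝓝 k) (𝓝 (jf k (sn u k))) := by
    rw [Metric.tendsto_nhds]
    intro ε hε
    obtain ⟨δ, hδ0, hδ⟩ := Metric.continuousAt_iff.1 (jf_contAt2 habs hφkIoo) (ε/2) (by linarith)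
    obtain ⟨δ', hδ'0, hδ'min, hδ'1⟩ : ∃ δ', 0 < δ' ∧ δ' ≤ δ ∧ δ' ≤ (1 - sn u k)/2 :=
      ⟨min δ ((1 - sn u k)/2), lt_min hδ0 (by linarith), min_le_left _ _, min_le_right _ _⟩
    have hφev : ∀ᶠ m in 𝓝 k, |sn u m - sn u k| < δ' := by
      have := Metric.tendsto_nhds.1 hφcont δ' hδ'0
      simpa [Real.dist_eq] using this
    have hkev : ∀ᶠ m in 𝓝 k, |m - k| < δ := by
      apply eventually_of_mem (Metric.ball_mem_nhds k hδ0)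
      intro m hm; rwa [Metric.mem_ball, Real.dist_eq] at hm
    filter_upwards [hφev, hkev, hprops] with m hφm hkm hm
    obtain ⟨hmIoo, hsm0, hsmσ, _, _, hjFm, _⟩ := hm
    have habsm : |m| ≤ 1 := by rw [abs_of_pos hmIoo.1]; linarith [hmIoo.2]
    rcases eq_or_ne (sn u m) (sn u k) with he | hne
    · rw [hqdef]
      simp only [if_pos he]
      simpa [Real.dist_eq] using hε
    · have hsm1' : sn u m < 1 := by
        have h := (abs_lt.1 hφm).2
        linarith
      have hIsub : uIcc (sn u k) (sn u m) ⊆ Ioo (-1:ℝ) 1 := by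
        intro t ht
        rw [Set.mem_uIcc] at ht
        constructor
        · rcases ht with ⟨h1, h2⟩ | ⟨h1, h2⟩ <;> linarith
        · rcases ht with ⟨h1, h2⟩ | ⟨h1, h2⟩ <;> linarith
      have hint1 : IntervalIntegrable (jf m) volume 0 (sn u k) := by
        apply jf_intble habsm
        intro t ht
        rw [uIcc_of_le hφk0.le] at ht
        exact ⟨by linarith [ht.1], lt_of_le_of_lt ht.2 hφk1⟩
      have hint2 : IntervalIntegrable (jf m) volume (sn u k) (sn u m) := jf_intble habsm hIsub
      have hdne : sn u m - sn u k ≠ 0 := sub_ne_zero.2 hne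
      have hsplit : jF m (sn u m) - jF m (sn u k) = ∫ t in (sn u k)..(sn u m), jf m t := by
        have := intervalIntegral.integral_add_adjacent_intervals hint1 hint2
        rw [jF, jF]
        linarith [this]
      have hsub2 : (∫ t in (sn u k)..(sn u m), (jf m t - jf k (sn u k)))
          = (∫ t in (sn u k)..(sn u m), jf m t) - (sn u m - sn u k) * jf k (sn u k) := by
        rw [intervalIntegral.integral_sub hint2 intervalIntegrable_const,
          intervalIntegral.integral_const]
        simp [smul_eq_mul]
      have hbnd : ∀ t ∈ Set.uIoc (sn u k) (sn u m), ‖jf m t - jf k (sn u k)‖ ≤ ε/2 := by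
        intro t ht
        have htmem : |t - sn u k| ≤ |sn u m - sn u k| := by
          rcases le_total (sn u k) (sn u m) with h | h
          · rw [uIoc_of_le h] at ht
            rw [abs_of_nonneg (by linarith [ht.1]), abs_of_nonneg (by linarith)]
            linarith [ht.2]
          · rw [uIoc_comm, uIoc_of_le h] at ht
            rw [abs_of_nonpos (by linarith [ht.2]), abs_of_nonpos (by linarith)]
            linarith [ht.1]
        have hdist : dist (m, t) (k, sn u k) < δ := by
          rw [Prod.dist_eq]
          apply max_lt
          · rwa [Real.dist_eq]
          · rw [Real.dist_eq]
            calc |t - sn u k| ≤ |sn u m - sn u k| := htmem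
              _ < δ' := hφm
              _ ≤ δ := hδ'min
        have hd2 := hδ hdist
        rw [Real.dist_eq] at hd2
        rw [Real.norm_eq_abs]
        linarith
      have hq_eq : q m - jf k (sn u k)
          = (∫ t in (sn u k)..(sn u m), (jf m t - jf k (sn u k)))/(sn u m - sn u k) := by
        rw [hqdef]
        simp only [if_neg hne]
        rw [hsub2, ← hsplit]
        field_simp
      have h2 : ‖∫ t in (sn u k)..(sn u m), (jf m t - jf k (sn u k))‖
          ≤ ε/2 * |sn u m - sn u k| :=
        intervalIntegral.norm_integral_le_of_norm_le_const hbnd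
      rw [Real.norm_eq_abs] at h2
      have h3 : 0 < |sn u m - sn u k| := abs_pos.2 hdne
      rw [Real.dist_eq, hq_eq, abs_div, div_lt_iff₀ h3]
      apply lt_of_le_of_lt h2
      nlinarith
  -- relation between increments
  have hAq : ∀ᶠ m in 𝓝 k, (sn u m - sn u k) * q m = -(jF m (sn u k) - u) := by
    filter_upwards [hprops] with m hm
    obtain ⟨hmIoo, hsm0, hsmσ, _, _, hjFm, _⟩ := hm
    rcases eq_or_ne (sn u m) (sn u k) with he | hne
    · rw [hqdef]
      simp only [if_pos he]
      rw [he, sub_self, zero_mul, ← he, hjFm, sub_self, neg_zero]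
    · rw [hqdef]
      simp only [if_neg hne]
      rw [mul_comm, div_mul_cancel₀ _ (sub_ne_zero.2 hne), hjFm]
      ring
  have hqpos : ∀ᶠ m in 𝓝 k, 0 < q m := hqt.eventually (eventually_gt_nhds hjfpos)
  have hslope_ev : (fun m => slope (fun m' => sn u m') k m) =ᶠ[𝓝[≠] k]
      (fun m => -(slope (fun m' => jF m' (sn u k)) k m) / q m) := by
    filter_upwards [(hAq.and hqpos).filter_mono nhdsWithin_le_nhds, self_mem_nhdsWithin]
      with m hm hmne
    obtain ⟨hAqm, hqm⟩ := hm
    have hmk : m - k ≠ 0 := sub_ne_zero.2 hmne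
    have hphi : sn u m - sn u k = -(jF m (sn u k) - u) / q m := by
      rw [eq_div_iff (ne_of_gt hqm)]
      exact hAqm
    rw [slope_def_field, slope_def_field, hphi, hjFk]
    rw [div_div, neg_div, neg_div, div_div, mul_comm (q m) (m - k)]
  have hFms := hasDerivAt_iff_tendsto_slope.1 hFm
  have hqt' : Tendsto q (𝓝[≠] k) (𝓝 (jf k (sn u k))) := hqt.mono_left nhdsWithin_le_nhds
  have hslope : Tendsto (slope (fun m' => sn u m') k) (𝓝[≠] k)
      (𝓝 (-Fm / jf k (sn u k))) := by
    apply Tendsto.congr' hslope_ev.symm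
    exact hFms.neg.div hqt' (ne_of_gt hjfpos)
  have hφ' : HasDerivAt (fun m => sn u m) (-Fm / jf k (sn u k)) k :=
    hasDerivAt_iff_tendsto_slope.2 hslope
  have hφval : -Fm / jf k (sn u k) = -Fm * (cn u k * dn u k) := by
    rw [hjfφ, one_div, div_inv_eq_mul]
  rw [hφval] at hφ'
  -- derivative of cn in modulus
  have h1 : HasDerivAt (fun m => 1 - sn u m^2) (-(2 * sn u k * (-Fm * (cn u k * dn u k)))) k := by
    have h2 := (hφ'.pow 2).const_sub 1
    have hcast : -(2 * sn u k * (-Fm * (cn u k * dn u k)))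
        = -((2:ℕ) * sn u k ^ (2 - 1) * (-Fm * (cn u k * dn u k))) := by
      push_cast
      ring
    rw [hcast]
    exact h2
  have hsqpos : 0 < 1 - sn u k^2 := by nlinarith
  have hψ := h1.sqrt (ne_of_gt hsqpos)
  have hcnev : (fun m => cn u m) =ᶠ[𝓝 k] (fun m => Real.sqrt (1 - sn u m^2)) :=
    hprops.mono (fun m hm => hm.2.2.2.1)
  have hcn' : HasDerivAt (fun m => cn u m)
      ((-(2 * sn u k * (-Fm * (cn u k * dn u k))))/(2*Real.sqrt (1 - sn u k^2))) k :=
    hψ.congr_of_eventuallyEq hcnev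
  -- identify the derivative value
  have hcpos : ∀ v ∈ Icc 0 u, 0 < cn v k := jac_cn_pos hJk hk0 hk1 hu0.le hu
  have hWZ : Fm = 1/(k*(1-k^2)) *
      ((∫ v in (0:ℝ)..u, (dn v k)^2) - (1-k^2)*u - k^2 * sn u k * cn u k / dn u k) :=
    jac_WZ hJk hk0 hk1 hu0.le hcpos
  have hTeq : sn u k * dn u k / (k * (1 - k^2)) *
      ((∫ v in (0:ℝ)..u, (dn v k)^2) - (1 - k^2) * u - k^2 * sn u k * cn u k / dn u k)
      = sn u k * dn u k * Fm := by
    rw [hWZ]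
    ring
  have hFmpos : 0 < Fm := by
    apply intervalIntegral.intervalIntegral_pos_of_pos_on
    · apply ((jg_contOn habs).mono ?_).intervalIntegrable
      intro t ht
      rw [uIcc_of_le hφk0.le] at ht
      exact ⟨by linarith [ht.1], lt_of_le_of_lt ht.2 hφk1⟩
    · intro t ht
      exact jg_pos hk0 habs ht.1 ⟨by linarith [ht.1], lt_trans ht.2 hφk1⟩
    · exact hφk0
  constructor
  · have hveq : (-(2 * sn u k * (-Fm * (cn u k * dn u k))))/(2*Real.sqrt (1 - sn u k^2))
        = sn u k * dn u k / (k * (1 - k^2)) *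
          ((∫ v in (0:ℝ)..u, (dn v k)^2) - (1 - k^2) * u
            - k^2 * sn u k * cn u k / dn u k) := by
      rw [hTeq, ← hcnk]
      field_simp
    rw [← hveq]
    exact hcn'
  · rw [hTeq]
    exact mul_pos (mul_pos hφk0 hdnk0) hFmpos
end

section
/- For fixed 0 < k < 1 and 0 < u < K(k), the Jacobi elliptic function dn(u,k) is strictly decreasing as a function of the modulus k; equivalently, the quantity g(u) = E(u) − k'²·u − sn(u)·dn(u)/cn(u) is strictly negative for 0 < u < K(k), where E(u) = ∫₀^u dn²(v) dv. -/
open Real intervalIntegral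

open MeasureTheory Set

noncomputable def Bfun (m x : ℝ) : ℝ :=
  ∫ θ in (0:ℝ)..x, 1 / Real.sqrt (1 - m^2 * (Real.sin θ)^2)

lemma den_pos {m : ℝ} (hm0 : 0 < m) (hm1 : m < 1) (θ : ℝ) :
    0 < 1 - m^2 * (Real.sin θ)^2 := by
  nlinarith [Real.sin_sq_le_one θ]

lemma fcont {m : ℝ} (hm0 : 0 < m) (hm1 : m < 1) :
    Continuous (fun θ : ℝ => 1 / Real.sqrt (1 - m^2 * (Real.sin θ)^2)) := by
  apply Continuous.div continuous_const
  · exact (Real.continuous_sqrt.comp (by continuity))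
  · intro θ
    exact (Real.sqrt_pos.mpr (den_pos hm0 hm1 θ)).ne'

lemma Bfun_hasDerivAt {m : ℝ} (hm0 : 0 < m) (hm1 : m < 1) (x : ℝ) :
    HasDerivAt (Bfun m) (1 / Real.sqrt (1 - m^2 * (Real.sin x)^2)) x :=
  intervalIntegral.integral_hasDerivAt_right
    ((fcont hm0 hm1).intervalIntegrable _ _)
    ((fcont hm0 hm1).stronglyMeasurableAtFilter _ _)
    (fcont hm0 hm1).continuousAt

lemma Bfun_cont {m : ℝ} (hm0 : 0 < m) (hm1 : m < 1) : Continuous (Bfun m) :=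
  continuous_iff_continuousAt.2 fun x => (Bfun_hasDerivAt hm0 hm1 x).continuousAt

section core
variable {sn cn dn : ℝ → ℝ → ℝ} {m : ℝ}
variable (hm0 : 0 < m) (hm1 : m < 1)
  (hsn0 : sn 0 m = 0) (hcn0 : cn 0 m = 1) (hdn0 : dn 0 m = 1)
  (hd : ∀ u : ℝ, HasDerivAt (fun v => sn v m) (cn u m * dn u m) u ∧
        HasDerivAt (fun v => cn v m) (-(sn u m * dn u m)) u ∧
        HasDerivAt (fun v => dn v m) (-(m^2 * sn u m * cn u m)) u)

include hd

lemma sn_cont : Continuous (fun v => sn v m) :=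
  continuous_iff_continuousAt.2 fun x => (hd x).1.continuousAt

lemma cn_cont : Continuous (fun v => cn v m) :=
  continuous_iff_continuousAt.2 fun x => (hd x).2.1.continuousAt

lemma dn_cont : Continuous (fun v => dn v m) :=
  continuous_iff_continuousAt.2 fun x => (hd x).2.2.continuousAt

include hsn0 hcn0 in
lemma pyth1 : ∀ v, sn v m ^ 2 + cn v m ^ 2 = 1 := by
  intro v
  have h : ∀ x : ℝ, HasDerivAt (fun v => sn v m ^ 2 + cn v m ^ 2) 0 x := by
    intro x
    have := ((hd x).1.pow 2).add ((hd x).2.1.pow 2)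
    refine this.congr_deriv ?_
    ring
  have hc : ∀ x : ℝ, (fun v => sn v m ^ 2 + cn v m ^ 2) x
      = (fun v => sn v m ^ 2 + cn v m ^ 2) 0 := by
    intro x
    apply is_const_of_deriv_eq_zero (fun x => (h x).differentiableAt)
      (fun x => (h x).deriv)
  simpa [hsn0, hcn0] using hc v

include hsn0 hdn0 in
lemma pyth2 : ∀ v, m^2 * sn v m ^ 2 + dn v m ^ 2 = 1 := by
  intro v
  have h : ∀ x : ℝ, HasDerivAt (fun v => m^2 * sn v m ^ 2 + dn v m ^ 2) 0 x := by
    intro x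
    have := (((hd x).1.pow 2).const_mul (m^2)).add ((hd x).2.2.pow 2)
    refine this.congr_deriv ?_
    ring
  have hc : ∀ x : ℝ, (fun v => m^2 * sn v m ^ 2 + dn v m ^ 2) x
      = (fun v => m^2 * sn v m ^ 2 + dn v m ^ 2) 0 := by
    intro x
    apply is_const_of_deriv_eq_zero (fun x => (h x).differentiableAt)
      (fun x => (h x).deriv)
  simpa [hsn0, hdn0] using hc v

include hm0 hm1 hsn0 hcn0 hdn0 in
lemma dn_pos : ∀ v, 0 < dn v m := by
  intro v
  have hp1 := pyth1 hsn0 hcn0 hd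
  have hp2 := pyth2 hsn0 hdn0 hd
  have hne : ∀ w, dn w m ≠ 0 := by
    intro w hw
    have h1 := hp1 w
    have h2 := hp2 w
    rw [hw] at h2
    nlinarith [sq_nonneg (cn w m), sq_nonneg (sn w m)]
  by_contra h
  push_neg at h
  have h0 : (0:ℝ) ∈ uIcc (dn v m) (dn 0 m) := by
    rw [hdn0, Set.mem_uIcc]; exact Or.inl ⟨h, zero_le_one⟩
  obtain ⟨c, _, hc⟩ := intermediate_value_uIcc ((dn_cont hd).continuousOn) h0
  exact hne c hc

include hm0 hm1 hsn0 hcn0 hdn0 in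
lemma amp_deriv (x : ℝ) (hcx : 0 < cn x m) :
    HasDerivAt (fun w => Bfun m (arcsin (sn w m))) 1 x := by
  have hp1 := pyth1 hsn0 hcn0 hd
  have hp2 := pyth2 hsn0 hdn0 hd
  have hdnp := dn_pos hm0 hm1 hsn0 hcn0 hdn0 hd
  have hlt : sn x m < 1 := by nlinarith [hp1 x]
  have hgt : -1 < sn x m := by nlinarith [hp1 x]
  have h1 := (hd x).1
  have h2 := Real.hasDerivAt_arcsin hgt.ne' hlt.ne
  have h2' : HasDerivAt (fun w => arcsin (sn w m))
      (1 / Real.sqrt (1 - sn x m ^ 2) * (cn x m * dn x m)) x := by exact h2.comp x h1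
  have h3 := Bfun_hasDerivAt hm0 hm1 (arcsin (sn x m))
  have h4 := h3.comp x h2'
  have e0 : Real.sin (arcsin (sn x m)) = sn x m :=
    Real.sin_arcsin (by linarith) (by linarith)
  have e1 : Real.sqrt (1 - sn x m ^ 2) = cn x m := by
    rw [show 1 - sn x m ^ 2 = cn x m ^ 2 by nlinarith [hp1 x], Real.sqrt_sq hcx.le]
  have e2 : Real.sqrt (1 - m ^ 2 * sn x m ^ 2) = dn x m := by
    rw [show 1 - m ^ 2 * sn x m ^ 2 = dn x m ^ 2 by nlinarith [hp2 x],
      Real.sqrt_sq (hdnp x).le]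
  refine h4.congr_deriv ?_
  rw [e0, e1, e2]
  field_simp [(hdnp x).ne', hcx.ne']

include hm0 hm1 hsn0 hcn0 hdn0 in
lemma amp_deriv_E (x : ℝ) (hcx : 0 < cn x m) :
    HasDerivAt (fun w => ∫ θ in (0:ℝ)..(arcsin (sn w m)),
      Real.sqrt (1 - m^2 * (Real.sin θ)^2)) ((dn x m)^2) x := by
  have hp1 := pyth1 hsn0 hcn0 hd
  have hp2 := pyth2 hsn0 hdn0 hd
  have hdnp := dn_pos hm0 hm1 hsn0 hcn0 hdn0 hd
  have hlt : sn x m < 1 := by nlinarith [hp1 x]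
  have hgt : -1 < sn x m := by nlinarith [hp1 x]
  have hI2c : Continuous (fun θ : ℝ => Real.sqrt (1 - m^2*(Real.sin θ)^2)) :=
    Real.continuous_sqrt.comp (by continuity)
  have h1 := (hd x).1
  have h2 := Real.hasDerivAt_arcsin hgt.ne' hlt.ne
  have h2' : HasDerivAt (fun w => arcsin (sn w m))
      (1 / Real.sqrt (1 - sn x m ^ 2) * (cn x m * dn x m)) x := by exact h2.comp x h1
  have h3 : HasDerivAt (fun y => ∫ θ in (0:ℝ)..y, Real.sqrt (1 - m^2*(Real.sin θ)^2))
      (Real.sqrt (1 - m^2*(Real.sin (arcsin (sn x m)))^2)) (arcsin (sn x m)) :=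
    intervalIntegral.integral_hasDerivAt_right (hI2c.intervalIntegrable _ _)
      (hI2c.stronglyMeasurableAtFilter _ _) hI2c.continuousAt
  have h4 := h3.comp x h2'
  have e0 : Real.sin (arcsin (sn x m)) = sn x m :=
    Real.sin_arcsin (by linarith) (by linarith)
  have e1 : Real.sqrt (1 - sn x m ^ 2) = cn x m := by
    rw [show 1 - sn x m ^ 2 = cn x m ^ 2 by nlinarith [hp1 x], Real.sqrt_sq hcx.le]
  have e2 : Real.sqrt (1 - m ^ 2 * sn x m ^ 2) = dn x m := by
    rw [show 1 - m ^ 2 * sn x m ^ 2 = dn x m ^ 2 by nlinarith [hp2 x],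
      Real.sqrt_sq (hdnp x).le]
  refine h4.congr_deriv ?_
  rw [e0, e1, e2]
  field_simp [hcx.ne']

include hm0 hm1 hsn0 hcn0 hdn0 in
lemma core_main : ∀ v, 0 ≤ v → v < ellK m →
    (∀ w ∈ Icc (0:ℝ) v, 0 < cn w m) ∧ 0 ≤ sn v m ∧ sn v m < 1 ∧
    Bfun m (arcsin (sn v m)) = v ∧ (0 < v → 0 < sn v m) := by
  intro v hv0 hv
  have hp1 := pyth1 hsn0 hcn0 hd
  have hp2 := pyth2 hsn0 hdn0 hd
  have hdnp := dn_pos hm0 hm1 hsn0 hcn0 hdn0 hd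
  have hcnc := cn_cont hd
  have hsnc := sn_cont hd
  have hamp : ∀ t, 0 ≤ t → (∀ x ∈ Ico (0:ℝ) t, 0 < cn x m) →
      Bfun m (arcsin (sn t m)) = t := by
    intro t ht0 hcpos
    have hcont : ContinuousOn (fun w => Bfun m (arcsin (sn w m)) - w) (Icc 0 t) :=
      (((Bfun_cont hm0 hm1).comp (Real.continuous_arcsin.comp hsnc)).sub
        continuous_id).continuousOn
    have hder : ∀ x ∈ Ico (0:ℝ) t,
        HasDerivWithinAt (fun w => Bfun m (arcsin (sn w m)) - w) 0 (Ici x) x := by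
      intro x hx
      have := (amp_deriv hm0 hm1 hsn0 hcn0 hdn0 hd x (hcpos x hx)).sub (hasDerivAt_id x)
      exact (this.congr_deriv (by simp)).hasDerivWithinAt
    have := constant_of_has_deriv_right_zero hcont hder t ⟨ht0, le_refl t⟩
    have hB0 : Bfun m (0:ℝ) = 0 := intervalIntegral.integral_same
    simp only [hsn0, Real.arcsin_zero, hB0] at this
    linarith
  have hmono : ∀ t, (∀ x ∈ Ico (0:ℝ) t, 0 < cn x m) →
      MonotoneOn (fun w => sn w m) (Icc 0 t) := by
    intro t hcpos
    apply monotoneOn_of_deriv_nonneg (convex_Icc 0 t) hsnc.continuousOn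
      (fun x _ => (hd x).1.differentiableAt.differentiableWithinAt)
    intro x hx
    rw [interior_Icc] at hx
    rw [(hd x).1.deriv]
    exact mul_nonneg (hcpos x ⟨hx.1.le, hx.2⟩).le (hdnp x).le
  have hcnpos : ∀ w ∈ Icc (0:ℝ) v, 0 < cn w m := by
    by_contra hcon
    push_neg at hcon
    obtain ⟨w, hw, hwle⟩ := hcon
    set Z := {z | z ∈ Icc (0:ℝ) v ∧ cn z m = 0} with hZ
    have hZne : Z.Nonempty := by
      have h0 : (0:ℝ) ∈ uIcc (cn w m) (cn 0 m) := by
        rw [hcn0, Set.mem_uIcc]; exact Or.inl ⟨hwle, zero_le_one⟩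
      obtain ⟨c, hc, hceq⟩ := intermediate_value_uIcc hcnc.continuousOn h0
      rw [Set.uIcc_of_ge hw.1] at hc
      exact ⟨c, ⟨hc.1, hc.2.trans hw.2⟩, hceq⟩
    have hZcl : IsClosed Z := by
      have : Z = Icc 0 v ∩ (fun z => cn z m) ⁻¹' {0} := by
        ext z; simp [hZ, Set.mem_inter_iff]
      rw [this]
      exact isClosed_Icc.inter (isClosed_singleton.preimage hcnc)
    have hZbdd : BddBelow Z := ⟨0, fun z hz => hz.1.1⟩
    have ht0Z : sInf Z ∈ Z := hZcl.csInf_mem hZne hZbdd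
    set t0 := sInf Z with ht0def
    have ht0v : t0 ∈ Icc (0:ℝ) v := ht0Z.1
    have hcnt0 : cn t0 m = 0 := ht0Z.2
    have ht0pos : 0 < t0 := by
      rcases eq_or_lt_of_le ht0v.1 with h | h
      · exfalso; rw [← h] at hcnt0; rw [hcn0] at hcnt0; norm_num at hcnt0
      · exact h
    have hcnlt : ∀ x ∈ Ico (0:ℝ) t0, 0 < cn x m := by
      intro x hx
      rcases lt_trichotomy (cn x m) 0 with h | h | h
      · exfalso
        have h0 : (0:ℝ) ∈ uIcc (cn x m) (cn 0 m) := by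
          rw [hcn0, Set.mem_uIcc]; exact Or.inl ⟨h.le, zero_le_one⟩
        obtain ⟨c, hc, hceq⟩ := intermediate_value_uIcc hcnc.continuousOn h0
        rw [Set.uIcc_of_ge hx.1] at hc
        have hcZ : c ∈ Z := ⟨⟨hc.1, hc.2.trans (hx.2.le.trans ht0v.2)⟩, hceq⟩
        have := csInf_le hZbdd hcZ
        linarith [hc.2, hx.2]
      · exfalso
        have hxZ : x ∈ Z := ⟨⟨hx.1, hx.2.le.trans ht0v.2⟩, h⟩
        have := csInf_le hZbdd hxZ
        linarith [hx.2]
      · exact h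
    have hBt0 : Bfun m (arcsin (sn t0 m)) = t0 := hamp t0 ht0pos.le hcnlt
    have hsnt0_nonneg : 0 ≤ sn t0 m := by
      have := hmono t0 hcnlt ⟨le_refl 0, ht0pos.le⟩ ⟨ht0pos.le, le_refl t0⟩ ht0pos.le
      simpa [hsn0] using this
    have hsq : sn t0 m ^ 2 = 1 := by nlinarith [hp1 t0]
    have hsnt0 : sn t0 m = 1 := by nlinarith
    rw [hsnt0, Real.arcsin_one] at hBt0
    have : Bfun m (π/2) = ellK m := rfl
    rw [this] at hBt0
    linarith [ht0v.2]
  have hcnlt' : ∀ x ∈ Ico (0:ℝ) v, 0 < cn x m := fun x hx => hcnpos x ⟨hx.1, hx.2.le⟩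
  have hsnv_nonneg : 0 ≤ sn v m := by
    have := hmono v hcnlt' ⟨le_refl 0, hv0⟩ ⟨hv0, le_refl v⟩ hv0
    simpa [hsn0] using this
  have hcnv := hcnpos v ⟨hv0, le_refl v⟩
  refine ⟨hcnpos, hsnv_nonneg, by nlinarith [hp1 v], hamp v hv0 hcnlt', ?_⟩
  intro hvpos
  have hstrict : StrictMonoOn (fun w => sn w m) (Icc 0 v) := by
    apply strictMonoOn_of_deriv_pos (convex_Icc 0 v) hsnc.continuousOn
    intro x hx
    rw [interior_Icc] at hx
    rw [(hd x).1.deriv]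
    exact mul_pos (hcnpos x ⟨hx.1.le, hx.2.le⟩) (hdnp x)
  have := hstrict ⟨le_refl 0, hv0⟩ ⟨hv0, le_refl v⟩ hvpos
  simpa [hsn0] using this

end core

section part1
variable {sn cn dn : ℝ → ℝ → ℝ} {m : ℝ}
variable (hm0 : 0 < m) (hm1 : m < 1)
  (hsn0 : sn 0 m = 0) (hcn0 : cn 0 m = 1) (hdn0 : dn 0 m = 1)
  (hd : ∀ u : ℝ, HasDerivAt (fun v => sn v m) (cn u m * dn u m) u ∧
        HasDerivAt (fun v => cn v m) (-(sn u m * dn u m)) u ∧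
        HasDerivAt (fun v => dn v m) (-(m^2 * sn u m * cn u m)) u)

include hm0 hm1 hsn0 hcn0 hdn0 hd in
lemma part1 (u : ℝ) (hu0 : 0 < u) (hu : u < ellK m) :
    (∫ v in (0:ℝ)..u, (dn v m)^2) - (1 - m^2) * u
        - sn u m * dn u m / cn u m < 0 := by
  have hp1 := pyth1 hsn0 hcn0 hd
  have hp2 := pyth2 hsn0 hdn0 hd
  have hdnp := dn_pos hm0 hm1 hsn0 hcn0 hdn0 hd
  obtain ⟨hcnpos, -, -, -, -⟩ :=
    core_main hm0 hm1 hsn0 hcn0 hdn0 hd u hu0.le hu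
  set g : ℝ → ℝ := fun w => (∫ v in (0:ℝ)..w, (dn v m)^2) - (1 - m^2) * w
      - sn w m * dn w m / cn w m with hg
  have hdn2cont : Continuous (fun v => (dn v m)^2) := (dn_cont hd).pow 2
  have hgderiv : ∀ x ∈ Icc (0:ℝ) u,
      HasDerivAt g (-((1-m^2) / (cn x m)^2)) x := by
    intro x hx
    have hcx := hcnpos x hx
    have h1 : HasDerivAt (fun w => ∫ v in (0:ℝ)..w, (dn v m)^2) ((dn x m)^2) x :=
      intervalIntegral.integral_hasDerivAt_right
        (hdn2cont.intervalIntegrable _ _)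
        (hdn2cont.stronglyMeasurableAtFilter _ _) hdn2cont.continuousAt
    have h2 : HasDerivAt (fun w : ℝ => (1 - m^2) * w) (1 - m^2) x := by
      simpa using (hasDerivAt_id x).const_mul (1 - m^2)
    have h3 := (((hd x).1.mul (hd x).2.2).div (hd x).2.1 hcx.ne')
    have h4 := (h1.sub h2).sub h3
    refine h4.congr_deriv ?_
    have e1 := hp1 x
    have e2 := hp2 x
    field_simp
    simp only [Pi.mul_apply]
    ring_nf
    nlinarith [sq_nonneg (cn x m), sq_nonneg (dn x m)]
  have hanti : StrictAntiOn g (Icc 0 u) := by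
    apply strictAntiOn_of_deriv_neg (convex_Icc 0 u)
      (fun x hx => (hgderiv x hx).continuousAt.continuousWithinAt)
    intro x hx
    rw [interior_Icc] at hx
    rw [(hgderiv x ⟨hx.1.le, hx.2.le⟩).deriv]
    have hcx := hcnpos x ⟨hx.1.le, hx.2.le⟩
    have hm2 : 0 < 1 - m^2 := by nlinarith
    have : 0 < (1 - m^2) / (cn x m)^2 := div_pos hm2 (by positivity)
    linarith
  have hgu := hanti ⟨le_refl 0, hu0.le⟩ ⟨hu0.le, le_refl u⟩ hu0
  have hg0 : g 0 = 0 := by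
    simp [hg, hsn0, hcn0]
  rw [hg0] at hgu
  exact hgu
end part1

lemma inv_sqrt_diff_bound {a1 a2 c0 : ℝ} (hc : 0 < c0) (h1 : c0 ≤ a1) (h2 : c0 ≤ a2) :
    |1/Real.sqrt a1 - 1/Real.sqrt a2| ≤ |a1 - a2| / (2 * c0 * Real.sqrt c0) := by
  have ha1 : 0 < a1 := hc.trans_le h1
  have ha2 : 0 < a2 := hc.trans_le h2
  set t1 := Real.sqrt a1 with ht1
  set t2 := Real.sqrt a2 with ht2
  have ht1p : 0 < t1 := Real.sqrt_pos.mpr ha1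
  have ht2p : 0 < t2 := Real.sqrt_pos.mpr ha2
  have ht1sq : t1^2 = a1 := Real.sq_sqrt ha1.le
  have ht2sq : t2^2 = a2 := Real.sq_sqrt ha2.le
  have htc : Real.sqrt c0 ≤ t1 := Real.sqrt_le_sqrt h1
  have htc2 : Real.sqrt c0 ≤ t2 := Real.sqrt_le_sqrt h2
  have hcp : 0 < Real.sqrt c0 := Real.sqrt_pos.mpr hc
  have hcsq : Real.sqrt c0 ^ 2 = c0 := Real.sq_sqrt hc.le
  have hden : 0 < t1 * t2 * (t1 + t2) := by positivity
  have hd : 1/t1 - 1/t2 = (a2 - a1) / (t1 * t2 * (t1 + t2)) := by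
    field_simp
    nlinarith [ht1sq, ht2sq]
  rw [hd, abs_div, abs_of_pos hden, abs_sub_comm a2 a1]
  apply div_le_div_of_nonneg_left (abs_nonneg _) (by positivity)
  nlinarith [mul_le_mul htc htc2 hcp.le ht1p.le]

lemma ellK_diff_bound {k m : ℝ} (hk0 : 0 < k) (hk1 : k < 1) (hm : |m - k| < (1-k)/2) :
    |ellK m - ellK k| ≤ |m - k| * (π / (1 - ((1+k)/2)^2)^2) := by
  set b : ℝ := (1+k)/2 with hb
  have hb1 : b < 1 := by rw [hb]; linarith
  have hkb : k < b := by rw [hb]; linarith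
  have hmb : |m| < b := by
    rw [abs_lt] at hm ⊢
    constructor <;> [nlinarith [hm.1]; nlinarith [hm.2]]
  set c0 : ℝ := 1 - b^2 with hc0
  have hc0p : 0 < c0 := by rw [hc0]; nlinarith
  have hint : ∀ r : ℝ, |r| < 1 → Continuous (fun θ : ℝ => 1 / Real.sqrt (1 - r^2 * (Real.sin θ)^2)) := by
    intro r hr
    apply Continuous.div continuous_const
    · exact (Real.continuous_sqrt.comp (by continuity))
    · intro θ
      refine (Real.sqrt_pos.mpr ?_).ne'
      nlinarith [Real.sin_sq_le_one θ, abs_nonneg r, sq_abs r, abs_lt.mp hr]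
  have hcm := hint m (hmb.trans hb1)
  have hck := hint k (by rw [abs_of_pos hk0]; exact hk1)
  have hsub : ellK m - ellK k = ∫ θ in (0:ℝ)..(π/2),
      (1 / Real.sqrt (1 - m^2 * (Real.sin θ)^2) - 1 / Real.sqrt (1 - k^2 * (Real.sin θ)^2)) := by
    rw [intervalIntegral.integral_sub (hcm.intervalIntegrable _ _) (hck.intervalIntegrable _ _)]
    rfl
  have hbound : ∀ θ ∈ Set.uIoc (0:ℝ) (π/2),
      ‖1 / Real.sqrt (1 - m^2 * (Real.sin θ)^2) - 1 / Real.sqrt (1 - k^2 * (Real.sin θ)^2)‖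
        ≤ |m - k| * (2 / (2 * c0 * Real.sqrt c0)) := by
    intro θ _
    have h1 : c0 ≤ 1 - m^2 * (Real.sin θ)^2 := by
      have := sq_abs m
      nlinarith [Real.sin_sq_le_one θ, sq_nonneg (Real.sin θ), abs_nonneg m, hmb]
    have h2 : c0 ≤ 1 - k^2 * (Real.sin θ)^2 := by
      nlinarith [Real.sin_sq_le_one θ, sq_nonneg (Real.sin θ)]
    have := inv_sqrt_diff_bound hc0p h1 h2
    rw [Real.norm_eq_abs]
    refine this.trans ?_
    have hnum : |(1 - m^2 * (Real.sin θ)^2) - (1 - k^2 * (Real.sin θ)^2)| ≤ |m - k| * 2 := by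
      have : (1 - m^2 * (Real.sin θ)^2) - (1 - k^2 * (Real.sin θ)^2)
          = -((m-k)*(m+k)*(Real.sin θ)^2) := by ring
      rw [this, abs_neg, abs_mul, abs_mul]
      have h3 : |m + k| ≤ 2 := by
        rw [abs_le]; constructor <;> nlinarith [abs_lt.mp hmb, abs_lt.mp hm]
      have h4 : |(Real.sin θ)^2| ≤ 1 := by
        rw [abs_of_nonneg (sq_nonneg _)]; exact Real.sin_sq_le_one θ
      calc |m-k| * |m+k| * |(Real.sin θ)^2| ≤ |m-k| * 2 * 1 := by
            apply mul_le_mul (mul_le_mul le_rfl h3 (abs_nonneg _) (abs_nonneg _)) h4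
              (abs_nonneg _) (by positivity)
        _ = |m-k| * 2 := by ring
    calc |(1 - m^2 * (Real.sin θ)^2) - (1 - k^2 * (Real.sin θ)^2)| / (2 * c0 * Real.sqrt c0)
        ≤ (|m - k| * 2) / (2 * c0 * Real.sqrt c0) := by
          have hdp : (0:ℝ) < 2 * c0 * Real.sqrt c0 := by positivity
          exact (div_le_div_iff_of_pos_right hdp).mpr hnum
      _ = |m - k| * (2 / (2 * c0 * Real.sqrt c0)) := by ring
  have hfin := intervalIntegral.norm_integral_le_of_norm_le_const hbound
  rw [← hsub] at hfin
  have hpi : (0:ℝ) < π := Real.pi_pos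
  have hc01 : c0 ≤ 1 := by
    have : 0 ≤ b^2 := sq_nonneg b
    rw [hc0]; linarith
  have hcs : c0 ≤ Real.sqrt c0 := by
    nlinarith [Real.sq_sqrt hc0p.le, Real.sqrt_nonneg c0, Real.sqrt_le_sqrt hc01,
      Real.sqrt_one]
  have key : |m - k| * (2 / (2 * c0 * Real.sqrt c0)) * |π/2 - 0| ≤ |m - k| * (π / c0^2) := by
    have h1 : |π/2 - (0:ℝ)| = π/2 := by rw [abs_of_pos (by linarith)]; ring_nf
    have h2 : 2 / (2 * c0 * Real.sqrt c0) * (π/2) ≤ π / c0^2 := by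
      have hstep : c0^2 ≤ 2 * c0 * Real.sqrt c0 := by
        nlinarith [mul_le_mul_of_nonneg_left hcs hc0p.le,
          mul_nonneg hc0p.le (Real.sqrt_nonneg c0)]
      calc 2 / (2 * c0 * Real.sqrt c0) * (π/2) = π / (2 * c0 * Real.sqrt c0) := by ring
        _ ≤ π / c0^2 := by gcongr
    calc |m - k| * (2 / (2 * c0 * Real.sqrt c0)) * |π/2 - 0|
        = |m - k| * (2 / (2 * c0 * Real.sqrt c0) * (π/2)) := by rw [h1]; ring
      _ ≤ |m - k| * (π / c0^2) := by
          apply mul_le_mul_of_nonneg_left h2 (abs_nonneg _)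
  rw [Real.norm_eq_abs] at hfin
  exact hfin.trans key

lemma eventually_good {k u : ℝ} (hk0 : 0 < k) (hk1 : k < 1) (hu : u < ellK k) :
    ∀ᶠ m in nhds k, m ∈ Ioo (0:ℝ) 1 ∧ u < ellK m := by
  set C : ℝ := π / (1 - ((1+k)/2)^2)^2 with hC
  have hCpos : 0 < C := by
    rw [hC]
    have : (0:ℝ) < 1 - ((1+k)/2)^2 := by nlinarith
    positivity
  set ε : ℝ := min ((1-k)/2) (min (k/2) ((ellK k - u)/(C+1))) with hε
  have hεpos : 0 < ε := by
    apply lt_min (by linarith)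
    apply lt_min (by linarith)
    apply div_pos (by linarith) (by linarith)
  filter_upwards [eventually_abs_sub_lt k hεpos] with m hm
  have h1 : |m - k| < (1-k)/2 := hm.trans_le (min_le_left _ _)
  have h2 : |m - k| < k/2 := hm.trans_le ((min_le_right _ _).trans (min_le_left _ _))
  have h3 : |m - k| < (ellK k - u)/(C+1) := hm.trans_le ((min_le_right _ _).trans (min_le_right _ _))
  have habs := abs_lt.mp hm
  have habs1 := abs_lt.mp h1
  have habs2 := abs_lt.mp h2
  refine ⟨⟨by linarith, by linarith⟩, ?_⟩
  have hbd := ellK_diff_bound hk0 hk1 h1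
  have : |ellK m - ellK k| ≤ |m - k| * C := hbd
  have h4 : |m - k| * C < (ellK k - u)/(C+1) * C := by
    apply mul_lt_mul_of_pos_right h3 hCpos
  have h5 : (ellK k - u)/(C+1) * C ≤ ellK k - u := by
    rw [div_mul_eq_mul_div, div_le_iff₀ (by linarith)]
    nlinarith [hCpos]
  have h6 : |ellK m - ellK k| < ellK k - u := this.trans_lt (h4.trans_le h5)
  linarith [(abs_lt.mp h6).1]

lemma reduction_identity {k : ℝ} (hk0 : 0 < k) (hk1 : k < 1) (x : ℝ) :
    (1-k^2) * k * (∫ θ in (0:ℝ)..x,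
        k * (Real.sin θ)^2 / ((1-k^2*(Real.sin θ)^2) * Real.sqrt (1-k^2*(Real.sin θ)^2)))
      = (∫ θ in (0:ℝ)..x, Real.sqrt (1-k^2*(Real.sin θ)^2)) - (1-k^2) * Bfun k x
        - k^2 * Real.sin x * Real.cos x / Real.sqrt (1-k^2*(Real.sin x)^2) := by
  have hw : ∀ θ : ℝ, 0 < 1 - k^2 * (Real.sin θ)^2 := den_pos hk0 hk1
  have hwc : Continuous (fun θ : ℝ => 1 - k^2 * (Real.sin θ)^2) := by continuity
  have hI1c : Continuous (fun θ : ℝ =>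
      k * (Real.sin θ)^2 / ((1-k^2*(Real.sin θ)^2) * Real.sqrt (1-k^2*(Real.sin θ)^2))) := by
    apply Continuous.div (by continuity) (hwc.mul (Real.continuous_sqrt.comp hwc))
    intro θ
    exact (mul_pos (hw θ) (Real.sqrt_pos.mpr (hw θ))).ne'
  have hI2c : Continuous (fun θ : ℝ => Real.sqrt (1-k^2*(Real.sin θ)^2)) :=
    Real.continuous_sqrt.comp hwc
  set Φ : ℝ → ℝ := fun x => (1-k^2) * k * (∫ θ in (0:ℝ)..x,
      k * (Real.sin θ)^2 / ((1-k^2*(Real.sin θ)^2) * Real.sqrt (1-k^2*(Real.sin θ)^2)))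
    - ((∫ θ in (0:ℝ)..x, Real.sqrt (1-k^2*(Real.sin θ)^2)) - (1-k^2) * Bfun k x
      - k^2 * Real.sin x * Real.cos x / Real.sqrt (1-k^2*(Real.sin x)^2)) with hΦ
  have hderiv : ∀ x : ℝ, HasDerivAt Φ 0 x := by
    intro x
    have h1 : HasDerivAt (fun x => ∫ θ in (0:ℝ)..x,
        k * (Real.sin θ)^2 / ((1-k^2*(Real.sin θ)^2) * Real.sqrt (1-k^2*(Real.sin θ)^2)))
        (k * (Real.sin x)^2 / ((1-k^2*(Real.sin x)^2) * Real.sqrt (1-k^2*(Real.sin x)^2))) x :=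
      intervalIntegral.integral_hasDerivAt_right (hI1c.intervalIntegrable _ _)
        (hI1c.stronglyMeasurableAtFilter _ _) hI1c.continuousAt
    have h2 : HasDerivAt (fun x => ∫ θ in (0:ℝ)..x, Real.sqrt (1-k^2*(Real.sin θ)^2))
        (Real.sqrt (1-k^2*(Real.sin x)^2)) x :=
      intervalIntegral.integral_hasDerivAt_right (hI2c.intervalIntegrable _ _)
        (hI2c.stronglyMeasurableAtFilter _ _) hI2c.continuousAt
    have h3 := Bfun_hasDerivAt hk0 hk1 x
    have hwx : HasDerivAt (fun x : ℝ => 1 - k^2 * (Real.sin x)^2)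
        (-(k^2 * (2 * Real.sin x ^ 1 * Real.cos x))) x := by
      exact (((Real.hasDerivAt_sin x).pow 2).const_mul (k^2)).const_sub 1
    have hsqw : HasDerivAt (fun x : ℝ => Real.sqrt (1 - k^2 * (Real.sin x)^2))
        (-(k^2 * (2 * Real.sin x ^ 1 * Real.cos x)) / (2 * Real.sqrt (1 - k^2*(Real.sin x)^2))) x :=
      hwx.sqrt (hw x).ne'
    have h4 : HasDerivAt (fun x : ℝ =>
        k^2 * Real.sin x * Real.cos x / Real.sqrt (1-k^2*(Real.sin x)^2))
        ((((k^2) * Real.cos x * Real.cos x + k^2 * Real.sin x * (-Real.sin x))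
            * Real.sqrt (1-k^2*(Real.sin x)^2)
          - k^2 * Real.sin x * Real.cos x
            * (-(k^2 * (2 * Real.sin x ^ 1 * Real.cos x)) / (2 * Real.sqrt (1 - k^2*(Real.sin x)^2))))
          / (Real.sqrt (1-k^2*(Real.sin x)^2))^2) x := by
      exact ((((Real.hasDerivAt_sin x).const_mul (k^2)).mul (Real.hasDerivAt_cos x)).div hsqw
        (Real.sqrt_pos.mpr (hw x)).ne')
    have htotal := ((h1.const_mul ((1-k^2)*k)).sub ((h2.sub (h3.const_mul (1-k^2))).sub h4))
    refine htotal.congr_deriv ?_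
    set s := Real.sin x
    set c := Real.cos x
    set t := Real.sqrt (1 - k^2 * s^2) with htdef
    have htp : 0 < t := Real.sqrt_pos.mpr (hw x)
    have ht2 : t^2 = 1 - k^2 * s^2 := Real.sq_sqrt (hw x).le
    have hsc : s^2 + c^2 = 1 := Real.sin_sq_add_cos_sq x
    rw [← ht2]
    field_simp
    linear_combination (k^2*t^2 + k^4*s^2) * hsc + (-t^2 - k^2*s^2) * ht2
  have hconst : ∀ y : ℝ, Φ y = Φ 0 :=
    fun y => is_const_of_deriv_eq_zero (fun x => (hderiv x).differentiableAt)
      (fun x => (hderiv x).deriv) y 0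
  have h0 : Φ 0 = 0 := by
    simp [hΦ, Bfun]
  have := hconst x
  rw [h0] at this
  rw [hΦ] at this
  linarith [this]

lemma sq_cont (m : ℝ) : Continuous (fun θ : ℝ => Real.sqrt (1 - m^2*(Real.sin θ)^2)) :=
  Real.continuous_sqrt.comp (continuous_const.sub (continuous_const.mul (Real.continuous_sin.pow 2)))

lemma ptwise_lip {k m b0 : ℝ} (hk0 : 0 < k) (hkb : k ≤ b0) (hb01 : b0 < 1)
    (hm0 : 0 < m) (hmb : m ≤ b0) (θ : ℝ) :
    |1 / Real.sqrt (1 - m^2*(Real.sin θ)^2) - 1 / Real.sqrt (1 - k^2*(Real.sin θ)^2)|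
      ≤ |m - k| * (2 / (2 * (1-b0^2) * Real.sqrt (1-b0^2))) := by
  set c0 : ℝ := 1 - b0^2 with hc0
  have hc0p : 0 < c0 := by rw [hc0]; nlinarith
  have h1 : c0 ≤ 1 - m^2*(Real.sin θ)^2 := by
    rw [hc0]; nlinarith [Real.sin_sq_le_one θ, sq_nonneg (Real.sin θ)]
  have h2 : c0 ≤ 1 - k^2*(Real.sin θ)^2 := by
    rw [hc0]; nlinarith [Real.sin_sq_le_one θ, sq_nonneg (Real.sin θ)]
  refine (inv_sqrt_diff_bound hc0p h1 h2).trans ?_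
  have hnum : |(1 - m^2*(Real.sin θ)^2) - (1 - k^2*(Real.sin θ)^2)| ≤ |m-k| * 2 := by
    have hrw : (1 - m^2*(Real.sin θ)^2) - (1 - k^2*(Real.sin θ)^2)
        = -((m-k)*(m+k)*(Real.sin θ)^2) := by ring
    rw [hrw, abs_neg, abs_mul, abs_mul]
    have h3 : |m + k| ≤ 2 := by
      rw [abs_le]; constructor <;> nlinarith
    have h4 : |(Real.sin θ)^2| ≤ 1 := by
      rw [abs_of_nonneg (sq_nonneg _)]; exact Real.sin_sq_le_one θ
    calc |m-k| * |m+k| * |(Real.sin θ)^2| ≤ |m-k| * 2 * 1 := by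
          apply mul_le_mul (mul_le_mul le_rfl h3 (abs_nonneg _) (abs_nonneg _)) h4
            (abs_nonneg _) (by positivity)
      _ = |m-k| * 2 := by ring
  calc |(1 - m^2*(Real.sin θ)^2) - (1 - k^2*(Real.sin θ)^2)| / (2 * c0 * Real.sqrt c0)
      ≤ (|m-k| * 2) / (2 * c0 * Real.sqrt c0) := by
        have hdp : (0:ℝ) < 2 * c0 * Real.sqrt c0 := by positivity
        exact (div_le_div_iff_of_pos_right hdp).mpr hnum
    _ = |m-k| * (2 / (2 * c0 * Real.sqrt c0)) := by ring

set_option maxHeartbeats 1000000 in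
lemma part2 (sn cn dn : ℝ → ℝ → ℝ)
    (hjac : ∀ m ∈ Set.Ioo (0:ℝ) 1,
      sn 0 m = 0 ∧ cn 0 m = 1 ∧ dn 0 m = 1 ∧
      ∀ u : ℝ, HasDerivAt (fun v => sn v m) (cn u m * dn u m) u ∧
        HasDerivAt (fun v => cn v m) (-(sn u m * dn u m)) u ∧
        HasDerivAt (fun v => dn v m) (-(m^2 * sn u m * cn u m)) u)
    (k : ℝ) (hk0 : 0 < k) (hk1 : k < 1)
    (u : ℝ) (hu0 : 0 < u) (hu : u < ellK k)
    (D : ℝ) (hD : HasDerivAt (fun m => dn u m) D k) : D < 0 := by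
  obtain ⟨hsn0, hcn0, hdn0, hd⟩ := hjac k ⟨hk0, hk1⟩
  have hp1 := pyth1 hsn0 hcn0 hd
  have hp2 := pyth2 hsn0 hdn0 hd
  have hdnp := dn_pos hk0 hk1 hsn0 hcn0 hdn0 hd
  obtain ⟨hcnpos, hsnn, hsnlt, hBu, hsnpos'⟩ :=
    core_main hk0 hk1 hsn0 hcn0 hdn0 hd u hu0.le hu
  set s := sn u k with hs
  set c := cn u k with hc
  set d := dn u k with hdd
  have hspos : 0 < s := hsnpos' hu0
  have hcpos : 0 < c := hcnpos u ⟨hu0.le, le_refl u⟩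
  have hdpos : 0 < d := hdnp u
  have hk2 : (0:ℝ) < 1 - k^2 := by nlinarith
  set φ := arcsin s with hφ
  have hsinφ : Real.sin φ = s := Real.sin_arcsin (by linarith) (by linarith)
  have hcosφ : Real.cos φ = c := by
    rw [hφ, Real.cos_arcsin]
    rw [show 1 - s^2 = c^2 by nlinarith [hp1 u], Real.sqrt_sq hcpos.le]
  have hsqd : Real.sqrt (1 - d^2) = k * s := by
    rw [show 1 - d^2 = (k*s)^2 by nlinarith [hp2 u],
      Real.sqrt_sq (by positivity)]
  have hsqc : Real.sqrt (1 - s^2) = c := by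
    rw [show 1 - s^2 = c^2 by nlinarith [hp1 u], Real.sqrt_sq hcpos.le]
  have hsqkd : Real.sqrt (1 - k^2 * s^2) = d := by
    rw [show 1 - k^2*s^2 = d^2 by nlinarith [hp2 u], Real.sqrt_sq hdpos.le]
  -- E and part1
  set E := ∫ v in (0:ℝ)..u, (dn v k)^2 with hE
  have hgneg : E - (1-k^2)*u - s*d/c < 0 :=
    part1 hk0 hk1 hsn0 hcn0 hdn0 hd u hu0 hu
  -- change of variables for E
  have hEφ : (∫ θ in (0:ℝ)..φ, Real.sqrt (1 - k^2*(Real.sin θ)^2)) = E := by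
    have hI2c := sq_cont k
    have hdn2c : Continuous (fun v => (dn v k)^2) := (dn_cont hd).pow 2
    have hcont : ContinuousOn (fun t => (∫ θ in (0:ℝ)..(arcsin (sn t k)),
        Real.sqrt (1 - k^2*(Real.sin θ)^2)) - ∫ v in (0:ℝ)..t, (dn v k)^2) (Icc 0 u) := by
      apply ContinuousOn.sub
      · exact ((continuous_iff_continuousAt.2 fun x =>
          (intervalIntegral.integral_hasDerivAt_right (hI2c.intervalIntegrable _ _)
            (hI2c.stronglyMeasurableAtFilter _ _) hI2c.continuousAt).continuousAt).comp
          (Real.continuous_arcsin.comp (sn_cont hd))).continuousOn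
      · exact (continuous_iff_continuousAt.2 fun x =>
          (intervalIntegral.integral_hasDerivAt_right (hdn2c.intervalIntegrable _ _)
            (hdn2c.stronglyMeasurableAtFilter _ _) hdn2c.continuousAt).continuousAt).continuousOn
    have hder : ∀ x ∈ Ico (0:ℝ) u, HasDerivWithinAt (fun t => (∫ θ in (0:ℝ)..(arcsin (sn t k)),
        Real.sqrt (1 - k^2*(Real.sin θ)^2)) - ∫ v in (0:ℝ)..t, (dn v k)^2) 0 (Ici x) x := by
      intro x hx
      have h1 := amp_deriv_E hk0 hk1 hsn0 hcn0 hdn0 hd x (hcnpos x ⟨hx.1, hx.2.le⟩)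
      have h2 : HasDerivAt (fun t => ∫ v in (0:ℝ)..t, (dn v k)^2) ((dn x k)^2) x :=
        intervalIntegral.integral_hasDerivAt_right (hdn2c.intervalIntegrable _ _)
          (hdn2c.stronglyMeasurableAtFilter _ _) hdn2c.continuousAt
      exact ((h1.sub h2).congr_deriv (by simp)).hasDerivWithinAt
    have := constant_of_has_deriv_right_zero hcont hder u ⟨hu0.le, le_refl u⟩
    simp only [hsn0, Real.arcsin_zero, intervalIntegral.integral_same] at this
    rw [hE]
    linarith [this]
  -- parametric differentiation under the integral sign
  set Im := ∫ θ in (0:ℝ)..φ, k * (Real.sin θ)^2 /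
      ((1-k^2*(Real.sin θ)^2) * Real.sqrt (1-k^2*(Real.sin θ)^2)) with hIm_def
  set b0 : ℝ := (1+k)/2 with hb0
  have hb01 : b0 < 1 := by rw [hb0]; linarith
  set c0 : ℝ := 1 - b0^2 with hc0
  have hc0p : 0 < c0 := by rw [hc0, hb0]; nlinarith
  set ε : ℝ := min (k/2) ((1-k)/2) with hε
  have hεp : 0 < ε := lt_min (by linarith) (by linarith)
  have hball : ∀ x ∈ Metric.ball k ε, 0 < x ∧ x ≤ b0 := by
    intro x hx
    rw [Metric.mem_ball, Real.dist_eq] at hx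
    have h1 := abs_lt.mp (hx.trans_le (min_le_left _ _))
    have h2 := abs_lt.mp (hx.trans_le (min_le_right _ _))
    exact ⟨by linarith, by rw [hb0]; linarith⟩
  have hderF : ∀ θ : ℝ, ∀ x ∈ Metric.ball k ε,
      HasDerivAt (fun y => 1 / Real.sqrt (1 - y^2*(Real.sin θ)^2))
        (x * (Real.sin θ)^2 / ((1-x^2*(Real.sin θ)^2) * Real.sqrt (1-x^2*(Real.sin θ)^2))) x := by
    intro θ x hx
    obtain ⟨hx0, hxb⟩ := hball x hx
    have hwx : 0 < 1 - x^2*(Real.sin θ)^2 := by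
      nlinarith [Real.sin_sq_le_one θ, sq_nonneg (Real.sin θ)]
    have h1 : HasDerivAt (fun y : ℝ => 1 - y^2*(Real.sin θ)^2) (-(2*x*(Real.sin θ)^2)) x := by
      have := ((hasDerivAt_pow 2 x).mul_const ((Real.sin θ)^2)).const_sub 1
      refine this.congr_deriv ?_
      ring
    have h2 := h1.sqrt hwx.ne'
    have h3 := (hasDerivAt_const x (1:ℝ)).div h2 (Real.sqrt_pos.mpr hwx).ne'
    have ht2 : Real.sqrt (1 - x^2*(Real.sin θ)^2)^2 = 1 - x^2*(Real.sin θ)^2 :=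
      Real.sq_sqrt hwx.le
    refine h3.congr_deriv ?_
    rw [← ht2]
    have htp : 0 < Real.sqrt (1 - x^2*(Real.sin θ)^2) := Real.sqrt_pos.mpr hwx
    field_simp
    rw [Real.sqrt_sq htp.le]
    ring
  have hboundF : ∀ θ : ℝ, ∀ x ∈ Metric.ball k ε,
      |x * (Real.sin θ)^2 / ((1-x^2*(Real.sin θ)^2) * Real.sqrt (1-x^2*(Real.sin θ)^2))|
        ≤ 1 / (c0 * Real.sqrt c0) := by
    intro θ x hx
    obtain ⟨hx0, hxb⟩ := hball x hx
    have hwx : c0 ≤ 1 - x^2*(Real.sin θ)^2 := by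
      rw [hc0]; nlinarith [Real.sin_sq_le_one θ, sq_nonneg (Real.sin θ)]
    have hwp : 0 < 1 - x^2*(Real.sin θ)^2 := hc0p.trans_le hwx
    rw [abs_div]
    have hnum : |x * (Real.sin θ)^2| ≤ 1 := by
      rw [abs_mul]
      calc |x| * |(Real.sin θ)^2| ≤ 1 * 1 :=
            mul_le_mul (by rw [abs_of_pos hx0]; linarith)
              (by rw [abs_of_nonneg (sq_nonneg _)]; exact Real.sin_sq_le_one θ)
              (abs_nonneg _) zero_le_one
        _ = 1 := mul_one 1
    have hden : c0 * Real.sqrt c0 ≤ |(1-x^2*(Real.sin θ)^2) * Real.sqrt (1-x^2*(Real.sin θ)^2)| := by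
      rw [abs_of_pos (mul_pos hwp (Real.sqrt_pos.mpr hwp))]
      exact mul_le_mul hwx (Real.sqrt_le_sqrt hwx) (Real.sqrt_nonneg _) hwp.le
    exact div_le_div₀ zero_le_one hnum (by positivity) hden
  have hIm : HasDerivAt (fun m => ∫ θ in (0:ℝ)..φ, 1 / Real.sqrt (1 - m^2*(Real.sin θ)^2)) Im k := by
    have key := intervalIntegral.hasDerivAt_integral_of_dominated_loc_of_deriv_le
      (F := fun x θ => 1 / Real.sqrt (1 - x^2*(Real.sin θ)^2))
      (F' := fun x θ => x * (Real.sin θ)^2 /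
        ((1-x^2*(Real.sin θ)^2) * Real.sqrt (1-x^2*(Real.sin θ)^2)))
      (a := 0) (b := φ) (μ := volume)
      (x₀ := k) (bound := fun _ => 1 / (c0 * Real.sqrt c0)) (Metric.ball_mem_nhds k hεp)
      ?_ ?_ ?_ ?_ ?_ ?_
    · exact key.2
    · filter_upwards [Metric.ball_mem_nhds k hεp] with x hx
      obtain ⟨hx0, hxb⟩ := hball x hx
      exact (fcont hx0 (hxb.trans_lt hb01)).aestronglyMeasurable.restrict
    · exact (fcont hk0 hk1).intervalIntegrable _ _
    · refine Continuous.aestronglyMeasurable ?_ |>.restrict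
      apply Continuous.div (by continuity)
        ((continuous_const.sub (continuous_const.mul (Real.continuous_sin.pow 2))).mul
          (sq_cont k))
      intro θ
      have := den_pos hk0 hk1 θ
      have h2 : 0 < Real.sqrt (1 - k^2*(Real.sin θ)^2) := Real.sqrt_pos.mpr this
      exact (mul_pos this h2).ne'
    · exact Filter.Eventually.of_forall fun t _ x hx => by
        rw [Real.norm_eq_abs]; exact hboundF t x hx
    · exact intervalIntegrable_const
    · exact Filter.Eventually.of_forall fun t _ x hx => hderF t x hx
    -- derivative of sn in the modulus
  have hgood := eventually_good hk0 hk1 hu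
  have hsev : (fun m => sn u m) =ᶠ[nhds k] fun m => Real.sqrt (1 - (dn u m)^2) / m := by
    filter_upwards [hgood] with m hm
    obtain ⟨hm01, hum⟩ := hm
    obtain ⟨hsn0m, hcn0m, hdn0m, hdm⟩ := hjac m hm01
    obtain ⟨-, hsnnm, -, -, -⟩ := core_main hm01.1 hm01.2 hsn0m hcn0m hdn0m hdm u hu0.le hum
    have hp2m := pyth2 hsn0m hdn0m hdm u
    have hrw : 1 - (dn u m)^2 = (m * sn u m)^2 := by linear_combination (-1:ℝ) * hp2m
    rw [hrw, Real.sqrt_sq (mul_nonneg hm01.1.le hsnnm), mul_comm, mul_div_assoc,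
      div_self hm01.1.ne', mul_one]
  have h1d2 : 0 < 1 - d^2 := by
    have e : 1 - d^2 = (k*s)^2 := by linear_combination (-1:ℝ) * hp2 u
    rw [e]; positivity
  have hds : HasDerivAt (fun m => Real.sqrt (1 - (dn u m)^2) / m)
      ((-(2*d^1*D) / (2*Real.sqrt (1-d^2)) * k - Real.sqrt (1-d^2) * 1)/k^2) k := by
    have h1 : HasDerivAt (fun m => 1 - (dn u m)^2) (-(2*d^1*D)) k := (hD.pow 2).const_sub 1
    exact (h1.sqrt h1d2.ne').div (hasDerivAt_id k) hk0.ne'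
  set S := (-(2*d^1*D) / (2*Real.sqrt (1-d^2)) * k - Real.sqrt (1-d^2) * 1)/k^2 with hSdef
  have hS : HasDerivAt (fun m => sn u m) S k := hds.congr_of_eventuallyEq hsev
  have hrelD : d * D = -(k^2*s*S) - k*s^2 := by
    rw [hSdef, hsqd]
    field_simp
    ring
  have hψ : HasDerivAt (fun m => arcsin (sn u m)) (1 / Real.sqrt (1 - s^2) * S) k :=
    (Real.hasDerivAt_arcsin (by linarith : (-1:ℝ) < s).ne' hsnlt.ne).comp k hS
  have hPval : 1 / Real.sqrt (1 - s^2) * S = S / c := by rw [hsqc]; ring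
  have hψ' : HasDerivAt (fun m => arcsin (sn u m)) (S / c) k := hPval ▸ hψ
  -- FTC part with moving endpoint
  have hW2 : HasDerivAt (fun m => ∫ θ in φ..(arcsin (sn u m)),
      1 / Real.sqrt (1 - k^2*(Real.sin θ)^2))
      ((1/Real.sqrt (1 - k^2*(Real.sin φ)^2)) * (S/c)) k := by
    have hFTC : HasDerivAt (fun y => ∫ θ in φ..y, 1 / Real.sqrt (1 - k^2*(Real.sin θ)^2))
        (1/Real.sqrt (1 - k^2*(Real.sin φ)^2)) φ :=
      intervalIntegral.integral_hasDerivAt_right ((fcont hk0 hk1).intervalIntegrable _ _)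
        ((fcont hk0 hk1).stronglyMeasurableAtFilter _ _) (fcont hk0 hk1).continuousAt
    exact hFTC.comp k hψ'
  -- the remainder term
  set Cr : ℝ := 2 / (2 * c0 * Real.sqrt c0) with hCr
  have hCrp : 0 < Cr := by rw [hCr]; positivity
  have hptbound : ∀ m ∈ Metric.ball k ε, ∀ θ : ℝ,
      |1 / Real.sqrt (1 - m^2*(Real.sin θ)^2) - 1 / Real.sqrt (1 - k^2*(Real.sin θ)^2)|
        ≤ |m - k| * Cr := by
    intro m hm θ
    obtain ⟨hm0, hmb⟩ := hball m hm
    have := ptwise_lip hk0 (by rw [hb0]; linarith) hb01 hm0 hmb θ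
    rw [hCr, hc0]
    exact this
  have hR : HasDerivAt (fun m => (∫ θ in φ..(arcsin (sn u m)),
        1 / Real.sqrt (1 - m^2*(Real.sin θ)^2))
      - (∫ θ in φ..(arcsin (sn u m)), 1 / Real.sqrt (1 - k^2*(Real.sin θ)^2))) 0 k := by
    rw [hasDerivAt_iff_isLittleO]
    rw [Asymptotics.isLittleO_iff]
    intro cc hcc
    have hδp : 0 < cc / (Cr + 1) := by positivity
    have hψcont : Filter.Tendsto (fun m => arcsin (sn u m)) (nhds k) (nhds φ) := by
      have := hψ'.continuousAt
      exact this
    filter_upwards [Metric.ball_mem_nhds k hεp, hgood,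
      hψcont.eventually (eventually_abs_sub_lt φ hδp)] with m hmball hmgood hmψ
    obtain ⟨hm01, hum⟩ := hmgood
    have hsub : (∫ θ in φ..(arcsin (sn u m)), 1 / Real.sqrt (1 - m^2*(Real.sin θ)^2))
        - (∫ θ in φ..(arcsin (sn u m)), 1 / Real.sqrt (1 - k^2*(Real.sin θ)^2))
        = ∫ θ in φ..(arcsin (sn u m)), (1 / Real.sqrt (1 - m^2*(Real.sin θ)^2)
            - 1 / Real.sqrt (1 - k^2*(Real.sin θ)^2)) := by
      rw [intervalIntegral.integral_sub ((fcont hm01.1 hm01.2).intervalIntegrable _ _)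
        ((fcont hk0 hk1).intervalIntegrable _ _)]
    have hbnd := intervalIntegral.norm_integral_le_of_norm_le_const
      (C := |m - k| * Cr) (a := φ) (b := arcsin (sn u m))
      (f := fun θ => 1 / Real.sqrt (1 - m^2*(Real.sin θ)^2)
        - 1 / Real.sqrt (1 - k^2*(Real.sin θ)^2)) ?_
    · simp only [smul_zero, sub_zero, sub_self]
      rw [hsub]
      refine hbnd.trans ?_
      have h1 : |m - k| * Cr * |arcsin (sn u m) - φ| ≤ |m - k| * Cr * (cc/(Cr+1)) := by
        apply mul_le_mul_of_nonneg_left hmψ.le (by positivity)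
      refine h1.trans ?_
      rw [Real.norm_eq_abs]
      have h2 : Cr * (cc/(Cr+1)) ≤ cc := by
        have h3 : Cr/(Cr+1) ≤ 1 :=
          div_le_one_of_le₀ ((le_add_iff_nonneg_right Cr).mpr zero_le_one)
            (le_of_lt (by positivity))
        calc Cr * (cc/(Cr+1)) = (Cr/(Cr+1)) * cc := by ring
          _ ≤ 1 * cc := mul_le_mul_of_nonneg_right h3 hcc.le
          _ = cc := one_mul cc
      calc |m-k| * Cr * (cc/(Cr+1)) = (Cr * (cc/(Cr+1))) * |m-k| := by ring
        _ ≤ cc * |m-k| := mul_le_mul_of_nonneg_right h2 (abs_nonneg _)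
    · intro θ hθ
      rw [Real.norm_eq_abs]
      exact hptbound m hmball θ
    -- assemble
  have hWsum := hIm.add (hW2.add hR)
  have hWev : (fun m => (∫ θ in (0:ℝ)..φ, 1 / Real.sqrt (1 - m^2*(Real.sin θ)^2))
      + ((∫ θ in φ..(arcsin (sn u m)), 1 / Real.sqrt (1 - k^2*(Real.sin θ)^2))
        + ((∫ θ in φ..(arcsin (sn u m)), 1 / Real.sqrt (1 - m^2*(Real.sin θ)^2))
          - (∫ θ in φ..(arcsin (sn u m)), 1 / Real.sqrt (1 - k^2*(Real.sin θ)^2)))))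
      =ᶠ[nhds k] (fun _ => u) := by
    filter_upwards [hgood] with m hm
    obtain ⟨hm01, hum⟩ := hm
    obtain ⟨hsn0m, hcn0m, hdn0m, hdm⟩ := hjac m hm01
    obtain ⟨-, -, -, hBm, -⟩ := core_main hm01.1 hm01.2 hsn0m hcn0m hdn0m hdm u hu0.le hum
    have hadj : (∫ θ in (0:ℝ)..φ, 1 / Real.sqrt (1 - m^2*(Real.sin θ)^2))
        + (∫ θ in φ..(arcsin (sn u m)), 1 / Real.sqrt (1 - m^2*(Real.sin θ)^2))
        = Bfun m (arcsin (sn u m)) :=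
      intervalIntegral.integral_add_adjacent_intervals
        ((fcont hm01.1 hm01.2).intervalIntegrable _ _)
        ((fcont hm01.1 hm01.2).intervalIntegrable _ _)
    calc (∫ θ in (0:ℝ)..φ, 1 / Real.sqrt (1 - m^2*(Real.sin θ)^2))
      + ((∫ θ in φ..(arcsin (sn u m)), 1 / Real.sqrt (1 - k^2*(Real.sin θ)^2))
        + ((∫ θ in φ..(arcsin (sn u m)), 1 / Real.sqrt (1 - m^2*(Real.sin θ)^2))
          - (∫ θ in φ..(arcsin (sn u m)), 1 / Real.sqrt (1 - k^2*(Real.sin θ)^2))))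
        = Bfun m (arcsin (sn u m)) := by rw [← hadj]; ring
      _ = u := hBm
  have hW0 : HasDerivAt (fun m => (∫ θ in (0:ℝ)..φ, 1 / Real.sqrt (1 - m^2*(Real.sin θ)^2))
      + ((∫ θ in φ..(arcsin (sn u m)), 1 / Real.sqrt (1 - k^2*(Real.sin θ)^2))
        + ((∫ θ in φ..(arcsin (sn u m)), 1 / Real.sqrt (1 - m^2*(Real.sin θ)^2))
          - (∫ θ in φ..(arcsin (sn u m)), 1 / Real.sqrt (1 - k^2*(Real.sin θ)^2)))))
      0 k := (hasDerivAt_const k u).congr_of_eventuallyEq hWev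
  have huniq : Im + ((1/Real.sqrt (1 - k^2*(Real.sin φ)^2)) * (S/c) + 0) = 0 :=
    hWsum.unique hW0
  rw [hsinφ, hsqkd] at huniq
  have heq2 : S = -(Im * c * d) := by
    have h := huniq
    field_simp at h
    linear_combination h
  -- the reduction identity
  have hred := reduction_identity hk0 hk1 φ
  rw [hEφ, ← hIm_def] at hred
  have hBφ : Bfun k φ = u := hBu
  rw [hBφ, hsinφ, hcosφ, hsqkd] at hred
  have e4' : (1-k^2)*k*Im*d = (E-(1-k^2)*u)*d - k^2*s*c := by
    have h := hred
    field_simp at h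
    linear_combination h
  have hp1u : s^2 + c^2 = 1 := hp1 u
  have hp2u : k^2*s^2 + d^2 = 1 := hp2 u
  have hfinal : (1-k^2)*d*D = k*s*c*d*(E-(1-k^2)*u) - k*s^2*d^2 := by
    linear_combination (1-k^2)*hrelD - (1-k^2)*k^2*s*heq2 + k*s*c*e4' + k*s^2*hp2u - k^3*s^2*hp1u
  have hgc : c*(E-(1-k^2)*u) - s*d < 0 := by
    have h := mul_lt_mul_of_pos_right hgneg hcpos
    have hexp : (E - (1-k^2)*u - s*d/c)*c = c*(E-(1-k^2)*u) - s*d := by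
      field_simp
    rw [hexp, zero_mul] at h
    exact h
  have hksd : 0 < k*s*d := by positivity
  have hRHS : k*s*c*d*(E-(1-k^2)*u) - k*s^2*d^2 < 0 := by
    have h := mul_neg_of_pos_of_neg hksd hgc
    have hexp2 : k*s*c*d*(E-(1-k^2)*u) - k*s^2*d^2
        = (k*s*d) * (c*(E-(1-k^2)*u) - s*d) := by ring
    rw [hexp2]
    exact h
  have hfin2 : (1-k^2)*d*D < 0 := by rw [hfinal]; exact hRHS
  by_contra hcon
  push_neg at hcon
  exact absurd hfin2 (not_lt.mpr (mul_nonneg (mul_pos hk2 hdpos).le hcon))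


theorem dn_strictAnti_in_modulus (sn cn dn : ℝ → ℝ → ℝ)
    (hjac : ∀ m ∈ Set.Ioo (0:ℝ) 1,
      sn 0 m = 0 ∧ cn 0 m = 1 ∧ dn 0 m = 1 ∧
      ∀ u : ℝ, HasDerivAt (fun v => sn v m) (cn u m * dn u m) u ∧
        HasDerivAt (fun v => cn v m) (-(sn u m * dn u m)) u ∧
        HasDerivAt (fun v => dn v m) (-(m^2 * sn u m * cn u m)) u)
    (k : ℝ) (hk0 : 0 < k) (hk1 : k < 1)
    (u : ℝ) (hu0 : 0 < u) (hu : u < ellK k) :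
    ((∫ v in (0:ℝ)..u, (dn v k)^2) - (1 - k^2) * u
        - sn u k * dn u k / cn u k < 0) ∧
    ∀ D : ℝ, HasDerivAt (fun m => dn u m) D k → D < 0 := by
  obtain ⟨hsn0, hcn0, hdn0, hd⟩ := hjac k ⟨hk0, hk1⟩
  constructor
  · exact part1 hk0 hk1 hsn0 hcn0 hdn0 hd u hu0 hu
  · intro D hD
    exact part2 sn cn dn hjac k hk0 hk1 u hu0 hu D hD
end
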